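/- arXiv:1605.01230 — 4 statements merged into one kernel-verified Lean document; each statement's English description precedes it below -/
import Mathlib

section
/- If A is a semisimple MV-algebra and D is a semisimple DMV-algebra such that A is an MV-subalgebra of D and D is generated by A as a DMV-algebra (D = ⟨A⟩_DMV), then D is isomorphic to the divisible hull A^d of A. -/
/-- An MV-algebra: an abelian monoid `(A, ⊕, 0)` with an involution `*` satisfying
the Łukasiewicz axioms. -/
class MVAlgebra (A : Type) where
  oplus : A → A → A
  star : A → A
  zero : A
  oplus_assoc : ∀ x y z : A, oplus (oplus x y) z = oplus x (oplus y z)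
  oplus_comm : ∀ x y : A, oplus x y = oplus y x
  oplus_zero : ∀ x : A, oplus x zero = x
  star_star : ∀ x : A, star (star x) = x
  lukasiewicz : ∀ x y : A,
    oplus (star (oplus (star x) y)) y = oplus (star (oplus (star y) x)) x
  oplus_star_zero : ∀ x : A, oplus (star zero) x = star zero

namespace MVAlgebra

variable {A : Type} [MVAlgebra A]

/-- The top element `1 = 0*`. -/
def one : A := star zero

/-- The MV-product `x ⊙ y = (x* ⊕ y*)*`. -/
def odot (x y : A) : A := star (oplus (star x) (star y))

/-- `n`-fold ⊕-sum of an element. -/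
def nmul : ℕ → A → A
  | 0, _ => zero
  | n + 1, x => oplus (nmul n x) x

/-- The lattice join `x ∨ y = (x ⊙ y*) ⊕ y`. -/
def sup (x y : A) : A := oplus (odot x (star y)) y

/-- The lattice meet `x ∧ y = (x ⊕ y*) ⊙ y`. -/
def inf (x y : A) : A := odot (oplus x (star y)) y

/-- The MV-order: `x ≤ y` iff `x ⊙ y* = 0`. -/
def le (x y : A) : Prop := odot x (star y) = zero

end MVAlgebra

/-- The rational unit interval `[0,1] ∩ ℚ`. -/
def QI : Type := {q : ℚ // 0 ≤ q ∧ q ≤ 1}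

namespace QI

/-- Truncated addition on `[0,1] ∩ ℚ`. -/
def oplus (r s : QI) : QI :=
  ⟨min (r.1 + s.1) 1, le_min (add_nonneg r.2.1 s.2.1) zero_le_one, min_le_right _ _⟩

/-- Negation `r* = 1 - r` on `[0,1] ∩ ℚ`. -/
def star (r : QI) : QI :=
  ⟨1 - r.1, by constructor <;> [linarith [r.2.2]; linarith [r.2.1]]⟩

def zero : QI := ⟨0, le_refl 0, zero_le_one⟩

def one : QI := ⟨1, zero_le_one, le_refl 1⟩

/-- Ordinary multiplication of rationals, restricted to `[0,1] ∩ ℚ`. -/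
def mul (r s : QI) : QI :=
  ⟨r.1 * s.1, mul_nonneg r.2.1 s.2.1, by nlinarith [r.2.1, r.2.2, s.2.1, s.2.2]⟩

/-- The MV-product `r ⊙ s = (r* ⊕ s*)*` on `[0,1] ∩ ℚ`. -/
def odot (r s : QI) : QI := star (oplus (star r) (star s))

/-- Division by a natural number in `[0,1] ∩ ℚ`. -/
def div (r : QI) (n : ℕ) : QI :=
  ⟨r.1 / n, div_nonneg r.2.1 (Nat.cast_nonneg n), by
    rcases Nat.eq_zero_or_pos n with h | h
    · simp [h]
    · exact le_trans (div_le_self r.2.1 (by exact_mod_cast h)) r.2.2⟩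

/-- `1/n` as an element of `[0,1] ∩ ℚ` (with `1/0 = 0`). -/
def oneOver (n : ℕ) : QI := div one n

/-- Join (maximum) in `[0,1] ∩ ℚ`. -/
def sup (r s : QI) : QI :=
  ⟨max r.1 s.1, le_max_of_le_left r.2.1, max_le r.2.2 s.2.2⟩

/-- Meet (minimum) in `[0,1] ∩ ℚ`. -/
def inf (r s : QI) : QI :=
  ⟨min r.1 s.1, le_min r.2.1 s.2.1, min_le_of_left_le r.2.2⟩

end QI

/-- A DMV-algebra: an MV-algebra with division operators `δ_n` (`n ≥ 1`) satisfying
`n·δ_n x = x` and `δ_n x ⊙ (n-1)·δ_n x = 0`. -/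
class DMVAlgebra (A : Type) extends MVAlgebra A where
  delta : ℕ → A → A
  delta_nmul : ∀ n : ℕ, 1 ≤ n → ∀ x : A, MVAlgebra.nmul n (delta n x) = x
  delta_odot : ∀ n : ℕ, 1 ≤ n → ∀ x : A,
    MVAlgebra.odot (delta n x) (MVAlgebra.nmul (n - 1) (delta n x)) = MVAlgebra.zero

/-- Homomorphism of MV-algebras: preserves `⊕`, `*` and `0`. -/
def IsMVHom {A B : Type} [MVAlgebra A] [MVAlgebra B] (f : A → B) : Prop :=
  (∀ x y : A, f (MVAlgebra.oplus x y) = MVAlgebra.oplus (f x) (f y)) ∧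
  (∀ x : A, f (MVAlgebra.star x) = MVAlgebra.star (f x)) ∧
  f MVAlgebra.zero = MVAlgebra.zero

/-- Homomorphism of DMV-algebras: an MV-homomorphism preserving every `δ_n`. -/
def IsDMVHom {A B : Type} [DMVAlgebra A] [DMVAlgebra B] (f : A → B) : Prop :=
  IsMVHom f ∧ ∀ n : ℕ, 1 ≤ n → ∀ x : A, f (DMVAlgebra.delta n x) = DMVAlgebra.delta n (f x)

/-- Ideal of an MV-algebra: contains `0`, downward closed, closed under `⊕`. -/
def IsMVIdeal {A : Type} [MVAlgebra A] (I : Set A) : Prop :=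
  MVAlgebra.zero ∈ I ∧ (∀ x ∈ I, ∀ y : A, MVAlgebra.le y x → y ∈ I) ∧
  ∀ x ∈ I, ∀ y ∈ I, MVAlgebra.oplus x y ∈ I

/-- Maximal ideal: a proper ideal maximal under inclusion. -/
def IsMaximalMVIdeal {A : Type} [MVAlgebra A] (I : Set A) : Prop :=
  IsMVIdeal I ∧ I ≠ Set.univ ∧
  ∀ J : Set A, IsMVIdeal J → J ≠ Set.univ → I ⊆ J → J = I

/-- Semisimplicity: the intersection of all maximal ideals is `{0}`. -/
def IsSemisimple (A : Type) [MVAlgebra A] : Prop :=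
  ∀ x : A, (∀ I : Set A, IsMaximalMVIdeal I → x ∈ I) → x = MVAlgebra.zero

/-- Bimorphism `[0,1]_ℚ × A → C`: preserves `∨`, `∧` and the partial sum `+`
in each argument separately. -/
def IsQBimorphism {A C : Type} [MVAlgebra A] [MVAlgebra C] (β : QI → A → C) : Prop :=
  (∀ (r s : QI) (a : A), β (QI.sup r s) a = MVAlgebra.sup (β r a) (β s a)) ∧
  (∀ (r s : QI) (a : A), β (QI.inf r s) a = MVAlgebra.inf (β r a) (β s a)) ∧
  (∀ (r s : QI) (a : A), QI.odot r s = QI.zero →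
    MVAlgebra.odot (β r a) (β s a) = MVAlgebra.zero ∧
      β (QI.oplus r s) a = MVAlgebra.oplus (β r a) (β s a)) ∧
  (∀ (r : QI) (a b : A), β r (MVAlgebra.sup a b) = MVAlgebra.sup (β r a) (β r b)) ∧
  (∀ (r : QI) (a b : A), β r (MVAlgebra.inf a b) = MVAlgebra.inf (β r a) (β r b)) ∧
  (∀ (r : QI) (a b : A), MVAlgebra.odot a b = MVAlgebra.zero →
    MVAlgebra.odot (β r a) (β r b) = MVAlgebra.zero ∧
      β r (MVAlgebra.oplus a b) = MVAlgebra.oplus (β r a) (β r b))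

/-- `T`, together with the bimorphism `β`, is the semisimple tensor product
`[0,1]_ℚ ⊗ A`: `T` is semisimple and `β` is universal among bimorphisms into
semisimple MV-algebras. -/
def IsQTensor (A T : Type) [MVAlgebra A] [MVAlgebra T] (β : QI → A → T) : Prop :=
  IsSemisimple T ∧ IsQBimorphism β ∧
  ∀ (C : Type) [MVAlgebra C], IsSemisimple C → ∀ γ : QI → A → C, IsQBimorphism γ →
    ∃! h : T → C, IsMVHom h ∧ ∀ (r : QI) (a : A), h (β r a) = γ r a

/-- The DMV-structure of `T` is the canonical one of `[0,1]_ℚ ⊗ A`: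
`δ_n (t ⊗ a) = (t/n) ⊗ a`. -/
def DeltaCompat {A T : Type} [MVAlgebra A] [DMVAlgebra T] (β : QI → A → T) : Prop :=
  ∀ n : ℕ, 1 ≤ n → ∀ (t : QI) (a : A),
    DMVAlgebra.delta n (β t a) = β (QI.div t n) a

/-- A subset of a DMV-algebra closed under the DMV-operations. -/
def DMVClosed {D : Type} [DMVAlgebra D] (S : Set D) : Prop :=
  MVAlgebra.zero ∈ S ∧
  (∀ x ∈ S, ∀ y ∈ S, MVAlgebra.oplus x y ∈ S) ∧
  (∀ x ∈ S, MVAlgebra.star x ∈ S) ∧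
  (∀ n : ℕ, 1 ≤ n → ∀ x ∈ S, DMVAlgebra.delta n x ∈ S)

/-- `S` generates `D` as a DMV-algebra: the only DMV-subalgebra of `D`
containing `S` is `D` itself. -/
def GeneratesDMV {D : Type} [DMVAlgebra D] (S : Set D) : Prop :=
  ∀ T : Set D, DMVClosed T → S ⊆ T → ∀ x : D, x ∈ T

/-- `(E, ι)` is a divisible hull of the MV-algebra `A`: `ι` is an MV-embedding of `A`
into the DMV-algebra `E`, `E` is generated by `ι(A)` as a DMV-algebra, and every
MV-homomorphism from `A` into a DMV-algebra extends uniquely to a DMV-homomorphism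
of `E`. -/
def IsDivisibleHull (A E : Type) [MVAlgebra A] [DMVAlgebra E] (ι : A → E) : Prop :=
  IsMVHom ι ∧ Function.Injective ι ∧ GeneratesDMV (Set.range ι) ∧
  ∀ (D' : Type) [DMVAlgebra D'] (f : A → D'), IsMVHom f →
    ∃! g : E → D', IsDMVHom g ∧ ∀ a : A, g (ι a) = f a


namespace MVLemmas

open MVAlgebra

variable {E : Type} [MVAlgebra E]

local infixl:65 " ⊹ " => MVAlgebra.oplus
local infixl:70 " ⊠ " => MVAlgebra.odot
local postfix:max "∗" => MVAlgebra.star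

instance : Std.Associative (MVAlgebra.oplus (A := E)) := ⟨MVAlgebra.oplus_assoc⟩
instance : Std.Commutative (MVAlgebra.oplus (A := E)) := ⟨MVAlgebra.oplus_comm⟩

lemma ss (x : E) : x∗∗ = x := MVAlgebra.star_star x

lemma zero_oplus (x : E) : (zero : E) ⊹ x = x := by
  rw [oplus_comm]; exact oplus_zero x

lemma one_oplus (x : E) : (one : E) ⊹ x = one := oplus_star_zero x

lemma oplus_one (x : E) : x ⊹ (one : E) = one := by
  rw [oplus_comm]; exact oplus_star_zero x

lemma star_one : (one : E)∗ = zero := MVAlgebra.star_star zero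

lemma star_inj {x y : E} (h : x∗ = y∗) : x = y := by
  rw [← ss x, h, ss]

lemma compl_left (x : E) : x∗ ⊹ x = one := by
  have h := lukasiewicz (one : E) x
  rw [star_one, zero_oplus] at h
  rw [h, oplus_comm, one_oplus]

lemma compl_right (x : E) : x ⊹ x∗ = one := by
  rw [oplus_comm]; exact compl_left x

lemma odot_comm (x y : E) : x ⊠ y = y ⊠ x := by
  unfold MVAlgebra.odot; rw [oplus_comm]

lemma star_odot (x y : E) : (x ⊠ y)∗ = x∗ ⊹ y∗ := by
  unfold MVAlgebra.odot; rw [ss]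

lemma star_oplus (x y : E) : (x ⊹ y)∗ = x∗ ⊠ y∗ := by
  unfold MVAlgebra.odot; rw [ss, ss]

lemma odot_assoc (x y z : E) : x ⊠ y ⊠ z = x ⊠ (y ⊠ z) := by
  unfold MVAlgebra.odot
  rw [ss, ss, oplus_assoc]

instance : Std.Associative (MVAlgebra.odot (A := E)) := ⟨odot_assoc⟩
instance : Std.Commutative (MVAlgebra.odot (A := E)) := ⟨odot_comm⟩

lemma odot_one (x : E) : x ⊠ (one : E) = x := by
  unfold MVAlgebra.odot
  rw [star_one, oplus_zero, ss]

lemma one_odot (x : E) : (one : E) ⊠ x = x := by rw [odot_comm]; exact odot_one x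

lemma odot_zero (x : E) : x ⊠ (zero : E) = zero := by
  unfold MVAlgebra.odot
  show (x∗ ⊹ one)∗ = zero
  rw [oplus_one, star_one]

lemma zero_odot (x : E) : (zero : E) ⊠ x = zero := by rw [odot_comm]; exact odot_zero x

lemma odot_star_eq (x y : E) : x ⊠ y∗ = (x∗ ⊹ y)∗ := by
  unfold MVAlgebra.odot; rw [ss]

lemma odot_star_self (x : E) : x ⊠ x∗ = zero := by
  rw [odot_star_eq, compl_left, star_one]

lemma star_odot_self (x : E) : x∗ ⊠ x = zero := by rw [odot_comm]; exact odot_star_self x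

lemma le_def {x y : E} : le x y ↔ x ⊠ y∗ = zero := Iff.rfl

lemma star_eq_zero {x : E} (h : x∗ = zero) : x = one := by
  have := congrArg MVAlgebra.star h
  rw [ss] at this
  exact this

lemma le_iff_oplus {x y : E} : le x y ↔ x∗ ⊹ y = one := by
  constructor
  · intro h
    have hx : x ⊠ y∗ = zero := h
    rw [odot_star_eq] at hx
    exact star_eq_zero hx
  · intro h
    show x ⊠ y∗ = zero
    rw [odot_star_eq, h, star_one]

lemma le_refl (x : E) : le x x := by
  show x ⊠ x∗ = zero; exact odot_star_self x

lemma le_antisymm {x y : E} (h1 : le x y) (h2 : le y x) : x = y := by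
  rw [le_iff_oplus] at h1 h2
  have hl := lukasiewicz x y
  have e1 : (x∗ ⊹ y)∗ = zero := by rw [h1, star_one]
  have e2 : (y∗ ⊹ x)∗ = zero := by rw [h2, star_one]
  rw [e1, e2, zero_oplus, zero_oplus] at hl
  exact hl.symm

lemma sup_def (x y : E) : sup x y = (x ⊠ y∗) ⊹ y := rfl

lemma sup_comm (x y : E) : sup x y = sup y x := by
  rw [sup_def, sup_def, odot_star_eq, odot_star_eq]
  exact lukasiewicz x y

lemma le_oplus_right (x b : E) : le x (b ⊹ x) := by
  show x ⊠ (b ⊹ x)∗ = zero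
  rw [star_oplus]
  calc x ⊠ (b∗ ⊠ x∗) = (x ⊠ x∗) ⊠ b∗ := by ac_rfl
  _ = zero := by rw [odot_star_self, zero_odot]

lemma le_oplus_left (x b : E) : le x (x ⊹ b) := by
  rw [oplus_comm]; exact le_oplus_right x b

lemma zero_le (x : E) : le (zero : E) x := by
  show (zero : E) ⊠ x∗ = zero; exact zero_odot _

lemma le_one (x : E) : le x (one : E) := by
  show x ⊠ (one : E)∗ = zero
  rw [star_one, odot_zero]

lemma le_zero {x : E} (h : le x (zero : E)) : x = zero := by
  have : x ⊠ (zero : E)∗ = zero := h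
  rw [show (zero : E)∗ = one from rfl, odot_one] at this
  exact this

lemma one_le {x : E} (h : le (one : E) x) : x = one := by
  have h2 : (one : E) ⊠ x∗ = zero := h
  rw [one_odot] at h2
  have := congrArg MVAlgebra.star h2
  rw [ss] at this
  exact this

lemma sup_absorb_right {x y : E} (h : le x y) : sup x y = y := by
  unfold MVAlgebra.sup
  have : x ⊠ y∗ = zero := h
  rw [this, zero_oplus]

lemma le_sup_right (x y : E) : le y (sup x y) := le_oplus_right y _

lemma le_sup_left (x y : E) : le x (sup x y) := by
  rw [sup_comm]; exact le_sup_right y x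

lemma eq_one_mono {u v w : E} (h : u ⊹ v = one) (hvw : le v w) : u ⊹ w = one := by
  have hw : w = (w ⊠ v∗) ⊹ v := by
    have h1 : sup w v = w := by rw [sup_comm]; exact sup_absorb_right hvw
    calc w = sup w v := h1.symm
    _ = (w ⊠ v∗) ⊹ v := rfl
  rw [hw]
  calc u ⊹ ((w ⊠ v∗) ⊹ v) = (w ⊠ v∗) ⊹ (u ⊹ v) := by ac_rfl
  _ = (w ⊠ v∗) ⊹ one := by rw [h]
  _ = one := oplus_one _

lemma le_trans {x y z : E} (h1 : le x y) (h2 : le y z) : le x z := by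
  rw [le_iff_oplus] at *
  exact eq_one_mono h1 (by rw [le_iff_oplus]; exact h2)

lemma star_antitone {x y : E} (h : le x y) : le y∗ x∗ := by
  show y∗ ⊠ x∗∗ = zero
  rw [ss, odot_comm]
  exact h

lemma oplus_mono_left {x y : E} (c : E) (h : le x y) : le (x ⊹ c) (y ⊹ c) := by
  rw [le_iff_oplus]
  rw [star_oplus]
  have h1 : (x∗ ⊠ c∗) ⊹ c = sup x∗ c := rfl
  calc x∗ ⊠ c∗ ⊹ (y ⊹ c) = ((x∗ ⊠ c∗) ⊹ c) ⊹ y := by ac_rfl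
  _ = sup x∗ c ⊹ y := by rw [h1]
  _ = y ⊹ sup x∗ c := by rw [oplus_comm]
  _ = one := by
      apply eq_one_mono (v := x∗)
      · rw [oplus_comm]; rw [le_iff_oplus] at h; exact h
      · exact le_sup_left _ _

lemma oplus_mono {x y u v : E} (h1 : le x y) (h2 : le u v) : le (x ⊹ u) (y ⊹ v) := by
  have a1 : le (x ⊹ u) (y ⊹ u) := oplus_mono_left u h1
  have a2 : le (y ⊹ u) (y ⊹ v) := by
    rw [oplus_comm y u, oplus_comm y v]; exact oplus_mono_left y h2
  exact le_trans a1 a2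

lemma odot_mono {x y u v : E} (h1 : le x y) (h2 : le u v) : le (x ⊠ u) (y ⊠ v) := by
  have h0 := oplus_mono (star_antitone h1) (star_antitone h2)
  have h3 := star_antitone h0
  have e1 : (y∗ ⊹ v∗)∗ = y ⊠ v := by
    show _ = (y∗ ⊹ v∗)∗
    rfl
  have e2 : (x∗ ⊹ u∗)∗ = x ⊠ u := rfl
  rw [e1, e2] at h3
  exact h3

lemma odot_mono_left {x y : E} (c : E) (h : le x y) : le (x ⊠ c) (y ⊠ c) :=
  odot_mono h (le_refl c)

lemma odot_mono_right {x y : E} (c : E) (h : le x y) : le (c ⊠ x) (c ⊠ y) :=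
  odot_mono (le_refl c) h

lemma le_eq_zero {x y : E} (h : le x y) (hy : y = zero) : x = zero := by
  subst hy; exact le_zero h

end MVLemmas
namespace MVLemmas

open MVAlgebra

variable {E : Type} [MVAlgebra E]

local infixl:65 " ⊹ " => MVAlgebra.oplus
local infixl:70 " ⊠ " => MVAlgebra.odot
local postfix:max "∗" => MVAlgebra.star

lemma inf_def (x y : E) : inf x y = (x ⊹ y∗) ⊠ y := rfl

lemma inf_le_right (x y : E) : le (inf x y) y := by
  show ((x ⊹ y∗) ⊠ y) ⊠ y∗ = zero
  calc ((x ⊹ y∗) ⊠ y) ⊠ y∗ = (x ⊹ y∗) ⊠ (y ⊠ y∗) := by ac_rfl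
  _ = zero := by rw [odot_star_self, odot_zero]

lemma star_sup (x y : E) : (sup x y)∗ = inf x∗ y∗ := by
  rw [sup_def, star_oplus, star_odot]
  show (x∗ ⊹ y∗∗) ⊠ y∗ = (x∗ ⊹ y∗∗) ⊠ y∗
  rfl

lemma star_inf (x y : E) : (inf x y)∗ = sup x∗ y∗ := by
  apply star_inj
  rw [ss, star_sup, ss, ss]

lemma inf_comm (x y : E) : inf x y = inf y x := by
  apply star_inj
  rw [star_inf, star_inf, sup_comm]

lemma inf_le_left (x y : E) : le (inf x y) x := by
  rw [inf_comm]; exact inf_le_right y x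

lemma sup_le {a b c : E} (h1 : le a c) (h2 : le b c) : le (sup a b) c := by
  have s1 : le (sup a b) (sup c b) := by
    rw [sup_def, sup_def]
    exact oplus_mono_left b (odot_mono_left b∗ h1)
  have s2 : sup c b = c := by rw [sup_comm]; exact sup_absorb_right h2
  rw [s2] at s1; exact s1

lemma le_inf {c u v : E} (h1 : le c u) (h2 : le c v) : le c (inf u v) := by
  have h := star_antitone (sup_le (star_antitone h1) (star_antitone h2))
  rw [ss, star_sup, ss, ss] at h
  exact h

lemma inf_absorb {x y : E} (h : le x y) : inf x y = x :=
  le_antisymm (inf_le_left x y) (le_inf (le_refl x) h)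

lemma inf_idem (x : E) : inf x x = x := inf_absorb (le_refl x)

lemma inf_one (x : E) : inf x (one : E) = x := inf_absorb (le_one x)

lemma inf_zero (x : E) : inf x (zero : E) = zero := le_zero (inf_le_right x zero)

lemma zero_inf (x : E) : inf (zero : E) x = zero := by rw [inf_comm]; exact inf_zero x

lemma sup_absorb_left {x y : E} (h : le y x) : sup x y = x := by
  rw [sup_comm]; exact sup_absorb_right h

lemma sup_zero (x : E) : sup x (zero : E) = x := sup_absorb_left (zero_le x)

lemma zero_sup (x : E) : sup (zero : E) x = x := by rw [sup_comm]; exact sup_zero x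

lemma inf_mono {a a' b b' : E} (h1 : le a a') (h2 : le b b') :
    le (inf a b) (inf a' b') :=
  le_inf (le_trans (inf_le_left a b) h1) (le_trans (inf_le_right a b) h2)

lemma inf1 (x y : E) : (x ⊹ y) ⊠ y∗ = inf x y∗ := by
  show _ = (x ⊹ y∗∗) ⊠ y∗
  rw [ss]

lemma res_mp {u v w : E} (h : le u (v ⊹ w)) : le (u ⊠ v∗) w := by
  have s1 : le (u ⊠ v∗) ((v ⊹ w) ⊠ v∗) := odot_mono_left v∗ h
  rw [oplus_comm, inf1] at s1
  exact le_trans s1 (inf_le_left w v∗)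

lemma res_mpr {u v w : E} (h : le (u ⊠ v∗) w) : le u (v ⊹ w) := by
  have s1 : le u (sup u v) := le_sup_left u v
  rw [sup_def] at s1
  have s2 : le ((u ⊠ v∗) ⊹ v) (w ⊹ v) := oplus_mono_left v h
  rw [oplus_comm w v] at s2
  exact le_trans s1 s2

lemma oplus_inf (p q r : E) : (inf p q) ⊹ r = inf (p ⊹ r) (q ⊹ r) := by
  apply le_antisymm
  · exact le_inf (oplus_mono_left r (inf_le_left p q)) (oplus_mono_left r (inf_le_right p q))
  · rw [oplus_comm (inf p q) r]
    apply res_mpr (v := r)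
    apply le_inf
    · have := odot_mono_left r∗ (inf_le_left (p ⊹ r) (q ⊹ r))
      rw [inf1] at this
      exact le_trans this (inf_le_left p r∗)
    · have := odot_mono_left r∗ (inf_le_right (p ⊹ r) (q ⊹ r))
      rw [inf1] at this
      exact le_trans this (inf_le_left q r∗)

lemma odot_sup (x y z : E) : x ⊠ (sup y z) = sup (x ⊠ y) (x ⊠ z) := by
  apply star_inj
  rw [star_odot, star_sup, star_sup, star_odot, star_odot]
  rw [oplus_comm, oplus_inf, oplus_comm _ x∗, oplus_comm _ x∗]

lemma subadd1 (p q r : E) : le ((p ⊹ q) ⊠ r) ((p ⊠ r) ⊹ q) := by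
  show ((p ⊹ q) ⊠ r) ⊠ ((p ⊠ r) ⊹ q)∗ = zero
  rw [star_oplus, star_odot]
  have e1 : ((p ⊹ q) ⊠ r) ⊠ ((p∗ ⊹ r∗) ⊠ q∗)
      = ((p ⊹ q) ⊠ q∗) ⊠ ((p∗ ⊹ r∗) ⊠ r) := by ac_rfl
  rw [e1, inf1]
  have e2 : (p∗ ⊹ r∗) ⊠ r = inf p∗ r := rfl
  rw [e2]
  have e3 : le ((inf p q∗) ⊠ (inf p∗ r)) (p ⊠ p∗) :=
    odot_mono (inf_le_left p q∗) (inf_le_left p∗ r)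
  rw [odot_star_self] at e3
  exact le_zero e3

lemma decomp (x y : E) : (inf x y) ⊹ (x ⊠ y∗) = x := by
  have key : ∀ z : E, (inf z∗ x) ⊹ (x ⊠ z) = x := by
    intro z
    have hl := lukasiewicz x (x ⊠ z)
    have rhs1 : (x ⊠ z)∗ ⊹ x = one := by
      rw [star_odot]
      calc x∗ ⊹ z∗ ⊹ x = (x∗ ⊹ x) ⊹ z∗ := by ac_rfl
      _ = one ⊹ z∗ := by rw [compl_left]
      _ = one := one_oplus z∗
    rw [rhs1, star_one, zero_oplus] at hl
    have lhs1 : (x∗ ⊹ (x ⊠ z))∗ = inf z∗ x := by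
      rw [← odot_star_eq]
      show x ⊠ ((x ⊠ z))∗ = _
      rw [star_odot]
      show _ = (z∗ ⊹ x∗) ⊠ x
      rw [odot_comm x, oplus_comm x∗ z∗]
    rw [lhs1] at hl
    exact hl
  have := key y∗
  rw [ss] at this
  rw [inf_comm]
  exact this

lemma canc {a b c : E} (h : a ⊹ c = b ⊹ c) (ha : a ⊠ c = zero) (hb : b ⊠ c = zero) :
    a = b := by
  have la : le a c∗ := by
    show a ⊠ c∗∗ = zero
    rw [ss]; exact ha
  have lb : le b c∗ := by
    show b ⊠ c∗∗ = zero
    rw [ss]; exact hb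
  calc a = inf a c∗ := (inf_absorb la).symm
  _ = (a ⊹ c) ⊠ c∗ := by rw [← inf1]
  _ = (b ⊹ c) ⊠ c∗ := by rw [h]
  _ = inf b c∗ := by rw [inf1]
  _ = b := inf_absorb lb

lemma oplus_eq_zero {x y : E} (h : x ⊹ y = zero) : x = zero ∧ y = zero := by
  have key : ∀ u v : E, u ⊹ v = zero → v = zero := by
    intro u v huv
    have e1 : v∗ ⊹ (u ⊹ v) = v∗ := by rw [huv, oplus_zero]
    have e2 : v∗ ⊹ (u ⊹ v) = one := by
      calc v∗ ⊹ (u ⊹ v) = (v∗ ⊹ v) ⊹ u := by ac_rfl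
      _ = one ⊹ u := by rw [compl_left]
      _ = one := one_oplus u
    have : v∗ = one := by rw [← e1, e2]
    have := congrArg MVAlgebra.star this
    rw [ss, star_one] at this
    exact this
  exact ⟨key y x (by rw [oplus_comm] at h; exact h), key x y h⟩

-- the AB chain and DISJ0
lemma odot_inf_star (x y : E) : x ⊠ (inf x y)∗ = x ⊠ y∗ := by
  rw [star_inf, odot_sup, odot_star_self, zero_sup]

lemma ab_core {y m : E} (x : E) (h : le y∗ m∗) :
    (x ⊠ m∗) ⊠ (y ⊠ m∗)∗ = x ⊠ y∗ := by
  rw [star_odot, ss]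
  calc (x ⊠ m∗) ⊠ (y∗ ⊹ m) = x ⊠ ((y∗ ⊹ m) ⊠ m∗) := by ac_rfl
  _ = x ⊠ (inf y∗ m∗) := by rw [inf1]
  _ = x ⊠ y∗ := by rw [inf_absorb h]

lemma disj_of_ab {t s : E} (hts : t ⊠ s = zero) (hab : t ⊠ s∗ = t) :
    inf t s = zero := by
  have hsup : sup t s = t ⊹ s := by rw [sup_def, hab]
  have hlat : (inf t s) ⊹ (sup t s) = t ⊹ s := by
    rw [sup_def]
    calc inf t s ⊹ ((t ⊠ s∗) ⊹ s) = ((inf t s) ⊹ (t ⊠ s∗)) ⊹ s := by ac_rfl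
    _ = t ⊹ s := by rw [decomp]
  have horth : (inf t s) ⊠ (sup t s) = zero := by
    rw [odot_sup]
    have z1 : (inf t s) ⊠ t = zero := by
      have h' : le ((inf t s) ⊠ t) (s ⊠ t) := odot_mono_left t (inf_le_right t s)
      rw [odot_comm s t, hts] at h'
      exact le_zero h'
    have z2 : (inf t s) ⊠ s = zero := by
      have h' : le ((inf t s) ⊠ s) (t ⊠ s) := odot_mono_left s (inf_le_left t s)
      rw [hts] at h'
      exact le_zero h'
    rw [z1, z2, sup_zero]
  have hz : (inf t s) ⊹ (sup t s) = zero ⊹ (sup t s) := by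
    rw [hlat, ← hsup, zero_oplus]
  exact canc hz horth (zero_odot _)

lemma disj0 (x y : E) : inf (x ⊠ y∗) (y ⊠ x∗) = zero := by
  have h1 : x ⊠ (inf x y)∗ = x ⊠ y∗ := odot_inf_star x y
  have h2 : y ⊠ (inf x y)∗ = y ⊠ x∗ := by
    rw [inf_comm]; exact odot_inf_star y x
  have hys : le y∗ (inf x y)∗ := star_antitone (inf_le_right x y)
  have hab : (x ⊠ y∗) ⊠ (y ⊠ x∗)∗ = x ⊠ y∗ := by
    conv_lhs => rw [← h1, ← h2]
    exact ab_core x hys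
  have hts : (x ⊠ y∗) ⊠ (y ⊠ x∗) = zero := by
    calc (x ⊠ y∗) ⊠ (y ⊠ x∗) = (x ⊠ x∗) ⊠ (y∗ ⊠ y) := by ac_rfl
    _ = zero := by rw [odot_star_self, zero_odot]
  exact disj_of_ab hts hab

lemma disj_odot_star {u v : E} (h : inf u v = zero) : u ⊠ v∗ = u := by
  have := decomp u v
  rw [h, zero_oplus] at this
  exact this

lemma subdist (x y z : E) : le (inf x (y ⊹ z)) ((inf x y) ⊹ (inf x z)) := by
  apply res_mpr (v := inf x y)
  rw [star_inf]
  rw [odot_sup]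
  apply sup_le
  · have : le ((inf x (y ⊹ z)) ⊠ x∗) (x ⊠ x∗) :=
      odot_mono_left x∗ (inf_le_left x (y ⊹ z))
    rw [odot_star_self] at this
    exact le_trans this (zero_le _)
  · apply le_inf
    · have : le ((inf x (y ⊹ z)) ⊠ y∗) (x ⊠ (one : E)∗∗) := by
        apply odot_mono (inf_le_left x (y ⊹ z))
        rw [ss]; exact le_one y∗
      rw [ss, odot_one] at this
      exact this
    · have h0 : le (inf x (y ⊹ z)) (z ⊹ y) := by
        rw [oplus_comm z y]
        exact inf_le_right x (y ⊹ z)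
      have s1 : le ((inf x (y ⊹ z)) ⊠ y∗) ((z ⊹ y) ⊠ y∗) :=
        odot_mono_left y∗ h0
      rw [inf1] at s1
      exact le_trans s1 (inf_le_left z y∗)

lemma disj_nmul_right {u v : E} (h : inf u v = zero) (k : ℕ) :
    inf u (nmul k v) = zero := by
  induction k with
  | zero => exact inf_zero u
  | succ k ih =>
    show inf u (nmul k v ⊹ v) = zero
    have := subdist u (nmul k v) v
    rw [ih, h, oplus_zero] at this
    exact le_zero this

lemma disj_nmul {u v : E} (h : inf u v = zero) (j k : ℕ) :
    inf (nmul j u) (nmul k v) = zero := by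
  have h1 : inf (nmul k v) u = zero := by
    rw [inf_comm]; exact disj_nmul_right h k
  rw [inf_comm]
  exact disj_nmul_right h1 j

end MVLemmas
namespace MVLemmas

open MVAlgebra

variable {E : Type} [MVAlgebra E]

local infixl:65 " ⊹ " => MVAlgebra.oplus
local infixl:70 " ⊠ " => MVAlgebra.odot
local postfix:max "∗" => MVAlgebra.star

lemma nmul_succ (n : ℕ) (x : E) : nmul (n + 1) x = nmul n x ⊹ x := rfl

lemma nmul_zero_eq (n : ℕ) : nmul n (zero : E) = zero := by
  induction n with
  | zero => rfl
  | succ n ih => rw [nmul_succ, ih, oplus_zero]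

lemma nmul_one_eq (x : E) : nmul 1 x = x := by
  rw [nmul_succ]
  show zero ⊹ x = x
  exact zero_oplus x

lemma nmul_add (j k : ℕ) (x : E) : nmul (j + k) x = nmul j x ⊹ nmul k x := by
  induction k with
  | zero => show nmul j x = nmul j x ⊹ zero; rw [oplus_zero]
  | succ k ih =>
    show nmul (j + k + 1) x = nmul j x ⊹ (nmul k x ⊹ x)
    rw [nmul_succ, ih, oplus_assoc]

lemma nmul_mul (j k : ℕ) (x : E) : nmul (j * k) x = nmul j (nmul k x) := by
  induction j with
  | zero => rw [Nat.zero_mul]; rfl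
  | succ j ih =>
    rw [Nat.succ_mul, nmul_add, ih, nmul_succ]

lemma nmul_oplus (k : ℕ) (x y : E) : nmul k (x ⊹ y) = nmul k x ⊹ nmul k y := by
  induction k with
  | zero => show (zero : E) = zero ⊹ zero; rw [oplus_zero]
  | succ k ih =>
    rw [nmul_succ, nmul_succ, nmul_succ, ih]
    ac_rfl

lemma nmul_mono_elem {x y : E} (k : ℕ) (h : le x y) : le (nmul k x) (nmul k y) := by
  induction k with
  | zero => exact le_refl _
  | succ k ih => rw [nmul_succ, nmul_succ]; exact oplus_mono ih h

lemma nmul_mono_count {j k : ℕ} (x : E) (h : j ≤ k) : le (nmul j x) (nmul k x) := by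
  obtain ⟨m, rfl⟩ := Nat.exists_eq_add_of_le h
  rw [nmul_add]
  exact le_oplus_left _ _

lemma nmul_eq_zero {n : ℕ} {x : E} (hn : 1 ≤ n) (h : nmul n x = zero) : x = zero := by
  obtain ⟨m, rfl⟩ := Nat.exists_eq_add_of_le hn
  rw [Nat.add_comm, nmul_add, nmul_one_eq] at h
  exact (oplus_eq_zero h).2

lemma meet_mult (k : ℕ) (a b : E) :
    nmul k (inf a b) = inf (nmul k a) (nmul k b) := by
  have da : inf a b ⊹ (a ⊠ b∗) = a := decomp a b
  have db : inf a b ⊹ (b ⊠ a∗) = b := by rw [inf_comm]; exact decomp b a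
  have ea : nmul k a = nmul k (inf a b) ⊹ nmul k (a ⊠ b∗) := by
    conv_lhs => rw [← da]
    rw [nmul_oplus]
  have eb : nmul k b = nmul k (inf a b) ⊹ nmul k (b ⊠ a∗) := by
    conv_lhs => rw [← db]
    rw [nmul_oplus]
  rw [ea, eb]
  rw [oplus_comm (nmul k (inf a b)) (nmul k (a ⊠ b∗)),
      oplus_comm (nmul k (inf a b)) (nmul k (b ⊠ a∗))]
  rw [← oplus_inf]
  rw [disj_nmul (disj0 a b) k k, zero_oplus]

lemma es {M T S : E} (h : M ⊠ T = zero) :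
    (M ⊹ T) ⊠ (M ⊹ S)∗ = T ⊠ S∗ := by
  rw [star_oplus]
  have hTM : le T M∗ := by
    show T ⊠ M∗∗ = zero
    rw [ss, odot_comm]; exact h
  calc (M ⊹ T) ⊠ (M∗ ⊠ S∗) = ((T ⊹ M) ⊠ M∗) ⊠ S∗ := by ac_rfl
  _ = (inf T M∗) ⊠ S∗ := by rw [inf1]
  _ = T ⊠ S∗ := by rw [inf_absorb hTM]

lemma swap_core {c : E} (A g : E) (hcA : le c A) (hcg : le c g) :
    (A ⊠ c∗) ⊹ g = A ⊹ (g ⊠ c∗) := by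
  have eA : A = (A ⊠ c∗) ⊹ c := by
    rw [← sup_def]; exact (sup_absorb_left hcA).symm
  have eg : g = (g ⊠ c∗) ⊹ c := by
    rw [← sup_def]; exact (sup_absorb_left hcg).symm
  calc (A ⊠ c∗) ⊹ g = (A ⊠ c∗) ⊹ ((g ⊠ c∗) ⊹ c) := by conv_lhs => rw [eg]
  _ = ((A ⊠ c∗) ⊹ c) ⊹ (g ⊠ c∗) := by ac_rfl
  _ = A ⊹ (g ⊠ c∗) := by rw [← eA]

lemma swap {u c g : E} (huc : u ⊠ c = zero) (hcg : le c g) :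
    (u ⊹ c) ⊠ g∗ = u ⊠ (g ⊠ c∗)∗ := by
  apply star_inj
  rw [star_odot, star_odot, ss, ss, star_oplus]
  have hcA : le c u∗ := by
    show c ⊠ u∗∗ = zero
    rw [ss, odot_comm]; exact huc
  exact swap_core u∗ g hcA hcg

end MVLemmas
namespace MVLemmas

open MVAlgebra

variable {E : Type} [MVAlgebra E]

local infixl:65 " ⊹ " => MVAlgebra.oplus
local infixl:70 " ⊠ " => MVAlgebra.odot
local postfix:max "∗" => MVAlgebra.star

lemma odot_le_left (x y : E) : le (x ⊠ y) x := by
  show (x ⊠ y) ⊠ x∗ = zero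
  calc (x ⊠ y) ⊠ x∗ = (x ⊠ x∗) ⊠ y := by ac_rfl
  _ = zero := by rw [odot_star_self, zero_odot]

lemma odot_le_right (x y : E) : le (x ⊠ y) y := by
  rw [odot_comm]; exact odot_le_left y x

lemma le_star_iff {x y : E} : le x y∗ ↔ x ⊠ y = zero := by
  show x ⊠ y∗∗ = zero ↔ _
  rw [ss]

/-- `lsum l` is the ⊕-sum of a list. -/
def lsum : List E → E
  | [] => zero
  | a :: l => a ⊹ lsum l

/-- `Orth l` : each element is ⊙-orthogonal to the sum of the rest. -/
def Orth : List E → Prop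
  | [] => True
  | a :: l => a ⊠ lsum l = zero ∧ Orth l

@[simp] lemma lsum_nil : lsum ([] : List E) = zero := rfl
@[simp] lemma lsum_cons (a : E) (l : List E) : lsum (a :: l) = a ⊹ lsum l := rfl

lemma Orth_nil : Orth ([] : List E) := trivial

lemma lsum_append (l₁ l₂ : List E) : lsum (l₁ ++ l₂) = lsum l₁ ⊹ lsum l₂ := by
  induction l₁ with
  | nil => simp [zero_oplus]
  | cons a t ih => simp [ih, oplus_assoc]

lemma lsum_replicate (k : ℕ) (x : E) : lsum (List.replicate k x) = nmul k x := by
  induction k with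
  | zero => rfl
  | succ k ih =>
    rw [List.replicate_succ, lsum_cons, ih, nmul_succ, oplus_comm]

lemma orth_R1 {a b s : E} (h : a ⊠ (b ⊹ s) = zero) (hbs : b ⊠ s = zero) :
    b ⊠ (a ⊹ s) = zero ∧ a ⊠ s = zero := by
  have ha' : le a ((b ⊹ s))∗ := le_star_iff.mpr h
  constructor
  · have h1 : le (a ⊹ s) ((b∗ ⊠ s∗) ⊹ s) := by
      apply oplus_mono_left
      rw [star_oplus] at ha'
      exact ha'
    have h2 : (b∗ ⊠ s∗) ⊹ s = sup b∗ s := rfl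
    have h3 : le (sup b∗ s) b∗ :=
      sup_le (le_refl b∗) (le_star_iff.mpr (by rw [odot_comm]; exact hbs))
    rw [h2] at h1
    have h4 : le (a ⊹ s) b∗ := le_trans h1 h3
    rw [odot_comm]
    exact le_star_iff.mp h4
  · have h5 : le ((b ⊹ s))∗ s∗ := star_antitone (le_oplus_right s b)
    exact le_star_iff.mp (le_trans ha' h5)

lemma orth_R2 {b c s : E} (h : b ⊠ (c ⊹ s) = zero) (hcs : c ⊠ s = zero) :
    (b ⊹ c) ⊠ s = zero := by
  have hb' : le b ((c ⊹ s))∗ := le_star_iff.mpr h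
  rw [star_oplus] at hb'
  have hb'' : le b (s∗ ⊠ c∗) := by rw [odot_comm] at hb'; exact hb'
  have h1 : le (b ⊹ c) ((s∗ ⊠ c∗) ⊹ c) := oplus_mono_left c hb''
  have h2 : (s∗ ⊠ c∗) ⊹ c = sup s∗ c := rfl
  have h3 : le (sup s∗ c) s∗ := sup_le (le_refl s∗) (le_star_iff.mpr hcs)
  rw [h2] at h1
  exact le_star_iff.mp (le_trans h1 h3)

lemma orth_R3 {b c s : E} (h : (b ⊹ c) ⊠ s = zero) (hbc : b ⊠ c = zero) :
    b ⊠ (c ⊹ s) = zero := by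
  have hs' : le s ((b ⊹ c))∗ := by
    rw [odot_comm] at h
    exact le_star_iff.mpr h
  rw [star_oplus] at hs'
  have h1 : le (c ⊹ s) (c ⊹ (b∗ ⊠ c∗)) := by
    rw [oplus_comm c s, oplus_comm c (b∗ ⊠ c∗)]
    exact oplus_mono_left c hs'
  have h2 : c ⊹ (b∗ ⊠ c∗) = sup b∗ c := by
    rw [sup_def]; exact oplus_comm _ _
  rw [h2] at h1
  have h3 : le (sup b∗ c) b∗ :=
    sup_le (le_refl b∗) (le_star_iff.mpr (by rw [odot_comm]; exact hbc))
  have h4 : le (c ⊹ s) b∗ := le_trans h1 h3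
  have h5 := le_star_iff.mp h4
  rw [odot_comm] at h5
  exact h5

lemma Orth_swap {a b : E} {l : List E} (h : Orth (a :: b :: l)) :
    Orth (b :: a :: l) := by
  obtain ⟨ha, hb, hl⟩ := h
  rw [lsum_cons] at ha
  have h1 := orth_R1 ha hb
  exact ⟨by rw [lsum_cons]; exact h1.1, h1.2, hl⟩

lemma lsum_perm {l l' : List E} (h : l.Perm l') : lsum l = lsum l' := by
  induction h with
  | nil => rfl
  | cons x _ ih => simp [ih]
  | swap x y l =>
    show y ⊹ (x ⊹ lsum l) = x ⊹ (y ⊹ lsum l)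
    ac_rfl
  | trans _ _ ih1 ih2 => rw [ih1, ih2]

lemma Orth_perm {l l' : List E} (h : l.Perm l') (ho : Orth l) : Orth l' := by
  induction h with
  | nil => trivial
  | cons x h ih =>
    obtain ⟨hx, hl⟩ := ho
    exact ⟨by rw [← lsum_perm h]; exact hx, ih hl⟩
  | swap x y l => exact Orth_swap ho
  | trans _ _ ih1 ih2 => exact ih2 (ih1 ho)

lemma Orth_split {l₁ l₂ : List E} (h : Orth (l₁ ++ l₂)) :
    lsum l₁ ⊠ lsum l₂ = zero ∧ Orth l₂ := by
  induction l₁ with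
  | nil => exact ⟨zero_odot _, h⟩
  | cons a t ih =>
    rw [List.cons_append] at h
    obtain ⟨ha, ht⟩ := h
    obtain ⟨hTL, hl2⟩ := ih ht
    rw [lsum_append] at ha
    refine ⟨?_, hl2⟩
    rw [lsum_cons]
    exact orth_R2 ha hTL

lemma Orth_concat {l₁ l₂ : List E} (h1 : Orth l₁) (h2 : Orth l₂)
    (hs : lsum l₁ ⊠ lsum l₂ = zero) : Orth (l₁ ++ l₂) := by
  induction l₁ with
  | nil => exact h2
  | cons a t ih =>
    rw [List.cons_append]
    obtain ⟨ha, ht⟩ := h1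
    rw [lsum_cons] at hs
    have hTL : lsum t ⊠ lsum l₂ = zero := by
      have h' : le (lsum t ⊠ lsum l₂) ((a ⊹ lsum t) ⊠ lsum l₂) :=
        odot_mono_left _ (le_oplus_right _ _)
      rw [hs] at h'
      exact le_zero h'
    refine ⟨?_, ih ht hTL⟩
    rw [lsum_append]
    exact orth_R3 hs ha

lemma Orth_replace {a b c : E} {l : List E} (h : Orth (a :: l))
    (hd : a = b ⊹ c) (hbc : b ⊠ c = zero) : Orth (b :: c :: l) := by
  obtain ⟨ha, hl⟩ := h
  rw [hd] at ha
  have h1 : b ⊠ (c ⊹ lsum l) = zero := orth_R3 ha hbc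
  have h2 : c ⊠ lsum l = zero := by
    have h' : le (c ⊠ lsum l) ((b ⊹ c) ⊠ lsum l) :=
      odot_mono_left _ (le_oplus_right _ _)
    rw [ha] at h'
    exact le_zero h'
  exact ⟨by rw [lsum_cons]; exact h1, h2, hl⟩

lemma Orth_merge {b c : E} {l : List E} (h : Orth (b :: c :: l)) :
    Orth ((b ⊹ c) :: l) := by
  obtain ⟨hb, hc, hl⟩ := h
  rw [lsum_cons] at hb
  exact ⟨orth_R2 hb hc, hl⟩

lemma lsum_le_nmul {l : List E} {h : E} (hb : ∀ p ∈ l, le p h) :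
    le (lsum l) (nmul l.length h) := by
  induction l with
  | nil => exact le_refl _
  | cons a t ih =>
    rw [lsum_cons]
    show le _ (nmul (t.length + 1) h)
    rw [nmul_succ, oplus_comm (nmul t.length h) h]
    exact oplus_mono (hb a (by simp)) (ih (fun p hp => hb p (by simp [hp])))

lemma small_mono {x : E} {j m : ℕ} (h : x ⊠ nmul m x = zero) (hj : j ≤ m) :
    x ⊠ nmul j x = zero := by
  have h' : le (x ⊠ nmul j x) (x ⊠ nmul m x) :=
    odot_mono_right x (nmul_mono_count x hj)
  rw [h] at h'
  exact le_zero h'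

lemma Orth_bounded {h : E} {n : ℕ} (hsm : h ⊠ nmul (n - 1) h = zero) :
    ∀ {l : List E}, (∀ p ∈ l, le p h) → l.length ≤ n → Orth l := by
  intro l
  induction l with
  | nil => intro _ _; trivial
  | cons a t ih =>
    intro hb hlen
    refine ⟨?_, ih (fun p hp => hb p (by simp [hp])) ?_⟩
    · have h1 : le (a ⊠ lsum t) (h ⊠ nmul (n - 1) h) := by
        apply odot_mono (hb a (by simp))
        apply le_trans (lsum_le_nmul (fun p hp => hb p (by simp [hp])))
        apply nmul_mono_count
        simp at hlen
        omega
      rw [hsm] at h1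
      exact le_zero h1
    · simp at hlen ⊢
      omega

lemma Orth_replicate {x : E} {k : ℕ} (hsm : x ⊠ nmul k x = zero) :
    ∀ j, j ≤ k + 1 → Orth (List.replicate j x) := by
  intro j
  induction j with
  | zero => intro _; trivial
  | succ j ih =>
    intro hj
    rw [List.replicate_succ]
    exact ⟨by rw [lsum_replicate]; exact small_mono hsm (by omega), ih (by omega)⟩

lemma Orth_expand {a : E} {m : ℕ} (hsm : a ⊠ nmul (m - 1) a = zero) :
    ∀ l : List E, Orth (nmul m a :: l) → Orth (List.replicate m a ++ l) := by
  induction m with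
  | zero => intro l h; simpa using h.2
  | succ m ih =>
    intro l h
    have hsm0 : a ⊠ nmul m a = zero := by simpa using hsm
    have horth : nmul m a ⊠ a = zero := by
      rw [odot_comm]
      exact small_mono hsm0 (Nat.le_refl m)
    have h1 : Orth (nmul m a :: a :: l) := Orth_replace h (nmul_succ m a) horth
    have hsm' : a ⊠ nmul (m - 1) a = zero := small_mono hsm0 (by omega)
    have h2 : Orth (List.replicate m a ++ (a :: l)) := ih hsm' (a :: l) h1
    have hperm : (List.replicate m a ++ (a :: l)).Perm (List.replicate (m + 1) a ++ l) := by
      rw [List.replicate_succ, List.cons_append]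
      exact List.perm_middle
    exact Orth_perm hperm h2

lemma Orth_split_pair {m t a : E} (hd : a = m ⊹ t) (hmt : m ⊠ t = zero) :
    ∀ k : ℕ, Orth (List.replicate k a) →
      Orth (List.replicate k m ++ List.replicate k t) := by
  intro k
  induction k with
  | zero => intro _; trivial
  | succ k ih =>
    intro h
    rw [List.replicate_succ] at h
    have h1 : Orth (m :: t :: List.replicate k a) := Orth_replace h hd hmt
    have hs : lsum (List.replicate k a) =
        lsum (List.replicate k m ++ List.replicate k t) := by
      rw [lsum_replicate, lsum_append, lsum_replicate, lsum_replicate, hd, nmul_oplus]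
    have ht : Orth (t :: List.replicate k a) := h1.2
    have ht' : Orth (t :: (List.replicate k m ++ List.replicate k t)) := by
      refine ⟨?_, ih ht.2⟩
      show t ⊠ lsum (List.replicate k m ++ List.replicate k t) = zero
      rw [← hs]
      exact ht.1
    have hm' : Orth (m :: t :: (List.replicate k m ++ List.replicate k t)) := by
      refine ⟨?_, ht'⟩
      have h1h := h1.1
      rw [lsum_cons] at h1h
      show m ⊠ (t ⊹ lsum (List.replicate k m ++ List.replicate k t)) = zero
      rw [← hs]
      exact h1h
    rw [List.replicate_succ, List.replicate_succ, List.cons_append]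
    exact Orth_perm (List.Perm.cons m List.perm_middle.symm) hm'

lemma nmul_split {a m t : E} {k : ℕ} (hsm : a ⊠ nmul k a = zero)
    (hd : a = m ⊹ t) (hmt : m ⊠ t = zero) :
    nmul (k + 1) m ⊠ nmul (k + 1) t = zero := by
  have h0 : Orth (List.replicate (k + 1) a) := Orth_replicate hsm (k + 1) (by omega)
  have h1 := Orth_split_pair hd hmt (k + 1) h0
  have h2 := (Orth_split h1).1
  rw [lsum_replicate, lsum_replicate] at h2
  exact h2

lemma Orth_merge_pair {b c : E} :
    ∀ k : ℕ, Orth (List.replicate k b ++ List.replicate k c) →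
      Orth (List.replicate k (b ⊹ c)) := by
  intro k
  induction k with
  | zero => intro _; trivial
  | succ k ih =>
    intro h
    rw [List.replicate_succ, List.replicate_succ, List.cons_append] at h
    have h2 : Orth (b :: c :: (List.replicate k b ++ List.replicate k c)) :=
      Orth_perm (List.Perm.cons b List.perm_middle) h
    have h3 : Orth ((b ⊹ c) :: (List.replicate k b ++ List.replicate k c)) :=
      Orth_merge h2
    rw [List.replicate_succ]
    refine ⟨?_, ih h3.2⟩
    have := h3.1
    rw [lsum_append, lsum_replicate, lsum_replicate] at this
    rw [lsum_replicate, nmul_oplus]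
    exact this

lemma merge_exact {A B a b : E} (haA : le a A) (hbB : le b B) (hAB : A ⊠ B = zero) :
    (A ⊹ B) ⊠ (a ⊹ b)∗ = (A ⊠ a∗) ⊹ (B ⊠ b∗) := by
  have eA : (A ⊠ a∗) ⊹ a = A := by rw [← sup_def]; exact sup_absorb_left haA
  have eB : (B ⊠ b∗) ⊹ b = B := by rw [← sup_def]; exact sup_absorb_left hbB
  have hXa : (A ⊠ a∗) ⊠ a = zero := by
    calc (A ⊠ a∗) ⊠ a = A ⊠ (a ⊠ a∗) := by ac_rfl
    _ = zero := by rw [odot_star_self, odot_zero]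
  have hYb : (B ⊠ b∗) ⊠ b = zero := by
    calc (B ⊠ b∗) ⊠ b = B ⊠ (b ⊠ b∗) := by ac_rfl
    _ = zero := by rw [odot_star_self, odot_zero]
  have hBa : (B ⊠ b∗ ⊹ b) ⊠ a = zero := by
    rw [eB]
    have h' : le (B ⊠ a) (B ⊠ A) := odot_mono_right B haA
    rw [odot_comm B A, hAB] at h'
    exact le_zero h'
  have hYab : (B ⊠ b∗) ⊠ (a ⊹ b) = zero := by
    have := orth_R3 hBa hYb
    rw [oplus_comm b a] at this
    exact this
  have hXrest : (A ⊠ a∗) ⊠ ((B ⊠ b∗) ⊹ (a ⊹ b)) = zero := by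
    have hpair : ((A ⊠ a∗) ⊹ a) ⊠ ((B ⊠ b∗) ⊹ b) = zero := by
      rw [eA, eB]; exact hAB
    have h1 := orth_R3 hpair hXa
    -- h1 : (A⊠a∗) ⊠ (a ⊹ (B⊠b∗ ⊹ b)) = 0 ; rearrange inner sum
    have e : a ⊹ ((B ⊠ b∗) ⊹ b) = (B ⊠ b∗) ⊹ (a ⊹ b) := by ac_rfl
    rw [e] at h1
    exact h1
  have horth : ((A ⊠ a∗) ⊹ (B ⊠ b∗)) ⊠ (a ⊹ b) = zero :=
    orth_R2 hXrest hYab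
  have hLorth : ((A ⊹ B) ⊠ (a ⊹ b)∗) ⊠ (a ⊹ b) = zero := by
    calc ((A ⊹ B) ⊠ (a ⊹ b)∗) ⊠ (a ⊹ b)
        = (A ⊹ B) ⊠ ((a ⊹ b) ⊠ (a ⊹ b)∗) := by ac_rfl
    _ = zero := by rw [odot_star_self, odot_zero]
  have hsums : ((A ⊹ B) ⊠ (a ⊹ b)∗) ⊹ (a ⊹ b)
      = ((A ⊠ a∗) ⊹ (B ⊠ b∗)) ⊹ (a ⊹ b) := by
    have l1 : ((A ⊹ B) ⊠ (a ⊹ b)∗) ⊹ (a ⊹ b) = sup (A ⊹ B) (a ⊹ b) := rfl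
    have l2 : sup (A ⊹ B) (a ⊹ b) = A ⊹ B :=
      sup_absorb_left (oplus_mono haA hbB)
    have l3 : ((A ⊠ a∗) ⊹ (B ⊠ b∗)) ⊹ (a ⊹ b)
        = ((A ⊠ a∗) ⊹ a) ⊹ ((B ⊠ b∗) ⊹ b) := by ac_rfl
    rw [l1, l2, l3, eA, eB]
  exact canc hsums hLorth horth

end MVLemmas
namespace MVLemmas

open MVAlgebra

section MVpart

variable {E : Type} [MVAlgebra E]

local infixl:65 " ⊹ " => MVAlgebra.oplus
local infixl:70 " ⊠ " => MVAlgebra.odot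
local postfix:max "∗" => MVAlgebra.star

lemma Orth_replicate_head {x : E} {k : ℕ}
    (h : Orth (List.replicate (k + 1) x)) : x ⊠ nmul k x = zero := by
  rw [List.replicate_succ] at h
  have h1 := h.1
  rwa [lsum_replicate] at h1

lemma compl_unique {u v : E} (h1 : u ⊹ v = one) (h2 : u ⊠ v = zero) : v = u∗ := by
  apply le_antisymm
  · exact le_star_iff.mpr (by rw [odot_comm]; exact h2)
  · have e1 : inf v u∗ = u∗ := by
      rw [inf_def, ss, oplus_comm, h1, one_odot]
    have e2 := inf_le_left v u∗
    rw [e1] at e2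
    exact e2

lemma decomp' (v u : E) (h : le u v) : v = u ⊹ (v ⊠ u∗) := by
  have d := decomp v u
  have e : inf v u = u := by rw [inf_comm]; exact inf_absorb h
  rw [e] at d
  exact d.symm

end MVpart

section DMVpart

variable {E : Type} [DMVAlgebra E]

local infixl:65 " ⊹ " => MVAlgebra.oplus
local infixl:70 " ⊠ " => MVAlgebra.odot
local postfix:max "∗" => MVAlgebra.star

open DMVAlgebra

lemma delta_one_id (x : E) : delta 1 x = x := by
  have h := delta_nmul 1 (Nat.le_refl 1) x
  rwa [nmul_one_eq] at h

lemma delta_zero {n : ℕ} (hn : 1 ≤ n) : delta n (zero : E) = zero := by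
  have h := delta_nmul n hn (zero : E)
  exact nmul_eq_zero hn h

lemma div_unique {n : ℕ} (hn : 1 ≤ n) {a b : E}
    (ha : a ⊠ nmul (n - 1) a = zero) (hb : b ⊠ nmul (n - 1) b = zero)
    (heq : nmul n a = nmul n b) : a = b := by
  obtain ⟨k, rfl⟩ : ∃ k, n = k + 1 := ⟨n - 1, by omega⟩
  have ha' : a ⊠ nmul k a = zero := by simpa using ha
  have hb' : b ⊠ nmul k b = zero := by simpa using hb
  have da : inf a b ⊹ (a ⊠ b∗) = a := decomp a b
  have db : inf a b ⊹ (b ⊠ a∗) = b := by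
    rw [inf_comm]; exact decomp b a
  have hmt : inf a b ⊠ (a ⊠ b∗) = zero := by
    have h' : le (inf a b ⊠ (a ⊠ b∗)) (b ⊠ (a ⊠ b∗)) :=
      odot_mono_left _ (inf_le_right a b)
    have e : b ⊠ (a ⊠ b∗) = zero := by
      calc b ⊠ (a ⊠ b∗) = (b ⊠ b∗) ⊠ a := by ac_rfl
      _ = zero := by rw [odot_star_self, zero_odot]
    rw [e] at h'
    exact le_zero h'
  have hms : inf a b ⊠ (b ⊠ a∗) = zero := by
    have h' : le (inf a b ⊠ (b ⊠ a∗)) (a ⊠ (b ⊠ a∗)) :=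
      odot_mono_left _ (inf_le_left a b)
    have e : a ⊠ (b ⊠ a∗) = zero := by
      calc a ⊠ (b ⊠ a∗) = (a ⊠ a∗) ⊠ b := by ac_rfl
      _ = zero := by rw [odot_star_self, zero_odot]
    rw [e] at h'
    exact le_zero h'
  have split1 : nmul (k + 1) (inf a b) ⊠ nmul (k + 1) (a ⊠ b∗) = zero :=
    nmul_split ha' da.symm hmt
  have split2 : nmul (k + 1) (inf a b) ⊠ nmul (k + 1) (b ⊠ a∗) = zero :=
    nmul_split hb' db.symm hms
  have sums : nmul (k+1) (a ⊠ b∗) ⊹ nmul (k+1) (inf a b)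
      = nmul (k+1) (b ⊠ a∗) ⊹ nmul (k+1) (inf a b) := by
    have e1 : nmul (k+1) a = nmul (k+1) (inf a b) ⊹ nmul (k+1) (a ⊠ b∗) := by
      conv_lhs => rw [← da]
      rw [nmul_oplus]
    have e2 : nmul (k+1) b = nmul (k+1) (inf a b) ⊹ nmul (k+1) (b ⊠ a∗) := by
      conv_lhs => rw [← db]
      rw [nmul_oplus]
    rw [e1, e2] at heq
    calc nmul (k+1) (a ⊠ b∗) ⊹ nmul (k+1) (inf a b)
        = nmul (k+1) (inf a b) ⊹ nmul (k+1) (a ⊠ b∗) := by ac_rfl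
    _ = nmul (k+1) (inf a b) ⊹ nmul (k+1) (b ⊠ a∗) := heq
    _ = _ := by ac_rfl
  have hts : nmul (k+1) (a ⊠ b∗) = nmul (k+1) (b ⊠ a∗) := by
    apply canc sums
    · rw [odot_comm] at split1; exact split1
    · rw [odot_comm] at split2; exact split2
  have hdisj : inf (nmul (k+1) (a ⊠ b∗)) (nmul (k+1) (b ⊠ a∗)) = zero :=
    disj_nmul (disj0 a b) (k+1) (k+1)
  have ht0 : nmul (k+1) (a ⊠ b∗) = zero := by
    rw [← hts] at hdisj
    rwa [inf_idem] at hdisj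
  have hs0 : nmul (k+1) (b ⊠ a∗) = zero := by rw [← hts]; exact ht0
  have t0 : a ⊠ b∗ = zero := nmul_eq_zero (by omega) ht0
  have s0 : b ⊠ a∗ = zero := nmul_eq_zero (by omega) hs0
  exact le_antisymm t0 s0

lemma add_delta {n : ℕ} (hn : 1 ≤ n) {u v : E} (huv : u ⊠ v = zero) :
    delta n (u ⊹ v) = delta n u ⊹ delta n v := by
  obtain ⟨k, rfl⟩ : ∃ k, n = k + 1 := ⟨n - 1, by omega⟩
  have su : delta (k+1) u ⊠ nmul k (delta (k+1) u) = zero := by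
    simpa using delta_odot (k+1) hn u
  have sv : delta (k+1) v ⊠ nmul k (delta (k+1) v) = zero := by
    simpa using delta_odot (k+1) hn v
  have O1 : Orth (List.replicate (k+1) (delta (k+1) u)) :=
    Orth_replicate su (k+1) (by omega)
  have O2 : Orth (List.replicate (k+1) (delta (k+1) v)) :=
    Orth_replicate sv (k+1) (by omega)
  have hsum : lsum (List.replicate (k+1) (delta (k+1) u))
      ⊠ lsum (List.replicate (k+1) (delta (k+1) v)) = zero := by
    rw [lsum_replicate, lsum_replicate, delta_nmul (k+1) hn, delta_nmul (k+1) hn]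
    exact huv
  have O3 := Orth_concat O1 O2 hsum
  have O4 := Orth_merge_pair (k+1) O3
  have rsmall : (delta (k+1) u ⊹ delta (k+1) v)
      ⊠ nmul k (delta (k+1) u ⊹ delta (k+1) v) = zero :=
    Orth_replicate_head O4
  have req : nmul (k+1) (delta (k+1) u ⊹ delta (k+1) v) = nmul (k+1) (delta (k+1) (u ⊹ v)) := by
    rw [nmul_oplus, delta_nmul (k+1) hn, delta_nmul (k+1) hn, delta_nmul (k+1) hn]
  exact (div_unique hn (by simpa using delta_odot (k+1) hn (u ⊹ v))
    (by simpa using rsmall) req.symm)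

lemma delta_mono {n : ℕ} (hn : 1 ≤ n) {u v : E} (h : le u v) :
    le (delta n u) (delta n v) := by
  have hv : v = u ⊹ (v ⊠ u∗) := decomp' v u h
  have huc : u ⊠ (v ⊠ u∗) = zero := by
    calc u ⊠ (v ⊠ u∗) = (u ⊠ u∗) ⊠ v := by ac_rfl
    _ = zero := by rw [odot_star_self, zero_odot]
  have e : delta n v = delta n u ⊹ delta n (v ⊠ u∗) := by
    conv_lhs => rw [hv]
    exact add_delta hn huc
  rw [e]
  exact le_oplus_left _ _

lemma small_lift {m n : ℕ} (hm : 1 ≤ m) (hn : 1 ≤ n) {a : E}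
    (ha : a ⊠ nmul (m - 1) a = zero)
    (hma : (nmul m a) ⊠ nmul (n - 1) (nmul m a) = zero) :
    a ⊠ nmul (n * m - 1) a = zero := by
  have EXP : ∀ j (l : List E), Orth (List.replicate j (nmul m a) ++ l) →
      Orth (List.replicate (j * m) a ++ l) := by
    intro j
    induction j with
    | zero => intro l h; simpa using (by simpa using h : Orth l)
    | succ j ih =>
      intro l h
      rw [List.replicate_succ, List.cons_append] at h
      have h1 : Orth (List.replicate m a ++ (List.replicate j (nmul m a) ++ l)) :=
        Orth_expand ha _ h
      have hp : (List.replicate m a ++ (List.replicate j (nmul m a) ++ l)).Perm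
          (List.replicate j (nmul m a) ++ (List.replicate m a ++ l)) := by
        rw [← List.append_assoc, ← List.append_assoc]
        exact (List.perm_append_comm).append_right l
      have h2 := Orth_perm hp h1
      have h3 := ih _ h2
      have e : (j + 1) * m = j * m + m := by ring
      rw [e, List.replicate_add, List.append_assoc]
      exact h3
  have O0 : Orth (List.replicate n (nmul m a)) :=
    Orth_replicate hma n (by omega)
  have O1 : Orth (List.replicate (n * m) a) := by
    have h := EXP n [] (by rw [List.append_nil]; exact O0)
    rwa [List.append_nil] at h
  obtain ⟨k, hk⟩ : ∃ k, n * m = k + 1 := ⟨n * m - 1, by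
    have : 1 ≤ n * m := Nat.one_le_iff_ne_zero.mpr (by positivity)
    omega⟩
  rw [hk] at O1
  have := Orth_replicate_head O1
  have e : n * m - 1 = k := by omega
  rw [e]
  exact this

lemma delta_comp {m n : ℕ} (hm : 1 ≤ m) (hn : 1 ≤ n) (x : E) :
    delta m (delta n x) = delta (n * m) x := by
  have hnm : 1 ≤ n * m := Nat.one_le_iff_ne_zero.mpr (by positivity)
  apply div_unique hnm
  · apply small_lift hm hn
    · simpa using delta_odot m hm (delta n x)
    · rw [delta_nmul m hm]
      simpa using delta_odot n hn x
  · simpa using delta_odot (n * m) hnm x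
  · rw [nmul_mul, delta_nmul m hm, delta_nmul n hn, delta_nmul (n * m) hnm]

lemma starmul {N : ℕ} (hN : 1 ≤ N) {y : E} (hy : le y (delta N one)) :
    nmul N ((delta N one) ⊠ y∗) = (nmul N y)∗ := by
  set h : E := delta N one with hdef
  have hsm : h ⊠ nmul (N - 1) h = zero := by simpa using delta_odot N hN one
  have hone : nmul N h = one := delta_nmul N hN one
  have hsup : y ⊹ (h ⊠ y∗) = h := by
    have e1 : (h ⊠ y∗) ⊹ y = sup h y := rfl
    have e2 : sup h y = h := sup_absorb_left hy
    rw [oplus_comm, e1, e2]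
  have hymt : y ⊠ (h ⊠ y∗) = zero := by
    calc y ⊠ (h ⊠ y∗) = (y ⊠ y∗) ⊠ h := by ac_rfl
    _ = zero := by rw [odot_star_self, zero_odot]
  apply compl_unique
  · rw [← nmul_oplus, hsup, hone]
  · obtain ⟨k, hk⟩ : ∃ k, N = k + 1 := ⟨N - 1, by omega⟩
    have O0 : Orth (List.replicate N h) := by
      rw [hk]
      exact Orth_replicate (by rw [hk] at hsm; simpa using hsm) (k+1) (by omega)
    have O1 := Orth_split_pair hsup.symm hymt N O0
    have O2 := (Orth_split O1).1
    rw [lsum_replicate, lsum_replicate] at O2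
    exact O2

lemma submul {N : ℕ} (hN : 1 ≤ N) {a b : E}
    (hax : le a (delta N one)) (hbx : le b (delta N one)) :
    (nmul N a) ⊠ (nmul N b)∗ = nmul N (a ⊠ b∗) := by
  set h : E := delta N one with hdef
  have hsm : h ⊠ nmul (N - 1) h = zero := by simpa using delta_odot N hN one
  have hasm : a ⊠ nmul (N - 1) a = zero := by
    have h' : le (a ⊠ nmul (N - 1) a) (h ⊠ nmul (N - 1) h) :=
      odot_mono hax (nmul_mono_elem _ hax)
    rw [hsm] at h'
    exact le_zero h'
  obtain ⟨k, hk⟩ : ∃ k, N = k + 1 := ⟨N - 1, by omega⟩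
  have da : inf a b ⊹ (a ⊠ b∗) = a := decomp a b
  have db : inf a b ⊹ (b ⊠ a∗) = b := by rw [inf_comm]; exact decomp b a
  have hmt : inf a b ⊠ (a ⊠ b∗) = zero := by
    have h' : le (inf a b ⊠ (a ⊠ b∗)) (b ⊠ (a ⊠ b∗)) :=
      odot_mono_left _ (inf_le_right a b)
    have e : b ⊠ (a ⊠ b∗) = zero := by
      calc b ⊠ (a ⊠ b∗) = (b ⊠ b∗) ⊠ a := by ac_rfl
      _ = zero := by rw [odot_star_self, zero_odot]
    rw [e] at h'
    exact le_zero h'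
  have horth : nmul N (inf a b) ⊠ nmul N (a ⊠ b∗) = zero := by
    rw [hk]
    exact nmul_split (by rw [hk] at hasm; simpa using hasm) da.symm hmt
  have ea : nmul N a = nmul N (inf a b) ⊹ nmul N (a ⊠ b∗) := by
    conv_lhs => rw [← da]
    rw [nmul_oplus]
  have eb : nmul N b = nmul N (inf a b) ⊹ nmul N (b ⊠ a∗) := by
    conv_lhs => rw [← db]
    rw [nmul_oplus]
  rw [ea, eb]
  rw [es horth]
  have hdisj : inf (nmul N (a ⊠ b∗)) (nmul N (b ⊠ a∗)) = zero :=
    disj_nmul (disj0 a b) N N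
  exact disj_odot_star hdisj

end DMVpart

end MVLemmas
namespace MVLemmas

open MVAlgebra DMVAlgebra

variable {E : Type} [DMVAlgebra E] {S : Set E}

local infixl:65 " ⊹ " => MVAlgebra.oplus
local infixl:70 " ⊠ " => MVAlgebra.odot
local postfix:max "∗" => MVAlgebra.star

lemma hS1 (hS0 : (zero : E) ∈ S) (hSst : ∀ u ∈ S, u∗ ∈ S) : (one : E) ∈ S :=
  hSst zero hS0

lemma hSodot (hSop : ∀ u ∈ S, ∀ v ∈ S, u ⊹ v ∈ S) (hSst : ∀ u ∈ S, u∗ ∈ S) :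
    ∀ u ∈ S, ∀ v ∈ S, u ⊠ v ∈ S := by
  intro u hu v hv
  show (u∗ ⊹ v∗)∗ ∈ S
  exact hSst _ (hSop _ (hSst _ hu) _ (hSst _ hv))

lemma hSinf (hSop : ∀ u ∈ S, ∀ v ∈ S, u ⊹ v ∈ S) (hSst : ∀ u ∈ S, u∗ ∈ S) :
    ∀ u ∈ S, ∀ v ∈ S, inf u v ∈ S := by
  intro u hu v hv
  show (u ⊹ v∗) ⊠ v ∈ S
  exact hSodot hSop hSst _ (hSop _ hu _ (hSst _ hv)) _ hv

lemma hSnmul (hS0 : (zero : E) ∈ S) (hSop : ∀ u ∈ S, ∀ v ∈ S, u ⊹ v ∈ S) :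
    ∀ (k : ℕ), ∀ u ∈ S, nmul k u ∈ S := by
  intro k u hu
  induction k with
  | zero => exact hS0
  | succ k ih => exact hSop _ ih _ hu

lemma hSlsum (hS0 : (zero : E) ∈ S) (hSop : ∀ u ∈ S, ∀ v ∈ S, u ⊹ v ∈ S) :
    ∀ l : List E, (∀ p ∈ l, p ∈ S) → lsum l ∈ S := by
  intro l
  induction l with
  | nil => intro _; exact hS0
  | cons a t ih =>
    intro hb
    exact hSop _ (hb a (by simp)) _ (ih (fun p hp => hb p (by simp [hp])))

/-- A good representation of `x` at level `N` : `N` pieces, each below `1/N`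
(i.e. `delta N one`), each with `N`-fold truncated multiple in `S`, summing to `x`. -/
def GoodRep (S : Set E) (N : ℕ) (l : List E) (x : E) : Prop :=
  l.length = N ∧ lsum l = x ∧
    ∀ p ∈ l, le p (delta N one) ∧ nmul N p ∈ S

section Reps

lemma good_zero (hS0 : (zero : E) ∈ S) : GoodRep S 1 [zero] (zero : E) := by
  refine ⟨rfl, ?_, ?_⟩
  · show (zero : E) ⊹ zero = zero
    exact oplus_zero zero
  · intro p hp
    simp at hp
    subst hp
    exact ⟨zero_le _, by rw [nmul_one_eq]; exact hS0⟩

lemma good_one (hS1' : (one : E) ∈ S) : GoodRep S 1 [one] (one : E) := by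
  refine ⟨rfl, ?_, ?_⟩
  · show (one : E) ⊹ zero = one
    exact oplus_zero one
  · intro p hp
    simp at hp
    subst hp
    constructor
    · rw [delta_one_id]; exact le_refl one
    · rw [nmul_one_eq]; exact hS1'

lemma good_mem {a : E} (ha : a ∈ S) : GoodRep S 1 [a] a := by
  refine ⟨rfl, ?_, ?_⟩
  · show a ⊹ zero = a
    exact oplus_zero a
  · intro p hp
    simp at hp
    subst hp
    constructor
    · rw [delta_one_id]; exact le_one p
    · rw [nmul_one_eq]; exact ha

/-- refinement of a representation list by factor `m`. -/
def refineList (m : ℕ) : List E → List E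
  | [] => []
  | p :: t => List.replicate m (delta m p) ++ refineList m t

lemma refineList_length (m : ℕ) (l : List E) :
    (refineList m l).length = l.length * m := by
  induction l with
  | nil => simp [refineList]
  | cons a t ih =>
    show (List.replicate m (delta m a) ++ refineList m t).length = _
    simp [ih]
    ring

lemma refineList_mem {m : ℕ} {l : List E} {q : E} (hq : q ∈ refineList m l) :
    ∃ p ∈ l, q = delta m p := by
  induction l with
  | nil => simp [refineList] at hq
  | cons a t ih =>
    rw [refineList, List.mem_append] at hq
    rcases hq with hq | hq
    · rw [List.mem_replicate] at hq
      exact ⟨a, by simp, hq.2⟩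
    · obtain ⟨p, hp, he⟩ := ih hq
      exact ⟨p, by simp [hp], he⟩

lemma refineList_lsum {m : ℕ} (hm : 1 ≤ m) (l : List E) :
    lsum (refineList m l) = lsum l := by
  induction l with
  | nil => rfl
  | cons a t ih =>
    show lsum (List.replicate m (delta m a) ++ refineList m t) = a ⊹ lsum t
    rw [lsum_append, lsum_replicate, delta_nmul m hm, ih]

lemma good_refine {N m : ℕ} (hN : 1 ≤ N) (hm : 1 ≤ m) {l : List E} {x : E}
    (h : GoodRep S N l x) : GoodRep S (N * m) (refineList m l) x := by
  obtain ⟨hlen, hsum, hb⟩ := h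
  refine ⟨by rw [refineList_length, hlen], by rw [refineList_lsum hm, hsum], ?_⟩
  intro q hq
  obtain ⟨p, hp, rfl⟩ := refineList_mem hq
  obtain ⟨hple, hpcert⟩ := hb p hp
  constructor
  · have h1 : le (delta m p) (delta m (delta N one)) := delta_mono hm hple
    rwa [delta_comp hm hN] at h1
  · have e : nmul (N * m) (delta m p) = nmul N p := by
      rw [nmul_mul, delta_nmul m hm]
    rw [e]
    exact hpcert

lemma rep_sum_pairs {N : ℕ} (hN : 1 ≤ N) :
    ∀ l : List E, (∀ p ∈ l, le p (delta N one)) →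
      lsum l ⊹ lsum (l.map (fun p => (delta N one) ⊠ p∗))
        = nmul l.length (delta N one) := by
  intro l
  induction l with
  | nil => intro _; show (zero : E) ⊹ zero = zero; exact oplus_zero zero
  | cons a t ih =>
    intro hb
    have hsup : a ⊹ ((delta N one) ⊠ a∗) = delta N one := by
      have e1 : ((delta N one) ⊠ a∗) ⊹ a = sup (delta N one) a := rfl
      rw [oplus_comm, e1, sup_absorb_left (hb a (by simp))]
    show (a ⊹ lsum t) ⊹ (((delta N one) ⊠ a∗) ⊹ lsum (t.map (fun p => (delta N one) ⊠ p∗))) = nmul (t.length + 1) (delta N one)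
    rw [nmul_succ]
    have iht := ih (fun p hp => hb p (by simp [hp]))
    calc (a ⊹ lsum t) ⊹ (((delta N one) ⊠ a∗) ⊹ lsum (t.map fun p => (delta N one) ⊠ p∗))
        = (lsum t ⊹ lsum (t.map fun p => (delta N one) ⊠ p∗)) ⊹ (a ⊹ ((delta N one) ⊠ a∗)) := by ac_rfl
    _ = nmul t.length (delta N one) ⊹ delta N one := by rw [iht, hsup]

lemma rep_orth_pairs {N : ℕ} (hN : 1 ≤ N) :
    ∀ l : List E, (∀ p ∈ l, le p (delta N one)) →
      Orth (List.replicate l.length ((delta N one : E))) →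
      Orth (l ++ l.map (fun p => (delta N one) ⊠ p∗)) := by
  intro l
  induction l with
  | nil => intro _ _; trivial
  | cons a t ih =>
    intro hb hO
    set h : E := delta N one with hdef
    rw [List.length_cons, List.replicate_succ] at hO
    have hsup : h = a ⊹ (h ⊠ a∗) := by
      conv_lhs => rw [← sup_absorb_left (hb a (by simp : a ∈ a :: t))]
      rw [sup_def]
      exact oplus_comm _ _
    have hamt : a ⊠ (h ⊠ a∗) = zero := by
      calc a ⊠ (h ⊠ a∗) = (a ⊠ a∗) ⊠ h := by ac_rfl
      _ = zero := by rw [odot_star_self, zero_odot]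
    have h1 : Orth (a :: (h ⊠ a∗) :: List.replicate t.length h) :=
      Orth_replace hO hsup hamt
    -- lsum equality between replicate and (t ++ map w t)
    have hsumeq : lsum (List.replicate t.length h)
        = lsum (t ++ t.map (fun p => h ⊠ p∗)) := by
      rw [lsum_replicate, lsum_append]
      exact (rep_sum_pairs hN t (fun p hp => hb p (by simp [hp]))).symm
    have htail : Orth (t ++ t.map (fun p => h ⊠ p∗)) :=
      ih (fun p hp => hb p (by simp [hp])) ((h1.2).2)
    have h2 : Orth (a :: (h ⊠ a∗) :: (t ++ t.map (fun p => h ⊠ p∗))) := by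
      refine ⟨?_, ?_, htail⟩
      · have := h1.1
        rw [lsum_cons] at this ⊢
        rw [← hsumeq]
        exact this
      · have := (h1.2).1
        rw [← hsumeq]
        exact this
    have hperm : (a :: (h ⊠ a∗) :: (t ++ t.map (fun p => h ⊠ p∗))).Perm
        ((a :: t) ++ (h ⊠ a∗) :: t.map (fun p => h ⊠ p∗)) := by
      rw [List.cons_append]
      exact List.Perm.cons a List.perm_middle.symm
    have := Orth_perm hperm h2
    simpa using this

lemma good_star (hSst : ∀ u ∈ S, u∗ ∈ S) {N : ℕ} (hN : 1 ≤ N) {l : List E} {x : E}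
    (h : GoodRep S N l x) :
    GoodRep S N (l.map (fun p => (delta N one) ⊠ p∗)) x∗ := by
  obtain ⟨hlen, hsum, hb⟩ := h
  set hh : E := delta N one with hdef
  have hbl : ∀ p ∈ l, le p hh := fun p hp => (hb p hp).1
  have hsm : hh ⊠ nmul (N - 1) hh = zero := by simpa using delta_odot N hN one
  have hone : nmul N hh = one := delta_nmul N hN one
  refine ⟨by simp [hlen], ?_, ?_⟩
  · -- lsum of complements is x∗
    have hOrep : Orth (List.replicate l.length hh) := by
      obtain ⟨k, hk⟩ : ∃ k, N = k + 1 := ⟨N - 1, by omega⟩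
      apply Orth_replicate (k := k)
      · rw [hk] at hsm; simpa using hsm
      · omega
    have hO := rep_orth_pairs hN l hbl hOrep
    have horth : x ⊠ lsum (l.map (fun p => hh ⊠ p∗)) = zero := by
      have := (Orth_split hO).1
      rwa [hsum] at this
    have hsum2 : x ⊹ lsum (l.map (fun p => hh ⊠ p∗)) = one := by
      rw [← hsum]
      rw [rep_sum_pairs hN l hbl, hlen, hone]
    exact compl_unique hsum2 horth
  · intro q hq
    rw [List.mem_map] at hq
    obtain ⟨p, hp, rfl⟩ := hq
    obtain ⟨hple, hpcert⟩ := hb p hp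
    refine ⟨odot_le_left _ _, ?_⟩
    rw [starmul hN hple]
    exact hSst _ hpcert

lemma good_delta (hS0 : (zero : E) ∈ S) {N m : ℕ} (hN : 1 ≤ N) (hm : 1 ≤ m) {l : List E} {x : E}
    (h : GoodRep S N l x) :
    GoodRep S (N * m) (l.map (delta m) ++ List.replicate (N * m - N) zero)
      (delta m x) := by
  obtain ⟨hlen, hsum, hb⟩ := h
  have hsm : (delta N one : E) ⊠ nmul (N - 1) (delta N one) = zero := by
    simpa using delta_odot N hN one
  have hOl : Orth l :=
    Orth_bounded hsm (fun p hp => (hb p hp).1) (by rw [hlen])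
  have dsum : ∀ l' : List E, Orth l' → lsum (l'.map (delta m)) = delta m (lsum l') := by
    intro l'
    induction l' with
    | nil => intro _; simp [delta_zero hm]
    | cons a t ih =>
      intro hO
      rw [List.map_cons, lsum_cons, lsum_cons, ih hO.2,
        ← add_delta hm hO.1]
  refine ⟨?_, ?_, ?_⟩
  · simp [hlen]
    have : N ≤ N * m := Nat.le_mul_of_pos_right N (by omega)
    omega
  · rw [lsum_append, dsum l hOl, hsum, lsum_replicate, nmul_zero_eq, oplus_zero]
  · intro q hq
    rw [List.mem_append] at hq
    rcases hq with hq | hq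
    · rw [List.mem_map] at hq
      obtain ⟨p, hp, rfl⟩ := hq
      obtain ⟨hple, hpcert⟩ := hb p hp
      constructor
      · have h1 : le (delta m p) (delta m (delta N one)) := delta_mono hm hple
        rwa [delta_comp hm hN] at h1
      · have e : nmul (N * m) (delta m p) = nmul N p := by
          rw [nmul_mul, delta_nmul m hm]
        rw [e]; exact hpcert
    · rw [List.mem_replicate] at hq
      rw [hq.2]
      exact ⟨zero_le _, by rw [nmul_zero_eq]; exact hS0⟩

end Reps

end MVLemmas
namespace MVLemmas

open MVAlgebra DMVAlgebra

variable {E : Type} [DMVAlgebra E] {S : Set E}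

local infixl:65 " ⊹ " => MVAlgebra.oplus
local infixl:70 " ⊠ " => MVAlgebra.odot
local postfix:max "∗" => MVAlgebra.star

lemma oplus_absorb {X Y : E} (h : inf X Y∗ = zero) : Y ⊹ X = Y := by
  apply le_antisymm
  · show (Y ⊹ X) ⊠ Y∗ = zero
    rw [oplus_comm, inf1]
    exact h
  · exact le_oplus_left Y X

lemma nmul_lsum (k : ℕ) (l : List E) :
    nmul k (lsum l) = lsum (l.map (nmul k)) := by
  induction l with
  | nil => simp [nmul_zero_eq]
  | cons a t ih =>
    rw [List.map_cons, lsum_cons, lsum_cons, nmul_oplus, ih]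

lemma addp (hSop : ∀ u ∈ S, ∀ v ∈ S, u ⊹ v ∈ S) (hSst : ∀ u ∈ S, u∗ ∈ S)
    {N : ℕ} (hN2 : 2 ≤ N) :
    ∀ (l : List E) (c : E),
      (∀ p ∈ l, le p (delta N one) ∧ nmul N p ∈ S) →
      le c (delta N one) → nmul N c ∈ S → l.length ≤ N →
      ∃ (l' : List E) (c' : E), l'.length = l.length ∧
        (∀ p ∈ l', le p (delta N one) ∧ nmul N p ∈ S) ∧
        le c' (delta N one) ∧ nmul N c' ∈ S ∧ le c' c ∧
        lsum l' ⊹ c' = lsum l ⊹ c ∧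
        inf c' ((nmul l.length (delta N one)) ⊠ (lsum l')∗) = zero := by
  have hN1 : 1 ≤ N := by omega
  have hsm : (delta N one : E) ⊠ nmul (N - 1) (delta N one) = zero := by
    simpa using delta_odot N hN1 one
  have hone : nmul N (delta N one : E) = one := delta_nmul N hN1 one
  have hh : (delta N one : E) ⊠ (delta N one) = zero := by
    have h1 := small_mono hsm (show 1 ≤ N - 1 by omega)
    rwa [nmul_one_eq] at h1
  intro l
  induction l with
  | nil =>
    intro c _ hc hcS _
    refine ⟨[], c, rfl, by simp, hc, hcS, le_refl c, rfl, ?_⟩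
    show inf c (nmul 0 (delta N one) ⊠ (lsum ([] : List E))∗) = zero
    rw [show nmul 0 (delta N one : E) = zero from rfl, zero_odot, inf_zero]
  | cons a t ih =>
    intro c hb hc hcS hlen
    have ha : le a (delta N one) := (hb a (by simp)).1
    have haS : nmul N a ∈ S := (hb a (by simp)).2
    have hac : a ⊠ c = zero := by
      have h1 : le (a ⊠ c) ((delta N one) ⊠ (delta N one)) := odot_mono ha hc
      rw [hh] at h1
      exact le_zero h1
    -- cap and carry
    have hdec : inf (a ⊹ c) (delta N one) ⊹ ((a ⊹ c) ⊠ (delta N one)∗) = a ⊹ c :=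
      decomp (a ⊹ c) (delta N one)
    have hcap_le : le (inf (a ⊹ c) (delta N one)) (delta N one) := inf_le_right _ _
    have hc1_le_c : le ((a ⊹ c) ⊠ (delta N one)∗) c := by
      have h1 : le ((a ⊹ c) ⊠ (delta N one)∗) (((delta N one) ⊹ c) ⊠ (delta N one)∗) :=
        odot_mono_left _ (oplus_mono_left c ha)
      rw [oplus_comm (delta N one) c, inf1] at h1
      exact le_trans h1 (inf_le_left _ _)
    have hc1_le : le ((a ⊹ c) ⊠ (delta N one)∗) (delta N one) := le_trans hc1_le_c hc
    -- certificates
    have capcert : nmul N (inf (a ⊹ c) (delta N one)) = nmul N a ⊹ nmul N c := by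
      calc nmul N (inf (a ⊹ c) (delta N one))
          = inf (nmul N (a ⊹ c)) (nmul N (delta N one)) := meet_mult N _ _
      _ = inf (nmul N (a ⊹ c)) one := by rw [hone]
      _ = nmul N (a ⊹ c) := inf_one _
      _ = nmul N a ⊹ nmul N c := nmul_oplus N a c
    have capS : nmul N (inf (a ⊹ c) (delta N one)) ∈ S := by
      rw [capcert]; exact hSop _ haS _ hcS
    have c1cert : nmul N ((a ⊹ c) ⊠ (delta N one)∗) = nmul N a ⊠ nmul N c := by
      rw [swap hac hc]
      rw [← submul hN1 ha (odot_le_left (delta N one) c∗)]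
      rw [starmul hN1 hc, ss]
    have c1S : nmul N ((a ⊹ c) ⊠ (delta N one)∗) ∈ S := by
      rw [c1cert]
      exact hSodot hSop hSst _ haS _ hcS
    -- recurse
    obtain ⟨t', c', hlen', hb', hc'le, hc'S, hc'lec1, hsum', hinv'⟩ :=
      ih ((a ⊹ c) ⊠ (delta N one)∗) (fun p hp => hb p (by simp [hp])) hc1_le c1S
        (by simp at hlen; omega)
    refine ⟨inf (a ⊹ c) (delta N one) :: t', c', by simp [hlen'], ?_, hc'le, hc'S,
      le_trans hc'lec1 hc1_le_c, ?_, ?_⟩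
    · intro p hp
      rcases List.mem_cons.mp hp with hp | hp
      · subst hp; exact ⟨hcap_le, capS⟩
      · exact hb' p hp
    · rw [lsum_cons, lsum_cons]
      calc (inf (a ⊹ c) (delta N one) ⊹ lsum t') ⊹ c'
          = inf (a ⊹ c) (delta N one) ⊹ (lsum t' ⊹ c') := by ac_rfl
      _ = inf (a ⊹ c) (delta N one) ⊹ (lsum t ⊹ ((a ⊹ c) ⊠ (delta N one)∗)) := by
          rw [hsum']
      _ = (inf (a ⊹ c) (delta N one) ⊹ ((a ⊹ c) ⊠ (delta N one)∗)) ⊹ lsum t := by ac_rfl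
      _ = (a ⊹ c) ⊹ lsum t := by rw [hdec]
      _ = (a ⊹ lsum t) ⊹ c := by ac_rfl
    · -- the invariant
      have ht'b : ∀ p ∈ t', le p (delta N one) := fun p hp => (hb' p hp).1
      have hlsum_t' : le (lsum t') (nmul t.length (delta N one)) := by
        have h1 := lsum_le_nmul ht'b
        rwa [hlen'] at h1
      have hAB : (delta N one : E) ⊠ nmul t.length (delta N one) = zero := by
        apply small_mono hsm
        simp at hlen
        omega
      have me := merge_exact hcap_le hlsum_t' hAB
      have e1 : nmul (t.length + 1) (delta N one : E)
          = (delta N one) ⊹ nmul t.length (delta N one) := by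
        rw [nmul_succ]; exact oplus_comm _ _
      show inf c' (nmul (t.length + 1) (delta N one)
        ⊠ (lsum (inf (a ⊹ c) (delta N one) :: t'))∗) = zero
      rw [lsum_cons, e1, me]
      have iD2 : inf c' (nmul t.length (delta N one) ⊠ (lsum t')∗) = zero := hinv'
      have iD1 : inf c' ((delta N one) ⊠ (inf (a ⊹ c) (delta N one))∗) = zero := by
        have hD1eq : (delta N one : E) ⊠ (inf (a ⊹ c) (delta N one))∗
            = (delta N one) ⊠ (a ⊹ c)∗ := by
          rw [inf_comm]
          exact odot_inf_star (delta N one) (a ⊹ c)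
        have hdisj : inf ((a ⊹ c) ⊠ (delta N one)∗)
            ((delta N one) ⊠ (a ⊹ c)∗) = zero := disj0 (a ⊹ c) (delta N one)
        have h1 : le (inf c' ((delta N one) ⊠ (inf (a ⊹ c) (delta N one))∗))
            (inf ((a ⊹ c) ⊠ (delta N one)∗) ((delta N one) ⊠ (a ⊹ c)∗)) := by
          rw [hD1eq]
          exact inf_mono hc'lec1 (le_refl _)
        rw [hdisj] at h1
        exact le_zero h1
      have sub := subdist c' ((delta N one) ⊠ (inf (a ⊹ c) (delta N one))∗)
        (nmul t.length (delta N one) ⊠ (lsum t')∗)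
      rw [iD1, iD2, oplus_zero] at sub
      exact le_zero sub

lemma good_add_piece (hSop : ∀ u ∈ S, ∀ v ∈ S, u ⊹ v ∈ S)
    (hSst : ∀ u ∈ S, u∗ ∈ S) {N : ℕ} (hN2 : 2 ≤ N) {l : List E} {x p : E}
    (hrep : GoodRep S N l x) (hple : le p (delta N one)) (hpS : nmul N p ∈ S) :
    ∃ l', GoodRep S N l' (x ⊹ p) := by
  obtain ⟨hlen, hsum, hb⟩ := hrep
  obtain ⟨l', c', hlen', hb', _, _, _, hsum', hinv'⟩ :=
    addp hSop hSst hN2 l p hb hple hpS (by omega)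
  have hN1 : 1 ≤ N := by omega
  have hone : nmul N (delta N one : E) = one := delta_nmul N hN1 one
  rw [hlen, hone, one_odot] at hinv'
  have habs : lsum l' ⊹ c' = lsum l' := oplus_absorb hinv'
  rw [habs, hsum] at hsum'
  exact ⟨l', by rw [hlen', hlen], hsum', hb'⟩

lemma good_add_list (hSop : ∀ u ∈ S, ∀ v ∈ S, u ⊹ v ∈ S)
    (hSst : ∀ u ∈ S, u∗ ∈ S) {N : ℕ} (hN2 : 2 ≤ N) :
    ∀ (q : List E), (∀ p ∈ q, le p (delta N one) ∧ nmul N p ∈ S) →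
    ∀ (x : E) (l : List E), GoodRep S N l x →
      ∃ l', GoodRep S N l' (x ⊹ lsum q) := by
  intro q
  induction q with
  | nil =>
    intro _ x l h
    refine ⟨l, ?_⟩
    rw [lsum_nil, oplus_zero]
    exact h
  | cons p t ihq =>
    intro hbq x l h
    obtain ⟨l1, h1⟩ := good_add_piece hSop hSst hN2 h
      (hbq p (by simp)).1 (hbq p (by simp)).2
    obtain ⟨l2, h2⟩ := ihq (fun r hr => hbq r (by simp [hr])) (x ⊹ p) l1 h1
    refine ⟨l2, ?_⟩
    have e : (x ⊹ p) ⊹ lsum t = x ⊹ lsum (p :: t) := by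
      rw [lsum_cons]; ac_rfl
    rwa [e] at h2

lemma good_oplus (hSop : ∀ u ∈ S, ∀ v ∈ S, u ⊹ v ∈ S)
    (hSst : ∀ u ∈ S, u∗ ∈ S) {N₁ N₂ : ℕ} (hN₁ : 1 ≤ N₁) (hN₂ : 1 ≤ N₂)
    {l₁ l₂ : List E} {x y : E}
    (h1 : GoodRep S N₁ l₁ x) (h2 : GoodRep S N₂ l₂ y) :
    ∃ N l, 1 ≤ N ∧ GoodRep S N l (x ⊹ y) := by
  have r1 : GoodRep S (N₁ * (N₂ * 2)) (refineList (N₂ * 2) l₁) x :=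
    good_refine hN₁ (by omega) h1
  have r2 : GoodRep S (N₂ * (N₁ * 2)) (refineList (N₁ * 2) l₂) y :=
    good_refine hN₂ (by omega) h2
  have e : N₂ * (N₁ * 2) = N₁ * (N₂ * 2) := by ring
  rw [e] at r2
  have hN2' : 2 ≤ N₁ * (N₂ * 2) := by
    have h3 := Nat.mul_le_mul hN₁ (Nat.mul_le_mul hN₂ (Nat.le_refl 2))
    simpa using h3
  obtain ⟨l', h'⟩ := good_add_list hSop hSst hN2'
    (refineList (N₁ * 2) l₂) r2.2.2 x (refineList (N₂ * 2) l₁) r1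
  rw [r2.2.1] at h'
  exact ⟨N₁ * (N₂ * 2), l', by omega, h'⟩

lemma good_nmul_mem (hS0 : (zero : E) ∈ S)
    (hSop : ∀ u ∈ S, ∀ v ∈ S, u ⊹ v ∈ S) {N : ℕ} {l : List E} {x : E}
    (h : GoodRep S N l x) : nmul N x ∈ S := by
  obtain ⟨hlen, hsum, hb⟩ := h
  rw [← hsum, nmul_lsum]
  apply hSlsum hS0 hSop
  intro p hp
  rw [List.mem_map] at hp
  obtain ⟨q, hq, rfl⟩ := hp
  exact (hb q hq).2

end MVLemmas

namespace MVLemmas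

open MVAlgebra

lemma hom_nmul {A B : Type} [MVAlgebra A] [MVAlgebra B] {f : A → B}
    (hf : IsMVHom f) (k : ℕ) (x : A) : f (nmul k x) = nmul k (f x) := by
  induction k with
  | zero => exact hf.2.2
  | succ k ih =>
    show f (oplus (nmul k x) x) = oplus (nmul k (f x)) (f x)
    rw [hf.1, ih]

lemma hom_odot {A B : Type} [MVAlgebra A] [MVAlgebra B] {f : A → B}
    (hf : IsMVHom f) (x y : A) : f (odot x y) = odot (f x) (f y) := by
  show f (star (oplus (star x) (star y))) = star (oplus (star (f x)) (star (f y)))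
  rw [hf.2.1, hf.1, hf.2.1, hf.2.1]

end MVLemmas


/-- If `A` is a semisimple MV-algebra and `D` is a semisimple
DMV-algebra such that `A` is an MV-subalgebra of `D` (via the MV-embedding `i`) and
`D` is generated by `A` as a DMV-algebra, then `D` is isomorphic to the divisible hull
`A^d` of `A`. -/
theorem generated_dmv_is_divisible_hull (A D E : Type)
    [MVAlgebra A] [DMVAlgebra D] [DMVAlgebra E]
    (hA : IsSemisimple A) (hD : IsSemisimple D)
    (i : A → D) (hi : IsMVHom i) (hinj : Function.Injective i)
    (hgen : GeneratesDMV (Set.range i))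
    (ι : A → E) (hE : IsDivisibleHull A E ι) :
    ∃ g : E → D, IsDMVHom g ∧ Function.Bijective g := by
  classical
  open MVAlgebra DMVAlgebra MVLemmas in
  obtain ⟨hιMV, hιinj, hgenE, huniv⟩ := hE
  obtain ⟨g, ⟨hgDMV, hgext⟩, -⟩ := huniv D i hi
  have hgMV : IsMVHom g := hgDMV.1
  have hgδ := hgDMV.2
  refine ⟨g, hgDMV, ?_, ?_⟩
  · -- injective
    -- the set of elements of E with a truncated multiple in the range of ι
    set S : Set E := Set.range ι with hSdef
    have hS0 : (zero : E) ∈ S := ⟨MVAlgebra.zero, hιMV.2.2⟩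
    have hSop : ∀ u ∈ S, ∀ v ∈ S, oplus u v ∈ S := by
      rintro u ⟨a, rfl⟩ v ⟨b, rfl⟩
      exact ⟨MVAlgebra.oplus a b, hιMV.1 a b⟩
    have hSst : ∀ u ∈ S, star u ∈ S := by
      rintro u ⟨a, rfl⟩
      exact ⟨MVAlgebra.star a, hιMV.2.1 a⟩
    set T : Set E := {x | ∃ N l, 1 ≤ N ∧ GoodRep S N l x} with hTdef
    have hT : DMVClosed T := by
      refine ⟨⟨1, [zero], Nat.le_refl 1, good_zero hS0⟩, ?_, ?_, ?_⟩
      · rintro x ⟨N₁, l₁, hN₁, h1⟩ y ⟨N₂, l₂, hN₂, h2⟩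
        obtain ⟨N, l, hN, h⟩ := good_oplus hSop hSst hN₁ hN₂ h1 h2
        exact ⟨N, l, hN, h⟩
      · rintro x ⟨N, l, hN, h⟩
        exact ⟨N, _, hN, good_star hSst hN h⟩
      · rintro n hn x ⟨N, l, hN, h⟩
        refine ⟨N * n, _, ?_, good_delta hS0 hN hn h⟩
        exact Nat.one_le_iff_ne_zero.mpr (by positivity)
    have hsubT : Set.range ι ⊆ T := by
      rintro x ⟨a, rfl⟩
      exact ⟨1, [ι a], Nat.le_refl 1, good_mem ⟨a, rfl⟩⟩
    have claimC : ∀ x : E, ∃ N, 1 ≤ N ∧ nmul N x ∈ S := by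
      intro x
      obtain ⟨N, l, hN, hrep⟩ := hgenE T hT hsubT x
      exact ⟨N, hN, good_nmul_mem hS0 hSop hrep⟩
    have ker : ∀ x : E, g x = zero → x = zero := by
      intro x hx
      obtain ⟨N, hN, a, hax⟩ := claimC x
      have h1 : g (nmul N x) = nmul N (g x) := hom_nmul hgMV N x
      rw [hx, nmul_zero_eq] at h1
      have h2 : g (nmul N x) = i a := by rw [← hax]; exact hgext a
      have h3 : i a = i MVAlgebra.zero := by
        rw [hi.2.2, ← h2, h1]
      have h4 : a = MVAlgebra.zero := hinj h3
      have h5 : nmul N x = zero := by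
        rw [← hax, h4, hιMV.2.2]
      have h6 := nmul_mono_count x hN
      rw [nmul_one_eq, h5] at h6
      exact le_zero h6
    intro x y hxy
    have d1 : odot x (star y) = zero := by
      apply ker
      rw [hom_odot hgMV, hgMV.2.1, hxy]
      exact odot_star_self (g y)
    have d2 : odot y (star x) = zero := by
      apply ker
      rw [hom_odot hgMV, hgMV.2.1, ← hxy]
      exact odot_star_self (g x)
    exact le_antisymm d1 d2
  · -- surjective
    intro d
    have hTr : DMVClosed (Set.range g) := by
      refine ⟨⟨zero, hgMV.2.2⟩, ?_, ?_, ?_⟩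
      · rintro x ⟨u, rfl⟩ y ⟨v, rfl⟩
        exact ⟨oplus u v, hgMV.1 u v⟩
      · rintro x ⟨u, rfl⟩
        exact ⟨star u, hgMV.2.1 u⟩
      · rintro n hn x ⟨u, rfl⟩
        exact ⟨delta n u, hgδ n hn u⟩
    have hsub : Set.range i ⊆ Set.range g := by
      rintro d' ⟨a, rfl⟩
      exact ⟨ι a, hgext a⟩
    exact hgen (Set.range g) hTr hsub d
end

section
/- For every a ∈ DMV_n there exists b ∈ MV_n such that the ideal of DMV_n generated by a equals the ideal generated by b: explicitly, writing a = (1/k)a₁ ⊕ ⋯ ⊕ (1/k)a_k with a₁, …, a_k ∈ MV_n, the element b = a₁ ⊕ ⋯ ⊕ a_k satisfies (a] = (b]. Consequently every principal ideal of DMV_n has a generator lying in MV_n, and moreover a(x) = 0 iff b(x) = 0 for all x ∈ [0,1]^n. -/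
open scoped BigOperators

/-- The unit cube `[0,1]^n` in `ℝ^n`. -/
def Cube (n : ℕ) : Set (Fin n → ℝ) := {x | ∀ i, 0 ≤ x i ∧ x i ≤ 1}

/-- Elements of the free `n`-generated DMV-algebra `DMV_n`: continuous
`[0,1]`-valued functions on the cube that are piecewise linear with rational
coefficients, i.e. there are finitely many affine functions with rational
coefficients such that at every point `f` agrees with one of them. -/
def IsPWLQ {n : ℕ} (f : Cube n → ℝ) : Prop :=
  Continuous f ∧ (∀ x, 0 ≤ f x ∧ f x ≤ 1) ∧
  ∃ (k : ℕ) (c : Fin k → ℚ) (a : Fin k → Fin n → ℚ),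
    ∀ x : Cube n, ∃ j, f x = (c j : ℝ) + ∑ i, (a j i : ℝ) * (x : Fin n → ℝ) i

/-- Elements of the free `n`-generated MV-algebra `MV_n`: continuous
`[0,1]`-valued functions on the cube that are piecewise linear with integer
coefficients. -/
def IsPWLZ {n : ℕ} (f : Cube n → ℝ) : Prop :=
  Continuous f ∧ (∀ x, 0 ≤ f x ∧ f x ≤ 1) ∧
  ∃ (k : ℕ) (c : Fin k → ℤ) (a : Fin k → Fin n → ℤ),
    ∀ x : Cube n, ∃ j, f x = (c j : ℝ) + ∑ i, (a j i : ℝ) * (x : Fin n → ℝ) i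

/-- Ideal of `DMV_n`: a set of elements of `DMV_n` containing `0`, downward closed,
and closed under the pointwise truncated sum `f ⊕ g = min (f + g) 1`. -/
def IsIdealQ {n : ℕ} (J : Set (Cube n → ℝ)) : Prop :=
  (∀ f ∈ J, IsPWLQ f) ∧ ((fun _ => (0 : ℝ)) ∈ J) ∧
  (∀ f ∈ J, ∀ g : Cube n → ℝ, IsPWLQ g → (∀ x, g x ≤ f x) → g ∈ J) ∧
  (∀ f ∈ J, ∀ g ∈ J, (fun x => min (f x + g x) 1) ∈ J)

/-- `g` belongs to the ideal `(f]` of `DMV_n` generated by `f`. -/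
def memGen {n : ℕ} (f g : Cube n → ℝ) : Prop :=
  ∀ J : Set (Cube n → ℝ), IsIdealQ J → f ∈ J → g ∈ J

/-- Maximal ideal of `DMV_n`: a proper ideal maximal under inclusion. -/
def IsMaxIdealQ {n : ℕ} (M : Set (Cube n → ℝ)) : Prop :=
  IsIdealQ M ∧ (∃ g : Cube n → ℝ, IsPWLQ g ∧ g ∉ M) ∧
  ∀ J : Set (Cube n → ℝ), IsIdealQ J → (∃ g : Cube n → ℝ, IsPWLQ g ∧ g ∉ J) →
    M ⊆ J → J = M

lemma cast_den_dvd (q : ℚ) (k : ℕ) (h : q.den ∣ k) : ∃ z : ℤ, (z : ℚ) = (k : ℚ) * q := by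
  obtain ⟨t, ht⟩ := h
  refine ⟨q.num * t, ?_⟩
  have hden : (q.den : ℚ) ≠ 0 := by exact_mod_cast q.den_nz
  have hq : (q.num : ℚ) = q * q.den := by exact (Rat.mul_den_eq_num q).symm
  push_cast [ht, hq]
  ring

lemma sum_pieces {n k : ℕ} (a : Fin k → (Cube n → ℝ))
    (h : ∀ j, ∃ (m : ℕ) (c : Fin m → ℤ) (co : Fin m → Fin n → ℤ),
      ∀ x : Cube n, ∃ p, a j x = (c p : ℝ) + ∑ i, (co p i : ℝ) * (x : Fin n → ℝ) i) :
    ∃ (m : ℕ) (c : Fin m → ℤ) (co : Fin m → Fin n → ℤ),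
      ∀ x : Cube n, ∃ p, (∑ j, a j x) = (c p : ℝ) + ∑ i, (co p i : ℝ) * (x : Fin n → ℝ) i := by
  choose m c co hc using h
  let I := ∀ j, Fin (m j)
  let e : I ≃ Fin (Fintype.card I) := Fintype.equivFin I
  refine ⟨Fintype.card I, fun p => ∑ j, c j (e.symm p j), fun p i => ∑ j, co j (e.symm p j) i, ?_⟩
  intro x
  choose t ht using fun j => hc j x
  refine ⟨e t, ?_⟩
  simp only [Equiv.symm_apply_apply]
  rw [Finset.sum_congr rfl (fun j _ => ht j)]
  push_cast
  rw [Finset.sum_add_distrib, Finset.sum_comm]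
  simp [Finset.sum_mul]

lemma trunc_mem {n : ℕ} {J : Set (Cube n → ℝ)} (hJ : IsIdealQ J)
    {f : Cube n → ℝ} (hf : f ∈ J) (k : ℕ) :
    (fun x => min ((k : ℝ) * f x) 1) ∈ J := by
  have hb := (hJ.1 f hf).2.1
  induction k with
  | zero =>
    have : (fun x : Cube n => min ((0 : ℕ) * f x : ℝ) 1) = (fun _ => (0 : ℝ)) := by
      funext x; norm_num
    rw [this]; exact hJ.2.1
  | succ k ih =>
    have h2 := hJ.2.2.2 _ ih f hf
    have : (fun x : Cube n => min (min ((k : ℝ) * f x) 1 + f x) 1)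
        = (fun x => min (((k + 1 : ℕ) : ℝ) * f x) 1) := by
      funext x
      obtain ⟨h0, h1⟩ := hb x
      push_cast
      rcases le_or_gt ((k : ℝ) * f x) 1 with h | h
      · rw [min_eq_left h]; ring_nf
      · rw [min_eq_right h.le, min_eq_right (by linarith), min_eq_right (by nlinarith)]
    rw [this] at h2
    exact h2


/-- Every principal ideal of `DMV_n` has a generator in `MV_n`:
writing `a = (1/k)a₁ ⊕ ⋯ ⊕ (1/k)a_k` with `a₁, …, a_k ∈ MV_n`, the element
`b = a₁ ⊕ ⋯ ⊕ a_k ∈ MV_n` generates the same ideal, `(a] = (b]`; moreover `a` and `b`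
have the same zeros. Consequently, for every `a ∈ DMV_n` there is `b ∈ MV_n` with
`(a] = (b]` and the same zeroset. -/
theorem principal_ideal_mv_generator (n : ℕ) :
    (∀ k : ℕ, 1 ≤ k → ∀ a : Fin k → (Cube n → ℝ), (∀ j, IsPWLZ (a j)) →
      ∀ f : Cube n → ℝ, (∀ x, f x = ∑ j, a j x / (k : ℝ)) →
      ∀ b : Cube n → ℝ, (∀ x, b x = min (∑ j, a j x) 1) →
        IsPWLQ f ∧ IsPWLZ b ∧
        (∀ g : Cube n → ℝ, memGen f g ↔ memGen b g) ∧
        (∀ x, f x = 0 ↔ b x = 0)) ∧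
    (∀ f : Cube n → ℝ, IsPWLQ f →
      ∃ b : Cube n → ℝ, IsPWLZ b ∧
        (∀ g : Cube n → ℝ, memGen f g ↔ memGen b g) ∧
        (∀ x, f x = 0 ↔ b x = 0)) := by
  constructor
  · intro k hk a ha f hf b hb
    have hk0 : (k : ℝ) ≠ 0 := by
      have : (0:ℝ) < k := by exact_mod_cast hk.trans_lt' Nat.zero_lt_one
      linarith
    have hk1 : (1:ℝ) ≤ k := by exact_mod_cast hk
    -- basic facts about the sum s
    have hsnn : ∀ x : Cube n, 0 ≤ ∑ j, a j x :=
      fun x => Finset.sum_nonneg fun j _ => ((ha j).2.1 x).1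
    have hsle : ∀ x : Cube n, (∑ j, a j x) ≤ k := by
      intro x
      calc (∑ j, a j x) ≤ ∑ _j : Fin k, (1:ℝ) :=
            Finset.sum_le_sum fun j _ => ((ha j).2.1 x).2
        _ = k := by simp
    have hfs : ∀ x : Cube n, f x = (∑ j, a j x) / k := by
      intro x; rw [hf x, Finset.sum_div]
    obtain ⟨m, c, co, hpc⟩ := sum_pieces a (fun j => (ha j).2.2)
    have hfb : ∀ x, f x ≤ b x := by
      intro x
      rw [hfs x, hb x]
      refine le_min ?_ ?_
      · exact div_le_self (hsnn x) hk1
      · rw [div_le_one (by linarith)]; exact hsle x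
    have hfQ : IsPWLQ f := by
      refine ⟨?_, ?_, ?_⟩
      · have : f = fun x => ∑ j, a j x / k := funext hf
        rw [this]
        exact continuous_finset_sum _ fun j _ => ((ha j).1).div_const _
      · intro x
        rw [hfs x]
        constructor
        · exact div_nonneg (hsnn x) (by linarith)
        · rw [div_le_one (by linarith)]; exact hsle x
      · refine ⟨m, fun p => (c p : ℚ) / k, fun p i => (co p i : ℚ) / k, ?_⟩
        intro x
        obtain ⟨p, hp⟩ := hpc x
        refine ⟨p, ?_⟩
        rw [hfs x, hp]
        push_cast
        rw [add_div, Finset.sum_div]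
        congr 1
        refine Finset.sum_congr rfl fun i _ => by ring
    have hbZ : IsPWLZ b := by
      refine ⟨?_, ?_, ?_⟩
      · have : b = fun x => min (∑ j, a j x) 1 := funext hb
        rw [this]
        exact (continuous_finset_sum _ fun j _ => (ha j).1).min continuous_const
      · intro x
        rw [hb x]
        exact ⟨le_min (hsnn x) zero_le_one, min_le_right _ _⟩
      · refine ⟨m + 1,
          (fun p => if h : (p : ℕ) < m then c ⟨p, h⟩ else 1),
          (fun p i => if h : (p : ℕ) < m then co ⟨p, h⟩ i else 0), ?_⟩
        intro x
        rcases le_or_gt 1 (∑ j, a j x) with h | h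
        · refine ⟨⟨m, Nat.lt_succ_self m⟩, ?_⟩
          rw [hb x, min_eq_right h]
          simp
        · obtain ⟨p, hp⟩ := hpc x
          refine ⟨⟨(p : ℕ), p.2.trans (Nat.lt_succ_self m)⟩, ?_⟩
          rw [hb x, min_eq_left h.le, hp]
          simp [p.2]
    refine ⟨hfQ, hbZ, ?_, ?_⟩
    · intro g
      constructor
      · intro hg J hJ hbJ
        exact hg J hJ (hJ.2.2.1 b hbJ f hfQ hfb)
      · intro hg J hJ hfJ
        refine hg J hJ ?_
        have h2 := trunc_mem hJ hfJ k
        have : (fun x : Cube n => min ((k:ℝ) * f x) 1) = b := by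
          funext x
          rw [hfs x, hb x, mul_div_cancel₀ _ hk0]
        rw [this] at h2
        exact h2
    · intro x
      rw [hfs x, hb x, div_eq_zero_iff]
      constructor
      · rintro (h | h)
        · rw [h]; simp
        · exact absurd h hk0
      · intro h
        left
        rcases min_eq_iff.mp h with ⟨h1, _⟩ | ⟨h1, _⟩
        · exact h1
        · norm_num at h1
  · intro f hf
    obtain ⟨hcont, hbd, m, c, a, hp⟩ := hf
    set k : ℕ := ∏ j : Fin m, ((c j).den * ∏ i : Fin n, (a j i).den) with hkdef
    have hkpos : 0 < k := by
      refine Finset.prod_pos fun j _ => ?_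
      exact Nat.mul_pos (c j).pos (Finset.prod_pos fun i _ => (a j i).pos)
    have hk1 : (1:ℝ) ≤ k := by exact_mod_cast hkpos
    have hk0 : (k:ℝ) ≠ 0 := by linarith
    have hdc : ∀ j, (c j).den ∣ k :=
      fun j => dvd_trans (dvd_mul_right _ _) (Finset.dvd_prod_of_mem _ (Finset.mem_univ j))
    have hda : ∀ j i, (a j i).den ∣ k := fun j i =>
      dvd_trans (dvd_mul_of_dvd_right (Finset.dvd_prod_of_mem _ (Finset.mem_univ i)) _)
        (Finset.dvd_prod_of_mem _ (Finset.mem_univ j))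
    choose zc hzc using fun j => cast_den_dvd (c j) k (hdc j)
    choose za hza using fun j i => cast_den_dvd (a j i) k (hda j i)
    have hzc' : ∀ j, (zc j : ℝ) = (k:ℝ) * (c j : ℝ) := fun j => by exact_mod_cast hzc j
    have hza' : ∀ j i, (za j i : ℝ) = (k:ℝ) * (a j i : ℝ) := fun j i => by exact_mod_cast hza j i
    refine ⟨fun x => min ((k:ℝ) * f x) 1, ⟨?_, ?_, ?_⟩, ?_, ?_⟩
    · exact (continuous_const.mul hcont).min continuous_const
    · intro x
      exact ⟨le_min (mul_nonneg (by linarith) (hbd x).1) zero_le_one, min_le_right _ _⟩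
    · refine ⟨m + 1,
        (fun p => if h : (p : ℕ) < m then zc ⟨p, h⟩ else 1),
        (fun p i => if h : (p : ℕ) < m then za ⟨p, h⟩ i else 0), ?_⟩
      intro x
      rcases le_or_gt 1 ((k:ℝ) * f x) with h | h
      · refine ⟨⟨m, Nat.lt_succ_self m⟩, ?_⟩
        beta_reduce
        rw [min_eq_right h]
        simp
      · obtain ⟨j, hj⟩ := hp x
        refine ⟨⟨(j : ℕ), j.2.trans (Nat.lt_succ_self m)⟩, ?_⟩
        beta_reduce
        rw [min_eq_left h.le, hj]
        simp only [j.2, dif_pos, Fin.eta]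
        rw [mul_add, Finset.mul_sum]
        congr 1
        · exact (hzc' j).symm
        · refine Finset.sum_congr rfl fun i _ => ?_
          rw [hza' j i]; ring
    · intro g
      constructor
      · intro hg J hJ hbJ
        refine hg J hJ (hJ.2.2.1 _ hbJ f ⟨hcont, hbd, m, c, a, hp⟩ ?_)
        intro x
        exact le_min (le_mul_of_one_le_left (hbd x).1 hk1) (hbd x).2
      · intro hg J hJ hfJ
        exact hg J hJ (trunc_mem hJ hfJ k)
    · intro x
      constructor
      · intro h; simp [h]
      · intro h
        rcases min_eq_iff.mp h with ⟨h1, _⟩ | ⟨h1, _⟩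
        · rcases mul_eq_zero.mp h1 with h2 | h2
          · exact absurd h2 hk0
          · exact h2
        · norm_num at h1
end

section
/- For f, g ∈ DMV_n, g belongs to the ideal (f] of DMV_n generated by f if and only if V(f) ⊆ V(g), i.e., every zero of f in [0,1]^n is a zero of g. -/
open scoped BigOperators

/-- Axis-parallel box. -/
def Box {n : ℕ} (l u : Fin n → ℝ) : Set (Fin n → ℝ) := {x | ∀ i, l i ≤ x i ∧ x i ≤ u i}

lemma Box_eq_pi {n : ℕ} (l u : Fin n → ℝ) :
    Box l u = Set.pi Set.univ (fun i => Set.Icc (l i) (u i)) := by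
  ext x; simp only [Box, Set.mem_setOf_eq, Set.mem_pi, Set.mem_univ, Set.mem_Icc, forall_true_left, true_implies]

lemma isCompact_Box {n : ℕ} (l u : Fin n → ℝ) : IsCompact (Box l u) := by
  rw [Box_eq_pi]; exact isCompact_univ_pi fun i => isCompact_Icc

lemma convex_Box {n : ℕ} (l u : Fin n → ℝ) : Convex ℝ (Box l u) := by
  rw [Box_eq_pi]; exact convex_pi fun i _ => convex_Icc _ _

lemma affine_split {n : ℕ} (c : ℝ) (a x y : Fin n → ℝ) :
    c + ∑ i, a i * y i = (c + ∑ i, a i * x i) + ∑ i, a i * (y i - x i) := by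
  have : ∑ i, a i * (y i - x i) = ∑ i, a i * y i - ∑ i, a i * x i := by
    rw [← Finset.sum_sub_distrib]; exact Finset.sum_congr rfl fun i _ => by ring
  rw [this]; ring

lemma abs_linear_le {n : ℕ} (a v : Fin n → ℝ) :
    |∑ i, a i * v i| ≤ (∑ i, |a i|) * ‖v‖ := by
  calc |∑ i, a i * v i| ≤ ∑ i, |a i * v i| := Finset.abs_sum_le_sum_abs _ _
    _ ≤ ∑ i, |a i| * ‖v‖ := by
        refine Finset.sum_le_sum fun i _ => ?_
        rw [abs_mul]
        exact mul_le_mul_of_nonneg_left ((Real.norm_eq_abs _ ▸ norm_le_pi_norm v i)) (abs_nonneg _)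
    _ = (∑ i, |a i|) * ‖v‖ := by rw [Finset.sum_mul]

/-- A continuous function on `uIcc a b` taking values in a finite set is constant. -/
lemma eq_of_finite_values {a b : ℝ} {ψ : ℝ → ℝ} (S : Finset ℝ)
    (hc : ContinuousOn ψ (Set.uIcc a b)) (hv : ∀ s ∈ Set.uIcc a b, ψ s ∈ S) :
    ψ a = ψ b := by
  by_contra hne
  have hlt : min (ψ a) (ψ b) < max (ψ a) (ψ b) := by
    rcases lt_or_gt_of_ne hne with h | h
    · simpa [min_eq_left h.le, max_eq_right h.le] using h
    · simpa [min_eq_right h.le, max_eq_left h.le] using h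
  obtain ⟨c, hc1, hc2⟩ : ∃ c, c ∈ Set.Ioo (min (ψ a) (ψ b)) (max (ψ a) (ψ b)) ∧ c ∉ (S : Set ℝ) := by
    have : (Set.Ioo (min (ψ a) (ψ b)) (max (ψ a) (ψ b)) \ (S : Set ℝ)).Nonempty := by
      refine Set.Infinite.nonempty ?_
      exact Set.Infinite.diff (Set.Ioo_infinite hlt) (S.finite_toSet)
    exact ⟨this.choose, this.choose_spec.1, this.choose_spec.2⟩
  have hmem : c ∈ Set.uIcc (ψ a) (ψ b) := by
    rw [Set.uIcc_eq_union]
    rcases le_total (ψ a) (ψ b) with h | h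
    · left; exact ⟨by simpa [min_eq_left h] using hc1.1.le, by simpa [max_eq_right h] using hc1.2.le⟩
    · right; exact ⟨by simpa [min_eq_right h] using hc1.1.le, by simpa [max_eq_left h] using hc1.2.le⟩
  obtain ⟨s, hs, hsc⟩ := intermediate_value_uIcc hc hmem
  exact hc2 (by rw [← hsc]; exact hv s hs)

section radial
variable {n : ℕ} {K : Set (Fin n → ℝ)} {f : (Fin n → ℝ) → ℝ}
  {k : ℕ} {c : Fin k → ℝ} {a : Fin k → Fin n → ℝ} {x₀ : Fin n → ℝ} {δ r : ℝ}

/-- Radial homogeneity of a piecewise-affine selection near a zero. -/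
lemma radial_homog (hK : Convex ℝ K)
    (hfc : ContinuousOn f K) (hf0 : ∀ x ∈ K, 0 ≤ f x)
    (hsel : ∀ x ∈ K, ∃ j, f x = c j + ∑ i, a j i * x i)
    (hx₀ : x₀ ∈ K) (hfx₀ : f x₀ = 0)
    (hδ : 0 < δ)
    (hδle : ∀ j, (c j + ∑ i, a j i * x₀ i) ≠ 0 → δ ≤ |c j + ∑ i, a j i * x₀ i|)
    (hrs : ∀ j (z : Fin n → ℝ), z ∈ K → ‖z - x₀‖ ≤ r → |∑ i, a j i * (z i - x₀ i)| ≤ δ / 4) :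
    ∀ z ∈ K, ‖z - x₀‖ ≤ r → ∀ t ∈ Set.Icc (0:ℝ) 1, f (x₀ + t • (z - x₀)) = t * f z := by
  intro z hz hzr
  -- the segment
  set y : ℝ → (Fin n → ℝ) := fun t => x₀ + t • (z - x₀) with hy
  have hyK : ∀ t ∈ Set.Icc (0:ℝ) 1, y t ∈ K := by
    intro t ht
    have := hK hx₀ hz (by linarith [ht.1, ht.2] : (0:ℝ) ≤ 1 - t) ht.1 (by ring)
    convert this using 1
    simp [y]
    module
  have hycont : Continuous y := by
    apply continuous_const.add
    exact (continuous_id.smul continuous_const)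
  have hcont : ContinuousOn (fun t => f (y t)) (Set.Icc (0:ℝ) 1) :=
    hfc.comp hycont.continuousOn hyK
  -- coordinates of y t - x₀
  have hyco : ∀ t (i : Fin n), y t i - x₀ i = t * (z i - x₀ i) := by
    intro t i; simp [y]
  -- Step A: if f (y t) < δ/2 then the active piece vanishes at x₀
  have stepA : ∀ t ∈ Set.Icc (0:ℝ) 1, f (y t) < δ / 2 →
      ∃ j, (c j + ∑ i, a j i * x₀ i) = 0 ∧ f (y t) = t * ∑ i, a j i * (z i - x₀ i) := by
    intro t ht hlt
    obtain ⟨j, hj⟩ := hsel (y t) (hyK t ht)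
    have hsplit : f (y t) = (c j + ∑ i, a j i * x₀ i) + ∑ i, a j i * (y t i - x₀ i) := by
      rw [hj]; exact affine_split _ _ _ _
    have hlin : ∑ i, a j i * (y t i - x₀ i) = t * ∑ i, a j i * (z i - x₀ i) := by
      rw [Finset.mul_sum]; exact Finset.sum_congr rfl fun i _ => by rw [hyco]; ring
    have hlinb : |∑ i, a j i * (y t i - x₀ i)| ≤ δ / 4 := by
      rw [hlin, abs_mul]
      calc |t| * |∑ i, a j i * (z i - x₀ i)| ≤ 1 * (δ/4) := by
            apply mul_le_mul (by rw [abs_of_nonneg ht.1]; exact ht.2)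
              (hrs j z hz hzr) (abs_nonneg _) zero_le_one
        _ = δ/4 := one_mul _
    have hjz : (c j + ∑ i, a j i * x₀ i) = 0 := by
      by_contra hne
      have h1 : δ ≤ |c j + ∑ i, a j i * x₀ i| := hδle j hne
      have h2 : |c j + ∑ i, a j i * x₀ i| ≤ |f (y t)| + δ/4 := by
        have : c j + ∑ i, a j i * x₀ i = f (y t) - ∑ i, a j i * (y t i - x₀ i) := by
          rw [hsplit]; ring
        rw [this]
        calc |f (y t) - ∑ i, a j i * (y t i - x₀ i)| ≤ |f (y t)| + |∑ i, a j i * (y t i - x₀ i)| :=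
              abs_sub _ _
          _ ≤ |f (y t)| + δ/4 := by linarith
      have h3 : |f (y t)| < δ/2 := by
        rw [abs_of_nonneg (hf0 _ (hyK t ht))]; exact hlt
      linarith
    refine ⟨j, hjz, ?_⟩
    rw [hsplit, hjz, hlin]; ring
  -- Step B: f (y t) < δ/2 for all t ∈ [0,1]
  have stepB : ∀ t ∈ Set.Icc (0:ℝ) 1, f (y t) < δ / 2 := by
    by_contra hcon
    push_neg at hcon
    obtain ⟨t₁, ht₁, ht₁ge⟩ := hcon
    set C : Set ℝ := Set.Icc (0:ℝ) 1 ∩ (fun t => f (y t)) ⁻¹' Set.Ici (δ/2) with hC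
    have hCne : C.Nonempty := ⟨t₁, ht₁, ht₁ge⟩
    have hCclosed : IsClosed C := hcont.preimage_isClosed_of_isClosed isClosed_Icc isClosed_Ici
    have hCcomp : IsCompact C := (isCompact_Icc).of_isClosed_subset hCclosed Set.inter_subset_left
    obtain ⟨t₀, ht₀C, ht₀least⟩ := hCcomp.exists_isLeast hCne
    have ht₀I : t₀ ∈ Set.Icc (0:ℝ) 1 := ht₀C.1
    have ht₀ge : δ/2 ≤ f (y t₀) := ht₀C.2
    have ht₀pos : 0 < t₀ := by
      rcases ht₀I.1.lt_or_eq with h | h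
      · exact h
      · exfalso
        have : f (y 0) = 0 := by simp [y, hfx₀]
        rw [← h] at ht₀ge; rw [this] at ht₀ge; linarith
    -- on [0, t₀), f(y t) ≤ δ/4
    have hsmall : ∀ t ∈ Set.Ico (0:ℝ) t₀, f (y t) ≤ δ / 4 := by
      intro t ht
      have htI : t ∈ Set.Icc (0:ℝ) 1 := ⟨ht.1, ht.2.le.trans ht₀I.2⟩
      have hlt : f (y t) < δ/2 := by
        by_contra h
        exact absurd (ht₀least ⟨htI, le_of_not_gt h⟩) (not_le.mpr ht.2)
      obtain ⟨j, _, hfeq⟩ := stepA t htI hlt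
      rw [hfeq]
      calc t * ∑ i, a j i * (z i - x₀ i) ≤ |t * ∑ i, a j i * (z i - x₀ i)| := le_abs_self _
        _ = |t| * |∑ i, a j i * (z i - x₀ i)| := abs_mul _ _
        _ ≤ 1 * (δ/4) := mul_le_mul (by rw [abs_of_nonneg htI.1]; exact htI.2)
              (hrs j z hz hzr) (abs_nonneg _) zero_le_one
        _ = δ/4 := one_mul _
    -- take limit t → t₀⁻
    have hNe : (nhdsWithin t₀ (Set.Ioo 0 t₀)).NeBot := by
      rw [← mem_closure_iff_nhdsWithin_neBot, closure_Ioo (ne_of_lt ht₀pos)]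
      exact ⟨ht₀pos.le, le_refl _⟩
    have htend : Filter.Tendsto (fun t => f (y t)) (nhdsWithin t₀ (Set.Ioo 0 t₀)) (nhds (f (y t₀))) := by
      have h1 : Set.Ioo (0:ℝ) t₀ ⊆ Set.Icc 0 1 := fun s hs => ⟨hs.1.le, hs.2.le.trans ht₀I.2⟩
      exact (hcont t₀ ht₀I).mono_left (nhdsWithin_mono _ h1)
    have hlim : f (y t₀) ≤ δ/4 := by
      refine le_of_tendsto htend ?_
      exact eventually_nhdsWithin_of_forall (fun s hs => hsmall s ⟨hs.1.le, hs.2⟩)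
    linarith
  -- Step C : t ↦ f (y t) / t is constant on (0,1]
  have hval : ∀ t ∈ Set.Icc (0:ℝ) 1, ∃ j, f (y t) = t * ∑ i, a j i * (z i - x₀ i) := by
    intro t ht
    obtain ⟨j, _, h⟩ := stepA t ht (stepB t ht)
    exact ⟨j, h⟩
  intro t ht
  rcases eq_or_lt_of_le ht.1 with h0 | h0
  · -- t = 0
    rw [← h0]; simp [y, hfx₀]
  · -- 0 < t ≤ 1 : compare ψ s = f (y s) / s at s = t and s = 1
    set ψ : ℝ → ℝ := fun s => f (y s) / s with hψ
    have huIcc : Set.uIcc t 1 = Set.Icc t 1 := Set.uIcc_of_le ht.2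
    have hsub : Set.Icc t 1 ⊆ Set.Icc (0:ℝ) 1 := fun s hs => ⟨h0.le.trans hs.1, hs.2⟩
    have hψcont : ContinuousOn ψ (Set.uIcc t 1) := by
      rw [huIcc]
      apply ContinuousOn.div (hcont.mono hsub) continuousOn_id
      intro s hs; exact ne_of_gt (lt_of_lt_of_le h0 hs.1)
    have hψval : ∀ s ∈ Set.uIcc t 1, ψ s ∈ Finset.image (fun j => ∑ i, a j i * (z i - x₀ i)) Finset.univ := by
      rw [huIcc]
      intro s hs
      obtain ⟨j, hj⟩ := hval s (hsub hs)
      have hs0 : s ≠ 0 := ne_of_gt (lt_of_lt_of_le h0 hs.1)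
      refine Finset.mem_image.mpr ⟨j, Finset.mem_univ _, ?_⟩
      show (∑ i, a j i * (z i - x₀ i)) = f (y s) / s
      rw [hj]
      field_simp
    have := eq_of_finite_values _ hψcont hψval
    have ht0 : t ≠ 0 := ne_of_gt h0
    have hy1 : y 1 = z := by simp [y]
    rw [hψ] at this
    simp only [hy1, div_one] at this
    have : f (y t) = t * f z := by
      field_simp at this
      rw [this]
    exact this
end radial

open Classical in
/-- A ray from an interior-ish point through another point of a box exits through a face. -/
lemma exists_exit {n : ℕ} {l u x₀ z : Fin n → ℝ} (hx₀ : x₀ ∈ Box l u) (hz : z ∈ Box l u)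
    (hne : z ≠ x₀) :
    ∃ T : ℝ, 1 ≤ T ∧ x₀ + T • (z - x₀) ∈ Box l u ∧
      ∃ i, (x₀ + T • (z - x₀)) i = l i ∨ (x₀ + T • (z - x₀)) i = u i := by
  set D : Finset (Fin n) := Finset.univ.filter (fun i => z i ≠ x₀ i) with hD
  have hDne : D.Nonempty := by
    by_contra h
    rw [Finset.not_nonempty_iff_eq_empty] at h
    apply hne; funext i
    by_contra hne2
    have : i ∈ D := by rw [hD]; simp [hne2]
    rw [h] at this; exact absurd this (Finset.notMem_empty i)
  set ratio : Fin n → ℝ := fun i =>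
    if x₀ i < z i then (u i - x₀ i) / (z i - x₀ i) else (l i - x₀ i) / (z i - x₀ i) with hratio
  have hratio1 : ∀ i ∈ D, 1 ≤ ratio i := by
    intro i hi
    have hzi : z i ≠ x₀ i := by rw [hD] at hi; simpa using hi
    rcases lt_or_gt_of_ne hzi with h | h
    · -- z i < x₀ i
      have : ¬ x₀ i < z i := not_lt.mpr h.le
      rw [hratio]; simp only [this, if_false]
      rw [le_div_iff_of_neg (by linarith : z i - x₀ i < 0)]
      have := (hz i).1
      nlinarith
    · have : x₀ i < z i := h
      rw [hratio]; simp only [this, if_true]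
      rw [le_div_iff₀ (by linarith : 0 < z i - x₀ i)]
      have := (hz i).2
      nlinarith
  set T : ℝ := D.inf' hDne ratio with hT
  have hT1 : 1 ≤ T := Finset.le_inf' hDne ratio hratio1
  have hTle : ∀ i ∈ D, T ≤ ratio i := fun i hi => Finset.inf'_le ratio hi
  refine ⟨T, hT1, ?_, ?_⟩
  · intro i
    simp only [Pi.add_apply, Pi.smul_apply, Pi.sub_apply, smul_eq_mul]
    by_cases hi : z i = x₀ i
    · rw [hi]; simpa using hx₀ i
    · have hiD : i ∈ D := by rw [hD]; simp [hi]
      rcases lt_or_gt_of_ne hi with h | h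
      · -- z i < x₀ i : w i decreasing in T; lower bound from ratio, upper from T ≥ 1
        have hneg : z i - x₀ i < 0 := by linarith
        constructor
        · have h1 : T ≤ (l i - x₀ i) / (z i - x₀ i) := by
            have := hTle i hiD
            simp only [hratio, not_lt.mpr h.le, if_false] at this
            exact this
          have h2 : T * (z i - x₀ i) ≥ (l i - x₀ i) / (z i - x₀ i) * (z i - x₀ i) :=
            mul_le_mul_of_nonpos_right h1 hneg.le
          rw [div_mul_cancel₀ _ (ne_of_lt hneg)] at h2
          linarith
        · have h2 : T * (z i - x₀ i) ≤ 1 * (z i - x₀ i) := mul_le_mul_of_nonpos_right hT1 hneg.le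
          have := (hz i).2
          nlinarith
      · have hpos : 0 < z i - x₀ i := by linarith
        constructor
        · have h2 : 1 * (z i - x₀ i) ≤ T * (z i - x₀ i) := mul_le_mul_of_nonneg_right hT1 hpos.le
          have := (hz i).1
          nlinarith
        · have h1 : T ≤ (u i - x₀ i) / (z i - x₀ i) := by
            have := hTle i hiD
            simp only [hratio, h, if_true] at this
            exact this
          have h2 : T * (z i - x₀ i) ≤ (u i - x₀ i) / (z i - x₀ i) * (z i - x₀ i) :=
            mul_le_mul_of_nonneg_right h1 hpos.le
          rw [div_mul_cancel₀ _ (ne_of_gt hpos)] at h2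
          linarith
  · obtain ⟨i₀, hi₀D, hi₀⟩ := Finset.exists_mem_eq_inf' hDne ratio
    have hzi : z i₀ ≠ x₀ i₀ := by rw [hD] at hi₀D; simpa using hi₀D
    refine ⟨i₀, ?_⟩
    simp only [Pi.add_apply, Pi.smul_apply, Pi.sub_apply, smul_eq_mul]
    rcases lt_or_gt_of_ne hzi with h | h
    · left
      rw [← hT] at hi₀
      rw [hi₀]
      simp only [hratio, not_lt.mpr h.le, if_false]
      rw [div_mul_cancel₀ _ (by intro hh; apply hzi; linarith : z i₀ - x₀ i₀ ≠ 0)]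
      ring
    · right
      rw [← hT] at hi₀
      rw [hi₀]
      simp only [hratio, h, if_true]
      rw [div_mul_cancel₀ _ (by intro hh; apply hzi; linarith : z i₀ - x₀ i₀ ≠ 0)]
      ring


theorem key : ∀ (n : ℕ) (l u : Fin n → ℝ) (f g : (Fin n → ℝ) → ℝ),
    ContinuousOn f (Box l u) → ContinuousOn g (Box l u) →
    (∀ x ∈ Box l u, 0 ≤ f x) → (∀ x ∈ Box l u, 0 ≤ g x) →
    (∃ (k : ℕ) (c : Fin k → ℝ) (a : Fin k → Fin n → ℝ),
      ∀ x ∈ Box l u, ∃ j, f x = c j + ∑ i, a j i * x i) →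
    (∃ (k : ℕ) (c : Fin k → ℝ) (a : Fin k → Fin n → ℝ),
      ∀ x ∈ Box l u, ∃ j, g x = c j + ∑ i, a j i * x i) →
    (∀ x ∈ Box l u, f x = 0 → g x = 0) →
    ∃ m : ℝ, 0 ≤ m ∧ ∀ x ∈ Box l u, g x ≤ m * f x := by
  intro n
  induction n with
  | zero =>
    intro l u f g _ _ hf0 hg0 _ _ hzero
    rcases Set.eq_empty_or_nonempty (Box l u) with hemp | ⟨x₀, hx₀⟩
    · exact ⟨0, le_refl 0, fun x hx => by rw [hemp] at hx; cases hx⟩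
    have hall : ∀ x : Fin 0 → ℝ, x = x₀ := fun x => funext fun i => i.elim0
    by_cases hf : f x₀ = 0
    · refine ⟨0, le_refl 0, fun x hx => ?_⟩
      rw [hall x, hzero x₀ hx₀ hf, hf]; norm_num
    · have hpos : 0 < f x₀ := lt_of_le_of_ne (hf0 _ hx₀) (Ne.symm hf)
      refine ⟨g x₀ / f x₀, div_nonneg (hg0 _ hx₀) hpos.le, fun x hx => ?_⟩
      rw [hall x, div_mul_cancel₀ _ (ne_of_gt hpos)]
  | succ n IH =>
    intro l u f g hfc hgc hf0 hg0 hself hselg hzero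
    obtain ⟨k1, c1, a1, hsel1⟩ := hself
    obtain ⟨k2, c2, a2, hsel2⟩ := hselg
    set K := Box l u with hK
    -- local bound at every point
    have loc : ∀ x₀ : Fin (n+1) → ℝ, ∃ r m : ℝ, 0 < r ∧ 0 ≤ m ∧
        (x₀ ∈ K → ∀ z ∈ K, dist z x₀ < r → g z ≤ m * f z) := by
      intro x₀
      by_cases hx₀ : x₀ ∈ K
      swap
      · exact ⟨1, 0, one_pos, le_refl 0, fun h => absurd h hx₀⟩
      by_cases hf : f x₀ = 0
      · -- hard case : x₀ is a zero of f
        have hgx₀ : g x₀ = 0 := hzero _ hx₀ hf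
        set q1 : Fin k1 → ℝ := fun j => c1 j + ∑ i, a1 j i * x₀ i with hq1
        set q2 : Fin k2 → ℝ := fun j => c2 j + ∑ i, a2 j i * x₀ i with hq2
        set S : Finset ℝ := insert 1
          (((Finset.univ.filter fun j => q1 j ≠ 0).image fun j => |q1 j|) ∪
           ((Finset.univ.filter fun j => q2 j ≠ 0).image fun j => |q2 j|)) with hS
        have hSne : S.Nonempty := ⟨1, Finset.mem_insert_self _ _⟩
        set δ : ℝ := S.min' hSne with hδdef
        have hδpos : 0 < δ := by
          have hmem := S.min'_mem hSne
          rw [← hδdef, hS] at hmem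
          rcases Finset.mem_insert.mp hmem with h | h
          · rw [h]; norm_num
          · rcases Finset.mem_union.mp h with h | h <;>
            · obtain ⟨j, hj, hjeq⟩ := Finset.mem_image.mp h
              rw [← hjeq]
              exact abs_pos.mpr (by simpa using (Finset.mem_filter.mp hj).2)
        have hδle1 : ∀ j, q1 j ≠ 0 → δ ≤ |q1 j| := by
          intro j hj
          apply Finset.min'_le
          rw [hS]
          exact Finset.mem_insert_of_mem
            (Finset.mem_union_left _ (Finset.mem_image.mpr ⟨j, by simp [hj], rfl⟩))
        have hδle2 : ∀ j, q2 j ≠ 0 → δ ≤ |q2 j| := by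
          intro j hj
          apply Finset.min'_le
          rw [hS]
          exact Finset.mem_insert_of_mem
            (Finset.mem_union_right _ (Finset.mem_image.mpr ⟨j, by simp [hj], rfl⟩))
        set C : ℝ := 1 + (∑ j, ∑ i, |a1 j i|) + (∑ j, ∑ i, |a2 j i|) with hCdef
        have hs1 : (0:ℝ) ≤ ∑ j, ∑ i, |a1 j i| :=
          Finset.sum_nonneg fun j _ => Finset.sum_nonneg fun i _ => abs_nonneg _
        have hs2 : (0:ℝ) ≤ ∑ j, ∑ i, |a2 j i| :=
          Finset.sum_nonneg fun j _ => Finset.sum_nonneg fun i _ => abs_nonneg _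
        have hCpos : 0 < C := by rw [hCdef]; linarith
        set r : ℝ := δ / (4 * C) with hrdef
        have hrpos : 0 < r := div_pos hδpos (by linarith)
        have hCr : C * r = δ / 4 := by
          rw [hrdef]; field_simp
        have hCa1 : ∀ j, (∑ i, |a1 j i|) ≤ C := by
          intro j
          have h := Finset.single_le_sum (f := fun j => ∑ i, |a1 j i|)
            (fun j _ => Finset.sum_nonneg fun i _ => abs_nonneg _) (Finset.mem_univ j)
          rw [hCdef]; linarith
        have hCa2 : ∀ j, (∑ i, |a2 j i|) ≤ C := by
          intro j
          have h := Finset.single_le_sum (f := fun j => ∑ i, |a2 j i|)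
            (fun j _ => Finset.sum_nonneg fun i _ => abs_nonneg _) (Finset.mem_univ j)
          rw [hCdef]; linarith
        have hrs1 : ∀ (j) (z : Fin (n+1) → ℝ), z ∈ K → ‖z - x₀‖ ≤ r →
            |∑ i, a1 j i * (z i - x₀ i)| ≤ δ / 4 := by
          intro j z _ hzr
          have h := abs_linear_le (a1 j) (z - x₀)
          simp only [Pi.sub_apply] at h
          calc |∑ i, a1 j i * (z i - x₀ i)| ≤ (∑ i, |a1 j i|) * ‖z - x₀‖ := h
            _ ≤ C * r := mul_le_mul (hCa1 j) hzr (norm_nonneg _) hCpos.le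
            _ = δ / 4 := hCr
        have hrs2 : ∀ (j) (z : Fin (n+1) → ℝ), z ∈ K → ‖z - x₀‖ ≤ r →
            |∑ i, a2 j i * (z i - x₀ i)| ≤ δ / 4 := by
          intro j z _ hzr
          have h := abs_linear_le (a2 j) (z - x₀)
          simp only [Pi.sub_apply] at h
          calc |∑ i, a2 j i * (z i - x₀ i)| ≤ (∑ i, |a2 j i|) * ‖z - x₀‖ := h
            _ ≤ C * r := mul_le_mul (hCa2 j) hzr (norm_nonneg _) hCpos.le
            _ = δ / 4 := hCr
        have hhomf := radial_homog (convex_Box l u) hfc hf0 hsel1 hx₀ hf hδpos hδle1 hrs1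
        have hhomg := radial_homog (convex_Box l u) hgc hg0 hsel2 hx₀ hgx₀ hδpos hδle2 hrs2
        -- the small box around x₀
        set l' : Fin (n+1) → ℝ := fun i => max (l i) (x₀ i - r) with hl'
        set u' : Fin (n+1) → ℝ := fun i => min (u i) (x₀ i + r) with hu'
        have hnorm : ∀ w : Fin (n+1) → ℝ, ‖w - x₀‖ ≤ r ↔ ∀ i, |w i - x₀ i| ≤ r := by
          intro w
          rw [pi_norm_le_iff_of_nonneg hrpos.le]
          exact forall_congr' fun i => by rw [Pi.sub_apply, Real.norm_eq_abs]
        have hBox' : ∀ w, w ∈ Box l' u' ↔ w ∈ K ∧ ‖w - x₀‖ ≤ r := by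
          intro w
          rw [hnorm]
          constructor
          · intro hw
            refine ⟨fun i => ⟨le_trans (le_max_left _ _) (hw i).1,
              le_trans (hw i).2 (min_le_left _ _)⟩, fun i => ?_⟩
            rw [abs_le]
            have h1 := (hw i).1
            have h2 := (hw i).2
            have h3 : x₀ i - r ≤ l' i := le_max_right _ _
            have h4 : u' i ≤ x₀ i + r := min_le_right _ _
            constructor <;> linarith
          · intro ⟨hw1, hw2⟩
            intro i
            have h1 := (hw1 i).1
            have h2 := (hw1 i).2
            have h3 := abs_le.mp (hw2 i)
            exact ⟨max_le h1 (by linarith [h3.1]), le_min h2 (by linarith [h3.2])⟩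
        have hx₀' : x₀ ∈ Box l' u' := by
          rw [hBox']
          exact ⟨hx₀, by simp [hrpos.le]⟩
        -- the face bounds, from the induction hypothesis
        have face : ∀ (i : Fin (n+1)) (v : ℝ), (v = l' i ∨ v = u' i) →
            ∃ m, 0 ≤ m ∧ ∀ w ∈ Box l' u', w i = v → g w ≤ m * f w := by
          intro i v hv
          have hviv : l' i ≤ v ∧ v ≤ u' i := by
            have h1 := (hx₀' i).1
            have h2 := (hx₀' i).2
            rcases hv with h | h <;> rw [h] <;> constructor <;> linarith
          set e : (Fin n → ℝ) → (Fin (n+1) → ℝ) := fun y => i.insertNth v y with he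
          have hemem : ∀ y, y ∈ Box (l' ∘ i.succAbove) (u' ∘ i.succAbove) → e y ∈ Box l' u' := by
            intro y hy i'
            rcases eq_or_ne i' i with h | h
            · subst h
              simp only [he, Fin.insertNth_apply_same]
              exact hviv
            · obtain ⟨j', hj'⟩ := Fin.exists_succAbove_eq h
              have := hy j'
              simp only [Function.comp_apply] at this
              rw [← hj']
              simpa only [he, Fin.insertNth_apply_succAbove] using this
          have hememK : ∀ y, y ∈ Box (l' ∘ i.succAbove) (u' ∘ i.succAbove) → e y ∈ K :=
            fun y hy => ((hBox' (e y)).mp (hemem y hy)).1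
          have hecont : Continuous e := Continuous.finInsertNth i continuous_const continuous_id
          have hsum : ∀ (b : Fin (n+1) → ℝ) (y : Fin n → ℝ),
              ∑ i', b i' * (e y) i' = b i * v + ∑ j', b (i.succAbove j') * y j' := by
            intro b y
            rw [Fin.sum_univ_succAbove (fun i' => b i' * (e y) i') i]
            simp only [he, Fin.insertNth_apply_same, Fin.insertNth_apply_succAbove]
          obtain ⟨m, hm0, hm⟩ := IH (l' ∘ i.succAbove) (u' ∘ i.succAbove) (f ∘ e) (g ∘ e)
            (hfc.comp hecont.continuousOn hememK)
            (hgc.comp hecont.continuousOn hememK)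
            (fun y hy => hf0 _ (hememK y hy))
            (fun y hy => hg0 _ (hememK y hy))
            ⟨k1, (fun j => c1 j + a1 j i * v), (fun j j' => a1 j (i.succAbove j')), by
              intro y hy
              obtain ⟨j, hj⟩ := hsel1 (e y) (hememK y hy)
              refine ⟨j, ?_⟩
              simp only [Function.comp_apply]
              rw [hj, hsum]
              ring⟩
            ⟨k2, (fun j => c2 j + a2 j i * v), (fun j j' => a2 j (i.succAbove j')), by
              intro y hy
              obtain ⟨j, hj⟩ := hsel2 (e y) (hememK y hy)
              refine ⟨j, ?_⟩
              simp only [Function.comp_apply]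
              rw [hj, hsum]
              ring⟩
            (fun y hy hfy => hzero _ (hememK y hy) hfy)
          refine ⟨m, hm0, fun w hw hwi => ?_⟩
          have hwrep : w = e (i.removeNth w) := by
            rw [he]
            simp only
            rw [← hwi]
            exact (Fin.insertNth_self_removeNth i w).symm
          have hwmem : i.removeNth w ∈ Box (l' ∘ i.succAbove) (u' ∘ i.succAbove) := by
            intro j'
            simp only [Function.comp_apply, Fin.removeNth]
            exact hw (i.succAbove j')
          have := hm (i.removeNth w) hwmem
          simp only [Function.comp_apply] at this
          rw [← hwrep] at this
          exact this
        -- combine the face bounds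
        have faceL := fun i => face i (l' i) (Or.inl rfl)
        have faceU := fun i => face i (u' i) (Or.inr rfl)
        choose mL hmL0 hmL using faceL
        choose mU hmU0 hmU using faceU
        set M : ℝ := ∑ i, (mL i + mU i) with hM
        have hM0 : 0 ≤ M := Finset.sum_nonneg fun i _ => by linarith [hmL0 i, hmU0 i]
        have hML : ∀ i, mL i ≤ M := by
          intro i
          have h := Finset.single_le_sum (f := fun i => mL i + mU i)
            (fun i _ => by show (0:ℝ) ≤ mL i + mU i; linarith [hmL0 i, hmU0 i]) (Finset.mem_univ i)
          rw [hM]; linarith [hmU0 i]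
        have hMU : ∀ i, mU i ≤ M := by
          intro i
          have h := Finset.single_le_sum (f := fun i => mL i + mU i)
            (fun i _ => by show (0:ℝ) ≤ mL i + mU i; linarith [hmL0 i, hmU0 i]) (Finset.mem_univ i)
          rw [hM]; linarith [hmL0 i]
        -- conclude the local bound
        refine ⟨r, M, hrpos, hM0, fun _ z hzK hdist => ?_⟩
        have hz' : z ∈ Box l' u' := (hBox' z).mpr ⟨hzK, by rw [← dist_eq_norm]; exact hdist.le⟩
        by_cases hzx : z = x₀
        · rw [hzx, hgx₀, hf]
          simp
        · obtain ⟨T, hT1, hwBox, i, hface⟩ := exists_exit hx₀' hz' hzx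
          set w : Fin (n+1) → ℝ := x₀ + T • (z - x₀) with hw
          have hTpos : 0 < T := lt_of_lt_of_le one_pos hT1
          have hwK : w ∈ K ∧ ‖w - x₀‖ ≤ r := (hBox' w).mp hwBox
          have htmem : (1/T) ∈ Set.Icc (0:ℝ) 1 :=
            ⟨by positivity, by rw [div_le_one hTpos]; exact hT1⟩
          have hzw : x₀ + (1/T) • (w - x₀) = z := by
            rw [hw]
            have : x₀ + T • (z - x₀) - x₀ = T • (z - x₀) := by abel
            rw [this, smul_smul, one_div_mul_cancel (ne_of_gt hTpos), one_smul]
            abel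
          have hgz : g z = (1/T) * g w := by
            rw [← hzw]
            exact hhomg w hwK.1 hwK.2 (1/T) htmem
          have hfz : f z = (1/T) * f w := by
            rw [← hzw]
            exact hhomf w hwK.1 hwK.2 (1/T) htmem
          have hwbound : g w ≤ M * f w := by
            rcases hface with h | h
            · calc g w ≤ mL i * f w := hmL i w hwBox h
                _ ≤ M * f w := mul_le_mul_of_nonneg_right (hML i) (hf0 _ hwK.1)
            · calc g w ≤ mU i * f w := hmU i w hwBox h
                _ ≤ M * f w := mul_le_mul_of_nonneg_right (hMU i) (hf0 _ hwK.1)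
          rw [hgz, hfz]
          calc (1/T) * g w ≤ (1/T) * (M * f w) :=
                mul_le_mul_of_nonneg_left hwbound (by positivity)
            _ = M * ((1/T) * f w) := by ring

      · -- easy case : f x₀ > 0
        have hpos : 0 < f x₀ := lt_of_le_of_ne (hf0 _ hx₀) (Ne.symm hf)
        obtain ⟨zG, hzG, hG⟩ := (isCompact_Box l u).exists_isMaxOn ⟨x₀, hx₀⟩ hgc
        have hG0 : 0 ≤ g zG := hg0 _ hzG
        have hev : ∀ᶠ z in nhdsWithin x₀ K, f x₀ / 2 < f z :=
          (hfc x₀ hx₀).eventually (eventually_gt_nhds (half_lt_self hpos))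
        rw [Filter.Eventually, Metric.mem_nhdsWithin_iff] at hev
        obtain ⟨ε, hε, hball⟩ := hev
        refine ⟨ε, 2 * g zG / f x₀, hε,
          div_nonneg (by linarith) hpos.le, fun _ z hzK hdist => ?_⟩
        have h1 : f x₀ / 2 < f z := hball ⟨Metric.mem_ball.mpr hdist, hzK⟩
        have h2 : g z ≤ g zG := hG hzK
        have h3 : 2 * g zG / f x₀ * (f x₀ / 2) = g zG := by
          field_simp
        calc g z ≤ g zG := h2
          _ = 2 * g zG / f x₀ * (f x₀ / 2) := h3.symm
          _ ≤ 2 * g zG / f x₀ * f z :=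
              mul_le_mul_of_nonneg_left (by linarith) (div_nonneg (by linarith) hpos.le)
    -- globalize by compactness
    rcases Set.eq_empty_or_nonempty K with hemp | hne
    · exact ⟨0, le_refl 0, fun x hx => by rw [hemp] at hx; cases hx⟩
    choose r m hr hm0 hm using loc
    obtain ⟨t, htK, hcover⟩ := (isCompact_Box l u).elim_nhds_subcover
      (fun x => Metric.ball x (r x)) (fun x _ => Metric.ball_mem_nhds x (hr x))
    refine ⟨∑ x ∈ t, m x, Finset.sum_nonneg fun x _ => hm0 x, fun z hz => ?_⟩
    obtain ⟨x, hxt, hxz⟩ : ∃ x ∈ t, z ∈ Metric.ball x (r x) := by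
      have := hcover hz
      simpa using this
    calc g z ≤ m x * f z := hm x (htK x hxt) z hz hxz
      _ ≤ (∑ x ∈ t, m x) * f z :=
          mul_le_mul_of_nonneg_right (Finset.single_le_sum (fun x _ => hm0 x) hxt) (hf0 z hz)



lemma isPWLQ_zero {n : ℕ} : IsPWLQ (fun _ : Cube n => (0:ℝ)) := by
  refine ⟨continuous_const, fun x => ⟨le_refl 0, zero_le_one⟩,
    1, fun _ => 0, fun _ _ => 0, fun x => ⟨0, by simp⟩⟩

lemma IsPWLQ.oplus {n : ℕ} {f g : Cube n → ℝ} (hf : IsPWLQ f) (hg : IsPWLQ g) :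
    IsPWLQ (fun x => min (f x + g x) 1) := by
  obtain ⟨hfc, hfb, k1, c1, a1, h1⟩ := hf
  obtain ⟨hgc, hgb, k2, c2, a2, h2⟩ := hg
  refine ⟨(hfc.add hgc).min continuous_const,
    fun x => ⟨le_min (by linarith [(hfb x).1, (hgb x).1]) zero_le_one, min_le_right _ _⟩,
    k1*k2+1,
    Fin.snoc (fun p => c1 (finProdFinEquiv.symm p).1 + c2 (finProdFinEquiv.symm p).2) 1,
    Fin.snoc (fun p i => a1 (finProdFinEquiv.symm p).1 i + a2 (finProdFinEquiv.symm p).2 i) 0,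
    ?_⟩
  intro x
  obtain ⟨j1, hj1⟩ := h1 x
  obtain ⟨j2, hj2⟩ := h2 x
  rcases le_or_gt (f x + g x) 1 with h | h
  · refine ⟨(finProdFinEquiv (j1, j2)).castSucc, ?_⟩
    simp only [min_eq_left h, Fin.snoc_castSucc, Equiv.symm_apply_apply]
    push_cast
    rw [hj1, hj2]
    have : ∑ i, ((a1 j1 i : ℝ) + (a2 j2 i : ℝ)) * (x : Fin n → ℝ) i
        = (∑ i, (a1 j1 i : ℝ) * (x : Fin n → ℝ) i) + ∑ i, (a2 j2 i : ℝ) * (x : Fin n → ℝ) i := by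
      rw [← Finset.sum_add_distrib]
      exact Finset.sum_congr rfl fun i _ => by ring
    rw [this]; ring
  · refine ⟨Fin.last _, ?_⟩
    simp only [min_eq_right h.le, Fin.snoc_last]
    push_cast
    simp

open Classical in
/-- extension of a function on the cube to ambient space -/
noncomputable def extCube {n : ℕ} (f : Cube n → ℝ) : (Fin n → ℝ) → ℝ :=
  fun x => if h : x ∈ Cube n then f ⟨x, h⟩ else 0

lemma cube_eq_box (n : ℕ) : Cube n = Box (fun _ => (0:ℝ)) (fun _ => (1:ℝ)) := rfl

lemma extCube_apply {n : ℕ} (f : Cube n → ℝ) (x : Fin n → ℝ) (hx : x ∈ Cube n) :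
    extCube f x = f ⟨x, hx⟩ := by
  unfold extCube
  rw [dif_pos hx]

lemma extCube_continuousOn {n : ℕ} {f : Cube n → ℝ} (hf : Continuous f) :
    ContinuousOn (extCube f) (Cube n) := by
  rw [continuousOn_iff_continuous_restrict]
  have : (Cube n).domRestrict (extCube f) = f := funext fun x => by
    rw [Set.domRestrict_apply, extCube_apply f _ x.2]
  rw [this]; exact hf

/-- The key bound transported to the cube. -/
lemma exists_nat_bound {n : ℕ} {f g : Cube n → ℝ} (hf : IsPWLQ f) (hg : IsPWLQ g)
    (hzero : ∀ x : Cube n, f x = 0 → g x = 0) :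
    ∃ m : ℕ, ∀ x : Cube n, g x ≤ (m:ℝ) * f x := by
  obtain ⟨hfc, hfb, k1, c1, a1, h1⟩ := hf
  obtain ⟨hgc, hgb, k2, c2, a2, h2⟩ := hg
  have hbox : ∀ x : Fin n → ℝ, x ∈ Box (fun _ => (0:ℝ)) (fun _ => (1:ℝ)) → x ∈ Cube n :=
    fun x hx => hx
  obtain ⟨m, hm0, hm⟩ := key n (fun _ => 0) (fun _ => 1) (extCube f) (extCube g)
    (by rw [← cube_eq_box]; exact extCube_continuousOn hfc)
    (by rw [← cube_eq_box]; exact extCube_continuousOn hgc)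
    (fun x hx => by rw [extCube_apply f x (hbox x hx)]; exact (hfb _).1)
    (fun x hx => by rw [extCube_apply g x (hbox x hx)]; exact (hgb _).1)
    ⟨k1, fun j => (c1 j : ℝ), fun j i => (a1 j i : ℝ), fun x hx => by
      rw [extCube_apply f x (hbox x hx)]; exact h1 _⟩
    ⟨k2, fun j => (c2 j : ℝ), fun j i => (a2 j i : ℝ), fun x hx => by
      rw [extCube_apply g x (hbox x hx)]; exact h2 _⟩
    (fun x hx hfx => by
      rw [extCube_apply g x (hbox x hx)]
      rw [extCube_apply f x (hbox x hx)] at hfx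
      exact hzero _ hfx)
  refine ⟨⌈m⌉₊, fun x => ?_⟩
  have hx : (x : Fin n → ℝ) ∈ Box (fun _ => (0:ℝ)) (fun _ => (1:ℝ)) := x.2
  have := hm _ hx
  rw [extCube_apply f _ x.2, extCube_apply g _ x.2] at this
  calc g x ≤ m * f x := by simpa using this
    _ ≤ (⌈m⌉₊ : ℝ) * f x := mul_le_mul_of_nonneg_right (Nat.le_ceil m) (hfb x).1

/-- Iterated truncated sum `m ⊙ f`. -/
def iterOplus {n : ℕ} (f : Cube n → ℝ) : ℕ → (Cube n → ℝ)
  | 0 => fun _ => 0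
  | (m+1) => fun x => min (iterOplus f m x + f x) 1

lemma iterOplus_mem {n : ℕ} {J : Set (Cube n → ℝ)} (hJ : IsIdealQ J) {f : Cube n → ℝ}
    (hfJ : f ∈ J) : ∀ m, iterOplus f m ∈ J
  | 0 => hJ.2.1
  | (m+1) => hJ.2.2.2 _ (iterOplus_mem hJ hfJ m) f hfJ

lemma iterOplus_eq {n : ℕ} {f : Cube n → ℝ} (hf0 : ∀ x, 0 ≤ f x) (hf1 : ∀ x, f x ≤ 1) :
    ∀ m (x : Cube n), iterOplus f m x = min ((m:ℝ) * f x) 1 := by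
  intro m
  induction m with
  | zero => intro x; simp [iterOplus]
  | succ m IH =>
    intro x
    show min (iterOplus f m x + f x) 1 = _
    rw [IH x]
    rcases le_total ((m:ℝ) * f x) 1 with h | h
    · rw [min_eq_left h]
      push_cast
      ring_nf
    · rw [min_eq_right h]
      rw [min_eq_right (by linarith [hf0 x] : (1:ℝ) ≤ 1 + f x)]
      rw [min_eq_right (by push_cast; nlinarith [hf0 x] : (1:ℝ) ≤ ((m:ℕ)+1:ℕ) * f x)]


/-- For `f, g ∈ DMV_n`: `g ∈ (f]` if and only if `V(f) ⊆ V(g)`,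
i.e. every zero of `f` in `[0,1]^n` is a zero of `g`. -/
theorem memGen_iff_zeroset_subset (n : ℕ) (f g : Cube n → ℝ)
    (hf : IsPWLQ f) (hg : IsPWLQ g) :
    memGen f g ↔ ∀ x : Cube n, f x = 0 → g x = 0 := by

  constructor
  · intro hmem
    set J : Set (Cube n → ℝ) := {h | IsPWLQ h ∧ ∀ x : Cube n, f x = 0 → h x = 0} with hJdef
    have hJ : IsIdealQ J := by
      refine ⟨fun h hh => hh.1, ⟨isPWLQ_zero, fun x _ => rfl⟩, ?_, ?_⟩
      · intro h hh h' hh' hle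
        refine ⟨hh', fun x hx => le_antisymm ?_ (hh'.2.1 x).1⟩
        rw [← hh.2 x hx]
        exact hle x
      · intro h1 hh1 h2 hh2
        refine ⟨hh1.1.oplus hh2.1, fun x hx => ?_⟩
        show min (h1 x + h2 x) 1 = 0
        rw [hh1.2 x hx, hh2.2 x hx]
        norm_num
    exact (hmem J hJ ⟨hf, fun _ h => h⟩).2
  · intro hzero J hJ hfJ
    obtain ⟨m, hm⟩ := exists_nat_bound hf hg hzero
    have hmem := iterOplus_mem hJ hfJ m
    refine hJ.2.2.1 _ hmem g hg fun x => ?_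
    rw [iterOplus_eq (fun x => (hf.2.1 x).1) (fun x => (hf.2.1 x).2) m x]
    exact le_min (hm x) (hg.2.1 x).2
end

section
/- Every principal ideal of DMV_n is an intersection of maximal ideals of DMV_n; equivalently, for every f ∈ DMV_n, the ideal J = (f] satisfies J = I(V(J)). -/
open scoped BigOperators

namespace DMVAux

variable {n : ℕ}


variable {n : ℕ}

/-- affine function data: constant and coefficients -/
def aeval (p : ℝ × (Fin n → ℝ)) (v : Fin n → ℝ) : ℝ := p.1 + ∑ i, p.2 i * v i

lemma aeval_cont (p : ℝ × (Fin n → ℝ)) : Continuous (aeval p) := by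
  unfold aeval
  exact continuous_const.add (continuous_finset_sum _ fun i _ =>
    continuous_const.mul (continuous_apply i))

lemma aeval_lerp (p : ℝ × (Fin n → ℝ)) (v w : Fin n → ℝ) (t : ℝ) :
    aeval p (fun i => v i + t * (w i - v i)) = aeval p v + t * (aeval p w - aeval p v) := by
  unfold aeval
  have : ∀ i : Fin n, p.2 i * (v i + t * (w i - v i))
      = p.2 i * v i + t * (p.2 i * w i - p.2 i * v i) := by intro i; ring
  rw [Finset.sum_congr rfl fun i _ => this i]
  rw [Finset.sum_add_distrib, ← Finset.mul_sum, Finset.sum_sub_distrib]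
  ring

lemma aeval_combo (p : ℝ × (Fin n → ℝ)) (v w : Fin n → ℝ) (s t : ℝ) (hst : s + t = 1) :
    aeval p (s • v + t • w) = s * aeval p v + t * aeval p w := by
  unfold aeval
  have : ∀ i : Fin n, p.2 i * (s • v + t • w) i
      = s * (p.2 i * v i) + t * (p.2 i * w i) := by
    intro i; simp [Pi.add_apply, Pi.smul_apply, smul_eq_mul]; ring
  rw [Finset.sum_congr rfl fun i _ => this i, Finset.sum_add_distrib,
    ← Finset.mul_sum, ← Finset.mul_sum]
  have h1 : s * p.1 + t * p.1 = p.1 := by rw [← add_mul, hst, one_mul]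
  linarith [h1]


/-- Ovchinnikov-type lemma: for a continuous selection `f` of affine pieces `L j`
on the cube, for any two points `x y` there is a piece above `f` at `x` and below at `y`. -/
lemma lemO {ι : Type} [Fintype ι] (f : Cube n → ℝ) (hc : Continuous f)
    (L : ι → ℝ × (Fin n → ℝ)) (hsel : ∀ x : Cube n, ∃ j, f x = aeval (L j) x.1)
    (x y : Cube n) :
    ∃ j, f x ≤ aeval (L j) x.1 ∧ aeval (L j) y.1 ≤ f y := by
  classical
  set σ : ℝ → (Fin n → ℝ) := fun t i => x.1 i + t * (y.1 i - x.1 i) with hσ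
  have hmem : ∀ t : ℝ, t ∈ Set.Icc (0:ℝ) 1 → σ t ∈ Cube n := by
    rintro t ⟨h0, h1⟩ i
    have hx := x.2 i; have hy := y.2 i
    have hσv : σ t i = x.1 i + t * (y.1 i - x.1 i) := rfl
    rw [hσv]
    constructor <;> nlinarith [hx.1, hx.2, hy.1, hy.2]
  set cl : ℝ → ℝ := fun t => max 0 (min t 1) with hcl
  have hclmem : ∀ t, cl t ∈ Set.Icc (0:ℝ) 1 :=
    fun t => ⟨le_max_left _ _, max_le (by norm_num) (min_le_right _ _)⟩
  have hcleq : ∀ t ∈ Set.Icc (0:ℝ) 1, cl t = t := by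
    rintro t ⟨h0, h1⟩; simp [hcl, min_eq_left h1, max_eq_right h0]
  set φ : ℝ → ℝ := fun t => f ⟨σ (cl t), hmem _ (hclmem t)⟩ with hφ
  have hφcont : Continuous φ := by
    apply hc.comp
    apply Continuous.subtype_mk
    have hclc : Continuous cl := continuous_const.max (continuous_id.min continuous_const)
    exact continuous_pi fun i => continuous_const.add ((hclc).mul continuous_const)
  set lam : ι → ℝ → ℝ := fun j t =>
    aeval (L j) x.1 + t * (aeval (L j) y.1 - aeval (L j) x.1) with hlam
  have hlamcont : ∀ j, Continuous (lam j) := fun j =>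
    continuous_const.add (continuous_id.mul continuous_const)
  have hφsel : ∀ t ∈ Set.Icc (0:ℝ) 1, ∃ j, φ t = lam j t := by
    intro t ht
    obtain ⟨j, hj⟩ := hsel ⟨σ (cl t), hmem _ (hclmem t)⟩
    refine ⟨j, ?_⟩
    rw [hφ]; simp only []
    rw [hj]
    show aeval (L j) (σ (cl t)) = lam j t
    rw [hcleq t ht]
    exact aeval_lerp (L j) x.1 y.1 t
  have hφ0 : φ 0 = f x := by
    have : σ (cl 0) = x.1 := by
      funext i; rw [hcleq 0 ⟨le_refl _, by norm_num⟩]; simp [hσ]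
    rw [hφ]; simp only []; congr 1; exact Subtype.ext this
  have hφ1 : φ 1 = f y := by
    have : σ (cl 1) = y.1 := by
      funext i; rw [hcleq 1 ⟨by norm_num, le_refl _⟩]; simp [hσ]
    rw [hφ]; simp only []; congr 1; exact Subtype.ext this
  -- the sweep set
  set E : Set ℝ := {t | t ∈ Set.Icc (0:ℝ) 1 ∧ ∃ j, φ 0 ≤ lam j 0 ∧ lam j t ≤ φ t} with hE
  have hE0 : (0:ℝ) ∈ E := by
    obtain ⟨j, hj⟩ := hφsel 0 ⟨le_refl _, by norm_num⟩
    exact ⟨⟨le_refl _, by norm_num⟩, j, le_of_eq hj, le_of_eq hj.symm⟩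
  have hEbdd : BddAbove E := ⟨1, fun t ht => ht.1.2⟩
  have hEclosed : IsClosed E := by
    have : E = ⋃ j : ι, {t | t ∈ Set.Icc (0:ℝ) 1 ∧ φ 0 ≤ lam j 0 ∧ lam j t ≤ φ t} := by
      ext t; simp only [hE, Set.mem_setOf_eq, Set.mem_iUnion]; tauto
    rw [this]
    apply isClosed_iUnion_of_finite
    intro j
    by_cases hj : φ 0 ≤ lam j 0
    · have : {t | t ∈ Set.Icc (0:ℝ) 1 ∧ φ 0 ≤ lam j 0 ∧ lam j t ≤ φ t}
          = Set.Icc (0:ℝ) 1 ∩ {t | lam j t ≤ φ t} := by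
        ext t; simp only [Set.mem_setOf_eq, Set.mem_inter_iff, Set.mem_Icc]; tauto
      rw [this]; exact isClosed_Icc.inter (isClosed_le (hlamcont j) hφcont)
    · have : {t | t ∈ Set.Icc (0:ℝ) 1 ∧ φ 0 ≤ lam j 0 ∧ lam j t ≤ φ t} = ∅ := by
        ext t; simp only [Set.mem_setOf_eq, Set.mem_empty_iff_false, iff_false]; tauto
      rw [this]; exact isClosed_empty
  set ts : ℝ := sSup E with hts
  have htsE : ts ∈ E := hEclosed.csSup_mem ⟨0, hE0⟩ hEbdd
  obtain ⟨⟨hts0, hts1⟩, j, hj0, hjt⟩ := htsE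
  rcases eq_or_lt_of_le hts1 with h1 | h1
  · -- ts = 1 : done
    refine ⟨j, ?_, ?_⟩
    · rw [← hφ0]
      have : lam j 0 = aeval (L j) x.1 := by simp [hlam]
      rw [← this]; exact hj0
    · have : lam j 1 = aeval (L j) y.1 := by simp [hlam]
      rw [← this, ← hφ1]
      rw [h1] at hjt; exact hjt
  · exfalso
    by_cases hcaseA : ∃ t, t ∈ Set.Ioc ts 1 ∧ lam j t ≤ φ t
    · obtain ⟨t, ⟨htl, htr⟩, hle⟩ := hcaseA
      have : t ∈ E := ⟨⟨le_trans hts0 (le_of_lt htl), htr⟩, j, hj0, hle⟩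
      exact absurd (le_csSup hEbdd this) (not_le.2 htl)
    · push_neg at hcaseA
      have hB : ∀ t ∈ Set.Ioc ts 1, φ t < lam j t := hcaseA
      set C : ι → Set ℝ := fun i => {t | t ∈ Set.Icc (0:ℝ) 1 ∧ φ t = lam i t} with hC
      have hsub : Set.Ioc ts 1 ⊆ ⋃ i, (C i ∩ Set.Ioc ts 1) := by
        intro t ht
        have htI : t ∈ Set.Icc (0:ℝ) 1 := ⟨le_trans hts0 (le_of_lt ht.1), ht.2⟩
        obtain ⟨i, hi⟩ := hφsel t htI
        exact Set.mem_iUnion.2 ⟨i, ⟨htI, hi⟩, ht⟩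
      have hclmemts : ts ∈ closure (Set.Ioc ts 1) := by
        rw [closure_Ioc (ne_of_lt h1)]; exact ⟨le_refl _, le_of_lt h1⟩
      have hsubcl : closure (Set.Ioc ts 1) ⊆ ⋃ i, closure (C i ∩ Set.Ioc ts 1) := by
        apply closure_minimal
        · exact fun t ht => Set.mem_iUnion.2 (by
            obtain ⟨i, hi⟩ := Set.mem_iUnion.1 (hsub ht); exact ⟨i, subset_closure hi⟩)
        · exact isClosed_iUnion_of_finite fun i => isClosed_closure
      obtain ⟨i, hi⟩ := Set.mem_iUnion.1 (hsubcl hclmemts)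
      have hne : (C i ∩ Set.Ioc ts 1).Nonempty := by
        by_contra h
        rw [Set.not_nonempty_iff_eq_empty] at h
        rw [h, closure_empty] at hi
        exact hi
      obtain ⟨t₁, ⟨⟨ht₁I, hφt₁⟩, ht₁l, ht₁r⟩⟩ := hne
      have hits : φ ts = lam i ts := by
        have hcls : closure (C i ∩ Set.Ioc ts 1) ⊆ {t | φ t = lam i t} :=
          closure_minimal (fun t ht => ht.1.2) (isClosed_eq hφcont (hlamcont i))
        exact hcls hi
      have hjts : φ ts = lam j ts := by
        have h1' : φ ts ≤ lam j ts := by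
          have hcls : closure (Set.Ioc ts 1) ⊆ {t | φ t ≤ lam j t} :=
            closure_minimal (fun t ht => le_of_lt (hB t ht)) (isClosed_le hφcont (hlamcont j))
          exact hcls hclmemts
        exact le_antisymm h1' hjt
      have ht₁B : φ t₁ < lam j t₁ := hB t₁ ⟨ht₁l, ht₁r⟩
      -- affine comparison: slope of (lam i - lam j) negative, hence lam i 0 ≥ lam j 0
      have key : lam j 0 ≤ lam i 0 := by
        have e1 : lam i ts = lam j ts := by rw [← hits, hjts]
        have e2 : lam i t₁ < lam j t₁ := by rw [← hφt₁]; exact ht₁B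
        simp only [hlam] at e1 e2 ⊢
        nlinarith [ht₁l, hts0]
      have : t₁ ∈ E := ⟨⟨le_trans hts0 (le_of_lt ht₁l), ht₁r⟩, i,
        le_trans hj0 key, le_of_eq hφt₁.symm⟩
      exact absurd (le_csSup hEbdd this) (not_le.2 ht₁l)


lemma exists_min_totalPreorder {ι : Type} (s : Finset ι) (hs : s.Nonempty)
    (r : ι → ι → Prop) (htot : ∀ a b : ι, r a b ∨ r b a)
    (htrans : ∀ a b c : ι, r a b → r b c → r a c) : ∃ a ∈ s, ∀ b ∈ s, r a b := by
  classical
  induction hs using Finset.Nonempty.cons_induction with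
  | singleton a =>
      refine ⟨a, Finset.mem_singleton_self a, fun b hb => ?_⟩
      rw [Finset.mem_singleton] at hb
      subst hb
      rcases htot b b with h | h <;> exact h
  | cons a s ha hsne ih =>
      obtain ⟨m, hm, hmin⟩ := ih
      rcases htot m a with h | h
      · refine ⟨m, Finset.mem_cons.2 (Or.inr hm), ?_⟩
        intro b hb
        rcases Finset.mem_cons.1 hb with rfl | hb'
        · exact h
        · exact hmin b hb'
      · refine ⟨a, Finset.mem_cons_self a s, ?_⟩
        intro b hb
        rcases Finset.mem_cons.1 hb with rfl | hb'
        · rcases htot b b with h' | h' <;> exact h'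
        · exact htrans a m b h (hmin b hb')

/-- On a region where the pieces are totally ordered, a continuous selection is a single piece. -/
lemma single_piece {ι : Type} [Fintype ι] (f : Cube n → ℝ) (hc : Continuous f)
    (L : ι → ℝ × (Fin n → ℝ)) (hsel : ∀ x : Cube n, ∃ j, f x = aeval (L j) x.1)
    (S : Set (Cube n)) (hSne : S.Nonempty)
    (htot : ∀ j j' : ι, (∀ z ∈ S, aeval (L j) z.1 ≤ aeval (L j') z.1) ∨
                        (∀ z ∈ S, aeval (L j') z.1 ≤ aeval (L j) z.1)) :
    ∃ j, ∀ y ∈ S, f y = aeval (L j) y.1 := by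
  classical
  set r : ι → ι → Prop := fun j j' => ∀ z ∈ S, aeval (L j) z.1 ≤ aeval (L j') z.1 with hr
  have htrans : ∀ a b c : ι, r a b → r b c → r a c :=
    fun a b c hab hbc z hz => le_trans (hab z hz) (hbc z hz)
  have key : ∀ y ∈ S, ∃ j, (∀ z ∈ S, aeval (L j) z.1 ≤ f z) ∧ f y = aeval (L j) y.1 := by
    intro y hy
    set Jy : Finset ι := Finset.univ.filter (fun j => f y ≤ aeval (L j) y.1) with hJy
    have hJyne : Jy.Nonempty := by
      obtain ⟨j, hj⟩ := hsel y
      exact ⟨j, by simp [hJy, le_of_eq hj]⟩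
    obtain ⟨jy, hjymem, hjymin⟩ := exists_min_totalPreorder Jy hJyne r htot htrans
    have hgood : ∀ z ∈ S, aeval (L jy) z.1 ≤ f z := by
      intro z hz
      obtain ⟨i, hi1, hi2⟩ := lemO f hc L hsel y z
      have hiJ : i ∈ Jy := by simp [hJy, hi1]
      exact le_trans (hjymin i hiJ z hz) hi2
    have hyle : f y ≤ aeval (L jy) y.1 := by
      have := hjymem
      simp [hJy] at this
      exact this
    exact ⟨jy, hgood, le_antisymm hyle (hgood y hy)⟩
  set T : Finset ι := Finset.univ.filter
    (fun j => (∀ z ∈ S, aeval (L j) z.1 ≤ f z) ∧ ∃ y ∈ S, f y = aeval (L j) y.1) with hT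
  have hTne : T.Nonempty := by
    obtain ⟨y₀, hy₀⟩ := hSne
    obtain ⟨j, h1, h2⟩ := key y₀ hy₀
    refine ⟨j, ?_⟩
    simp only [hT, Finset.mem_filter, Finset.mem_univ, true_and]
    exact ⟨h1, y₀, hy₀, h2⟩
  obtain ⟨js, hjsmem, hjsmax⟩ := exists_min_totalPreorder T hTne (fun a b => r b a)
    (fun a b => (htot b a)) (fun a b c hab hbc => htrans c b a hbc hab)
  have hjsT := hjsmem
  simp only [hT, Finset.mem_filter, Finset.mem_univ, true_and] at hjsT
  refine ⟨js, fun y hy => ?_⟩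
  obtain ⟨jy, h1, h2⟩ := key y hy
  have hjyT : jy ∈ T := by
    simp only [hT, Finset.mem_filter, Finset.mem_univ, true_and]
    exact ⟨h1, y, hy, h2⟩
  have hub : aeval (L jy) y.1 ≤ aeval (L js) y.1 := hjsmax jy hjyT y hy
  have hlb : aeval (L js) y.1 ≤ f y := hjsT.1 y hy
  rw [h2]
  exact le_antisymm (h2 ▸ hub) (h2 ▸ hlb)


lemma halfspace_convex (p : ℝ × (Fin n → ℝ)) : Convex ℝ {v : Fin n → ℝ | aeval p v ≤ 0} := by
  intro v hv w hw s t hs ht hst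
  simp only [Set.mem_setOf_eq] at hv hw ⊢
  rw [aeval_combo p v w s t hst]
  nlinarith

/-- Linear bound on a compact polyhedron: if `A ≥ 0` on `P` and `B ≤ 0` whenever `A = 0`,
then `B ≤ m • A` on `P` for some natural `m`. -/
lemma poly_bound {ι : Type} [Fintype ι] (D : ι → ℝ × (Fin n → ℝ))
    (P : Set (Fin n → ℝ)) (hPdef : P = {v | ∀ r, aeval (D r) v ≤ 0})
    (hbox : ∀ v ∈ P, ∀ i, 0 ≤ v i ∧ v i ≤ 1)
    (hPne : P.Nonempty)
    (A B : ℝ × (Fin n → ℝ))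
    (hA : ∀ v ∈ P, 0 ≤ aeval A v)
    (hAB : ∀ v ∈ P, aeval A v = 0 → aeval B v ≤ 0) :
    ∃ m : ℕ, ∀ v ∈ P, aeval B v ≤ (m : ℝ) * aeval A v := by
  classical
  have hconv : Convex ℝ P := by
    rw [hPdef]
    have : {v : Fin n → ℝ | ∀ r, aeval (D r) v ≤ 0} = ⋂ r, {v | aeval (D r) v ≤ 0} := by
      ext v; simp [Set.mem_iInter]
    rw [this]
    exact convex_iInter fun r => halfspace_convex (D r)
  have hclosed : IsClosed P := by
    rw [hPdef]
    have : {v : Fin n → ℝ | ∀ r, aeval (D r) v ≤ 0} = ⋂ r, {v | aeval (D r) v ≤ 0} := by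
      ext v; simp [Set.mem_iInter]
    rw [this]
    exact isClosed_iInter fun r => isClosed_le (aeval_cont (D r)) continuous_const
  have hcomp : IsCompact P := by
    apply IsCompact.of_isClosed_subset (isCompact_univ_pi fun _ : Fin n => isCompact_Icc) hclosed
    intro v hv
    rw [Set.mem_univ_pi]
    exact fun i => ⟨(hbox v hv i).1, (hbox v hv i).2⟩
  -- finiteness of extreme points via activity patterns
  have hextfin : (P.extremePoints ℝ).Finite := by
    have hinj : Set.InjOn (fun v (r : ι) => decide (aeval (D r) v = 0)) (P.extremePoints ℝ) := by
      intro v hv w hw heq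
      by_contra hne
      obtain ⟨i₀, hi₀⟩ := Function.ne_iff.1 hne
      have hvP : v ∈ P := extremePoints_subset hv
      have hwP : w ∈ P := extremePoints_subset hw
      have hpat : ∀ r, (aeval (D r) v = 0) ↔ (aeval (D r) w = 0) := by
        intro r
        have := congrFun heq r
        simpa [decide_eq_decide] using this
      -- a positive margin δ
      set F : Finset ℝ := insert 1 ((Finset.univ.filter (fun r => aeval (D r) v ≠ 0)).image
        (fun r => (-(aeval (D r) v)) / (|aeval (D r) w - aeval (D r) v| + 1))) with hF
      have hFne : F.Nonempty := ⟨1, Finset.mem_insert_self _ _⟩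
      set δ : ℝ := F.min' hFne with hδ
      have hδpos : 0 < δ := by
        rw [hδ, Finset.lt_min'_iff]
        intro z hz
        rw [hF, Finset.mem_insert] at hz
        rcases hz with rfl | hz
        · norm_num
        · obtain ⟨r, hr, rfl⟩ := Finset.mem_image.1 hz
          rw [Finset.mem_filter] at hr
          have h1 : aeval (D r) v < 0 :=
            lt_of_le_of_ne (by rw [hPdef] at hvP; exact hvP r) hr.2
          have h2 : (0:ℝ) < |aeval (D r) w - aeval (D r) v| + 1 := by positivity
          exact div_pos (by linarith) h2
      have hmemP : ∀ t : ℝ, |t| ≤ δ → (fun i => v i + t * (w i - v i)) ∈ P := by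
        intro t ht
        rw [hPdef]
        intro r
        rw [aeval_lerp (D r) v w t]
        by_cases hr : aeval (D r) v = 0
        · have hw0 : aeval (D r) w = 0 := (hpat r).1 hr
          rw [hr, hw0]; simp
        · have h1 : aeval (D r) v < 0 :=
            lt_of_le_of_ne (by rw [hPdef] at hvP; exact hvP r) hr
          set X := aeval (D r) v
          set W := aeval (D r) w
          set Y := |W - X| with hY
          have hYnn : 0 ≤ Y := abs_nonneg _
          have hρ : δ ≤ (-X) / (Y + 1) := by
            apply Finset.min'_le
            rw [hF]
            apply Finset.mem_insert_of_mem
            exact Finset.mem_image.2 ⟨r, Finset.mem_filter.2 ⟨Finset.mem_univ _, hr⟩, rfl⟩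
          have hstep1 : t * (W - X) ≤ |t| * Y := by
            calc t * (W - X) ≤ |t * (W - X)| := le_abs_self _
            _ = |t| * Y := by rw [abs_mul]
          have hstep2 : |t| * Y ≤ δ * Y := mul_le_mul_of_nonneg_right ht hYnn
          have hstep3 : δ * Y ≤ ((-X) / (Y + 1)) * Y := mul_le_mul_of_nonneg_right hρ hYnn
          have hstep4 : ((-X) / (Y + 1)) * Y ≤ -X := by
            rw [div_mul_eq_mul_div]
            rw [div_le_iff₀ (by positivity)]
            nlinarith
          linarith
      obtain ⟨i₀', hi₀'⟩ : ∃ i, w i - v i ≠ 0 := ⟨i₀, sub_ne_zero.2 (Ne.symm hi₀)⟩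
      set up : Fin n → ℝ := fun i => v i + δ * (w i - v i) with hup
      set um : Fin n → ℝ := fun i => v i + (-δ) * (w i - v i) with hum
      have hupP : up ∈ P := hmemP δ (by rw [abs_of_pos hδpos])
      have humP : um ∈ P := hmemP (-δ) (by rw [abs_neg, abs_of_pos hδpos])
      have hseg : v ∈ openSegment ℝ um up := by
        refine ⟨1/2, 1/2, by norm_num, by norm_num, by norm_num, ?_⟩
        funext i
        simp only [Pi.add_apply, Pi.smul_apply, smul_eq_mul, hup, hum]
        ring
      have hext := hv.2 hupP humP (by rw [openSegment_symm]; exact hseg)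
      have : up i₀' = v i₀' := congrFun hext i₀'
      rw [hup] at this
      simp only at this
      have : δ * (w i₀' - v i₀') = 0 := by linarith
      exact hi₀' (by
        rcases mul_eq_zero.1 this with h | h
        · exact absurd h (ne_of_gt hδpos)
        · exact h)
    exact Set.Finite.of_finite_image (Set.toFinite _) hinj
  have hKM : closure (convexHull ℝ (P.extremePoints ℝ)) = P :=
    closure_convexHull_extremePoints hcomp hconv
  have hextne : (P.extremePoints ℝ).Nonempty := by
    by_contra h
    rw [Set.not_nonempty_iff_eq_empty] at h
    rw [h] at hKM
    simp [convexHull_empty, closure_empty] at hKM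
    exact Set.not_nonempty_empty (hKM ▸ hPne)
  set Fext := hextfin.toFinset with hFext
  have hFextne : Fext.Nonempty := by
    rwa [hFext, Set.Finite.toFinset_nonempty]
  set R : ℝ := (Fext.image (fun v => aeval B v / aeval A v)).max'
    (hFextne.image _) with hR
  set m : ℕ := ⌈max R 0⌉₊ with hm
  have hmR : R ≤ (m : ℝ) := le_trans (le_max_left R 0) (Nat.le_ceil _)
  have key2 : ∀ v ∈ P.extremePoints ℝ, aeval B v ≤ (m : ℝ) * aeval A v := by
    intro v hv
    have hvP : v ∈ P := extremePoints_subset hv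
    rcases eq_or_lt_of_le (hA v hvP) with h0 | hpos
    · rw [← h0, mul_zero]
      exact hAB v hvP h0.symm
    · have hratio : aeval B v / aeval A v ≤ R := by
        apply Finset.le_max'
        exact Finset.mem_image.2 ⟨v, by rw [hFext, Set.Finite.mem_toFinset]; exact hv, rfl⟩
      rw [← div_le_iff₀ hpos] at *
      exact le_trans hratio hmR
  -- conclude by convexity and closedness of the halfspace
  set Ep : ℝ × (Fin n → ℝ) := (B.1 - (m:ℝ) * A.1, fun i => B.2 i - (m:ℝ) * A.2 i) with hEp
  have hEpeval : ∀ v, aeval Ep v = aeval B v - (m:ℝ) * aeval A v := by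
    intro v
    simp only [hEp, aeval]
    rw [Finset.sum_congr rfl (fun i _ => by ring :
      ∀ i ∈ Finset.univ, (B.2 i - (m:ℝ) * A.2 i) * v i = B.2 i * v i - (m:ℝ) * (A.2 i * v i))]
    rw [Finset.sum_sub_distrib, ← Finset.mul_sum]
    ring
  have hCconv : Convex ℝ {v : Fin n → ℝ | aeval Ep v ≤ 0} := halfspace_convex Ep
  have hCclosed : IsClosed {v : Fin n → ℝ | aeval Ep v ≤ 0} :=
    isClosed_le (aeval_cont Ep) continuous_const
  have hsubC : P ⊆ {v : Fin n → ℝ | aeval Ep v ≤ 0} := by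
    rw [← hKM]
    apply closure_minimal
    apply convexHull_min
    · intro v hv
      rw [Set.mem_setOf_eq, hEpeval]
      have := key2 v hv
      linarith
    · exact hCconv
    · exact hCclosed
  refine ⟨m, fun v hv => ?_⟩
  have := hsubC hv
  rw [Set.mem_setOf_eq, hEpeval] at this
  linarith


def affSub (p q : ℝ × (Fin n → ℝ)) : ℝ × (Fin n → ℝ) := (p.1 - q.1, fun i => p.2 i - q.2 i)

lemma aeval_affSub (p q : ℝ × (Fin n → ℝ)) (v : Fin n → ℝ) :
    aeval (affSub p q) v = aeval p v - aeval q v := by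
  simp only [affSub, aeval]
  rw [Finset.sum_congr rfl (fun i _ => by ring :
    ∀ i ∈ Finset.univ, (p.2 i - q.2 i) * v i = p.2 i * v i - q.2 i * v i)]
  rw [Finset.sum_sub_distrib]
  ring

lemma aeval_single (i : Fin n) (c d : ℝ) (v : Fin n → ℝ) :
    aeval (d, fun i' => if i' = i then c else 0) v = d + c * v i := by
  simp only [aeval]
  congr 1
  rw [Finset.sum_eq_single i]
  · simp
  · intro b _ hb; simp [hb]
  · intro h; exact absurd (Finset.mem_univ i) h

/-- Key lemma: if the zero set of `f` is contained in the zero set of `g`,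
then `g ≤ m * f` for some natural number `m`. -/
lemma keyL (f g : Cube n → ℝ) (hf : IsPWLQ f) (hg : IsPWLQ g)
    (hZ : ∀ x, f x = 0 → g x = 0) : ∃ m : ℕ, ∀ x, g x ≤ (m : ℝ) * f x := by
  classical
  obtain ⟨hfc, hfb, kf, cf, af, hfsel⟩ := hf
  obtain ⟨hgc, hgb, kg, cg, ag, hgsel⟩ := hg
  set Lf : Fin kf → ℝ × (Fin n → ℝ) := fun j => ((cf j : ℝ), fun i => (af j i : ℝ)) with hLf
  set Lg : Fin kg → ℝ × (Fin n → ℝ) := fun j => ((cg j : ℝ), fun i => (ag j i : ℝ)) with hLg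
  have hfsel' : ∀ x : Cube n, ∃ j, f x = aeval (Lf j) x.1 := fun x => hfsel x
  have hgsel' : ∀ x : Cube n, ∃ j, g x = aeval (Lg j) x.1 := fun x => hgsel x
  -- patterns and cells
  set D : ((Fin kf → Fin kf → Bool) × (Fin kg → Fin kg → Bool)) →
      ((Fin n ⊕ Fin n) ⊕ ((Fin kf × Fin kf) ⊕ (Fin kg × Fin kg))) → ℝ × (Fin n → ℝ) := fun p r =>
    match r with
    | Sum.inl (Sum.inl i) => ((0 : ℝ), fun i' => if i' = i then (-1 : ℝ) else 0)
    | Sum.inl (Sum.inr i) => ((-1 : ℝ), fun i' => if i' = i then (1 : ℝ) else 0)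
    | Sum.inr (Sum.inl (j, j')) =>
        if p.1 j j' then affSub (Lf j) (Lf j') else affSub (Lf j') (Lf j)
    | Sum.inr (Sum.inr (j, j')) =>
        if p.2 j j' then affSub (Lg j) (Lg j') else affSub (Lg j') (Lg j) with hD
  set CellR : ((Fin kf → Fin kf → Bool) × (Fin kg → Fin kg → Bool)) → Set (Fin n → ℝ) :=
    fun p => {v | ∀ r, aeval (D p r) v ≤ 0} with hCellR
  have hcube : ∀ p, ∀ v ∈ CellR p, ∀ i, 0 ≤ v i ∧ v i ≤ 1 := by
    intro p v hv i
    have h1 := hv (Sum.inl (Sum.inl i))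
    have h2 := hv (Sum.inl (Sum.inr i))
    rw [show D p (Sum.inl (Sum.inl i)) = ((0:ℝ), fun i' => if i' = i then (-1:ℝ) else 0) from rfl,
      aeval_single] at h1
    rw [show D p (Sum.inl (Sum.inr i)) = ((-1:ℝ), fun i' => if i' = i then (1:ℝ) else 0) from rfl,
      aeval_single] at h2
    constructor <;> linarith
  set pat : Cube n → ((Fin kf → Fin kf → Bool) × (Fin kg → Fin kg → Bool)) := fun x =>
    (fun j j' => decide (aeval (Lf j) x.1 ≤ aeval (Lf j') x.1),
     fun j j' => decide (aeval (Lg j) x.1 ≤ aeval (Lg j') x.1)) with hpat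
  have hmemcell : ∀ x : Cube n, x.1 ∈ CellR (pat x) := by
    intro x r
    match r with
    | Sum.inl (Sum.inl i) =>
        rw [show D (pat x) (Sum.inl (Sum.inl i))
          = ((0:ℝ), fun i' => if i' = i then (-1:ℝ) else 0) from rfl, aeval_single]
        have := (x.2 i).1
        linarith
    | Sum.inl (Sum.inr i) =>
        rw [show D (pat x) (Sum.inl (Sum.inr i))
          = ((-1:ℝ), fun i' => if i' = i then (1:ℝ) else 0) from rfl, aeval_single]
        have := (x.2 i).2
        linarith
    | Sum.inr (Sum.inl (j, j')) =>
        show aeval (if (pat x).1 j j' = true then affSub (Lf j) (Lf j')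
          else affSub (Lf j') (Lf j)) x.1 ≤ 0
        by_cases h : aeval (Lf j) x.1 ≤ aeval (Lf j') x.1
        · have hb : (pat x).1 j j' = true := by simp [hpat, h]
          rw [if_pos hb, aeval_affSub]
          linarith
        · have hb : ¬((pat x).1 j j' = true) := by simp [hpat, h]
          rw [if_neg hb, aeval_affSub]
          linarith [le_of_not_ge h]
    | Sum.inr (Sum.inr (j, j')) =>
        show aeval (if (pat x).2 j j' = true then affSub (Lg j) (Lg j')
          else affSub (Lg j') (Lg j)) x.1 ≤ 0
        by_cases h : aeval (Lg j) x.1 ≤ aeval (Lg j') x.1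
        · have hb : (pat x).2 j j' = true := by simp [hpat, h]
          rw [if_pos hb, aeval_affSub]
          linarith
        · have hb : ¬((pat x).2 j j' = true) := by simp [hpat, h]
          rw [if_neg hb, aeval_affSub]
          linarith [le_of_not_ge h]
  have key : ∀ p : ((Fin kf → Fin kf → Bool) × (Fin kg → Fin kg → Bool)),
      ∃ m : ℕ, ∀ x : Cube n, x.1 ∈ CellR p → g x ≤ (m:ℝ) * f x := by
    intro p
    by_cases hne : ∃ x : Cube n, x.1 ∈ CellR p
    · obtain ⟨x₀, hx₀⟩ := hne
      set S : Set (Cube n) := {x | x.1 ∈ CellR p} with hS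
      have hSne : S.Nonempty := ⟨x₀, hx₀⟩
      have htotf : ∀ j j' : Fin kf, (∀ z ∈ S, aeval (Lf j) z.1 ≤ aeval (Lf j') z.1) ∨
          (∀ z ∈ S, aeval (Lf j') z.1 ≤ aeval (Lf j) z.1) := by
        intro j j'
        by_cases hb : p.1 j j' = true
        · left
          intro z hz
          have h := hz (Sum.inr (Sum.inl (j, j')))
          rw [show D p (Sum.inr (Sum.inl (j, j'))) = (if p.1 j j' = true then affSub (Lf j) (Lf j')
            else affSub (Lf j') (Lf j)) from rfl, if_pos hb, aeval_affSub] at h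
          linarith
        · right
          intro z hz
          have h := hz (Sum.inr (Sum.inl (j, j')))
          rw [show D p (Sum.inr (Sum.inl (j, j'))) = (if p.1 j j' = true then affSub (Lf j) (Lf j')
            else affSub (Lf j') (Lf j)) from rfl, if_neg hb, aeval_affSub] at h
          linarith
      have htotg : ∀ j j' : Fin kg, (∀ z ∈ S, aeval (Lg j) z.1 ≤ aeval (Lg j') z.1) ∨
          (∀ z ∈ S, aeval (Lg j') z.1 ≤ aeval (Lg j) z.1) := by
        intro j j'
        by_cases hb : p.2 j j' = true
        · left
          intro z hz
          have h := hz (Sum.inr (Sum.inr (j, j')))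
          rw [show D p (Sum.inr (Sum.inr (j, j'))) = (if p.2 j j' = true then affSub (Lg j) (Lg j')
            else affSub (Lg j') (Lg j)) from rfl, if_pos hb, aeval_affSub] at h
          linarith
        · right
          intro z hz
          have h := hz (Sum.inr (Sum.inr (j, j')))
          rw [show D p (Sum.inr (Sum.inr (j, j'))) = (if p.2 j j' = true then affSub (Lg j) (Lg j')
            else affSub (Lg j') (Lg j)) from rfl, if_neg hb, aeval_affSub] at h
          linarith
      obtain ⟨js, hjs⟩ := single_piece f hfc Lf hfsel' S hSne htotf
      obtain ⟨is, his⟩ := single_piece g hgc Lg hgsel' S hSne htotg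
      have hA : ∀ v ∈ CellR p, 0 ≤ aeval (Lf js) v := by
        intro v hv
        have hX : (⟨v, fun i => hcube p v hv i⟩ : Cube n) ∈ S := hv
        rw [← hjs _ hX]
        exact (hfb _).1
      have hAB : ∀ v ∈ CellR p, aeval (Lf js) v = 0 → aeval (Lg is) v ≤ 0 := by
        intro v hv h0
        have hX : (⟨v, fun i => hcube p v hv i⟩ : Cube n) ∈ S := hv
        rw [← his _ hX]
        have hf0 : f ⟨v, fun i => hcube p v hv i⟩ = 0 := by rw [hjs _ hX]; exact h0
        rw [hZ _ hf0]
      obtain ⟨m, hm⟩ := poly_bound (D p) (CellR p) rfl (hcube p) ⟨x₀.1, hx₀⟩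
        (Lf js) (Lg is) hA hAB
      refine ⟨m, fun x hx => ?_⟩
      have hxS : x ∈ S := hx
      rw [his x hxS, hjs x hxS]
      exact hm x.1 hx
    · exact ⟨0, fun x hx => absurd ⟨x, hx⟩ hne⟩
  choose mfun hmfun using key
  refine ⟨Finset.univ.sup mfun, fun x => ?_⟩
  have h1 := hmfun (pat x) x (hmemcell x)
  have h2 : ((mfun (pat x) : ℕ) : ℝ) ≤ ((Finset.univ.sup mfun : ℕ) : ℝ) :=
    Nat.cast_le.2 (Finset.le_sup (Finset.mem_univ _))
  have h3 : 0 ≤ f x := (hfb x).1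
  nlinarith


def qeval (p : ℚ × (Fin n → ℚ)) (x : Cube n) : ℝ := (p.1 : ℝ) + ∑ i, (p.2 i : ℝ) * x.1 i

lemma pwlq_of_finset (f : Cube n → ℝ) (hc : Continuous f) (hb : ∀ x, 0 ≤ f x ∧ f x ≤ 1)
    (s : Finset (ℚ × (Fin n → ℚ))) (hs : ∀ x, ∃ p ∈ s, f x = qeval p x) : IsPWLQ f := by
  refine ⟨hc, hb, s.card, fun j => ((s.equivFin.symm j).1).1,
    fun j => ((s.equivFin.symm j).1).2, fun x => ?_⟩
  obtain ⟨p, hp, he⟩ := hs x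
  refine ⟨s.equivFin ⟨p, hp⟩, ?_⟩
  have hval : s.equivFin.symm (s.equivFin ⟨p, hp⟩) = ⟨p, hp⟩ := Equiv.symm_apply_apply _ _
  simp only [hval]
  exact he

lemma finset_of_pwlq (f : Cube n → ℝ) (hf : IsPWLQ f) :
    ∃ s : Finset (ℚ × (Fin n → ℚ)), ∀ x, ∃ p ∈ s, f x = qeval p x := by
  obtain ⟨-, -, k, c, a, hsel⟩ := hf
  refine ⟨Finset.univ.image (fun j => (c j, a j)), fun x => ?_⟩
  obtain ⟨j, hj⟩ := hsel x
  exact ⟨(c j, a j), Finset.mem_image.2 ⟨j, Finset.mem_univ _, rfl⟩, hj⟩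

lemma qeval_one (x : Cube n) : qeval ((1 : ℚ), (0 : Fin n → ℚ)) x = 1 := by
  simp [qeval]

lemma qeval_zero (x : Cube n) : qeval ((0 : ℚ), (0 : Fin n → ℚ)) x = 0 := by
  simp [qeval]

lemma qeval_add (p q : ℚ × (Fin n → ℚ)) (x : Cube n) :
    qeval (p.1 + q.1, p.2 + q.2) x = qeval p x + qeval q x := by
  simp only [qeval]
  push_cast
  rw [Finset.sum_congr rfl (fun i _ => by simp only [Pi.add_apply]; push_cast; ring :
    ∀ i ∈ Finset.univ, ((((p.2 + q.2) i : ℚ) : ℝ) * x.1 i)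
      = (p.2 i : ℝ) * x.1 i + (q.2 i : ℝ) * x.1 i)]
  rw [Finset.sum_add_distrib]
  ring

lemma qeval_sub (p q : ℚ × (Fin n → ℚ)) (x : Cube n) :
    qeval (p.1 - q.1, p.2 - q.2) x = qeval p x - qeval q x := by
  simp only [qeval]
  push_cast
  rw [Finset.sum_congr rfl (fun i _ => by simp only [Pi.sub_apply]; push_cast; ring :
    ∀ i ∈ Finset.univ, ((((p.2 - q.2) i : ℚ) : ℝ) * x.1 i)
      = (p.2 i : ℝ) * x.1 i - (q.2 i : ℝ) * x.1 i)]
  rw [Finset.sum_sub_distrib]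
  ring

lemma qeval_smul (m : ℕ) (p : ℚ × (Fin n → ℚ)) (x : Cube n) :
    qeval ((m : ℚ) * p.1, fun i => (m : ℚ) * p.2 i) x = (m : ℝ) * qeval p x := by
  simp only [qeval]
  push_cast
  rw [Finset.sum_congr rfl (fun i _ => by ring :
    ∀ i ∈ Finset.univ, ((m : ℝ) * (p.2 i : ℝ)) * x.1 i = (m : ℝ) * ((p.2 i : ℝ) * x.1 i))]
  rw [← Finset.mul_sum]
  ring

lemma pwlq_zero : IsPWLQ (fun _ : Cube n => (0 : ℝ)) := by
  refine pwlq_of_finset _ continuous_const (fun x => by norm_num)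
    {((0 : ℚ), (0 : Fin n → ℚ))} (fun x => ?_)
  exact ⟨_, Finset.mem_singleton_self _, (qeval_zero x).symm⟩

lemma pwlq_one : IsPWLQ (fun _ : Cube n => (1 : ℝ)) := by
  refine pwlq_of_finset _ continuous_const (fun x => by norm_num)
    {((1 : ℚ), (0 : Fin n → ℚ))} (fun x => ?_)
  exact ⟨_, Finset.mem_singleton_self _, (qeval_one x).symm⟩

lemma pwlq_oplus (h₁ h₂ : Cube n → ℝ) (H₁ : IsPWLQ h₁) (H₂ : IsPWLQ h₂) :
    IsPWLQ (fun x => min (h₁ x + h₂ x) 1) := by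
  obtain ⟨s₁, hs₁⟩ := finset_of_pwlq h₁ H₁
  obtain ⟨s₂, hs₂⟩ := finset_of_pwlq h₂ H₂
  refine pwlq_of_finset _ ((H₁.1.add H₂.1).min continuous_const)
    (fun x => ⟨le_min (add_nonneg (H₁.2.1 x).1 (H₂.2.1 x).1) zero_le_one, min_le_right _ _⟩)
    (((s₁ ×ˢ s₂).image (fun q => (q.1.1 + q.2.1, q.1.2 + q.2.2))) ∪
      {((1 : ℚ), (0 : Fin n → ℚ))}) (fun x => ?_)
  obtain ⟨p₁, hp₁, he₁⟩ := hs₁ x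
  obtain ⟨p₂, hp₂, he₂⟩ := hs₂ x
  rcases le_or_gt (h₁ x + h₂ x) 1 with h | h
  · refine ⟨(p₁.1 + p₂.1, p₁.2 + p₂.2), Finset.mem_union_left _
      (Finset.mem_image.2 ⟨(p₁, p₂), Finset.mem_product.2 ⟨hp₁, hp₂⟩, rfl⟩), ?_⟩
    rw [min_eq_left h, qeval_add, ← he₁, ← he₂]
  · refine ⟨((1 : ℚ), (0 : Fin n → ℚ)), Finset.mem_union_right _ (Finset.mem_singleton_self _), ?_⟩
    rw [min_eq_right (le_of_lt h), qeval_one]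

lemma pwlq_ominus (h₁ h₂ : Cube n → ℝ) (H₁ : IsPWLQ h₁) (H₂ : IsPWLQ h₂) :
    IsPWLQ (fun x => max (h₁ x - h₂ x) 0) := by
  obtain ⟨s₁, hs₁⟩ := finset_of_pwlq h₁ H₁
  obtain ⟨s₂, hs₂⟩ := finset_of_pwlq h₂ H₂
  refine pwlq_of_finset _ ((H₁.1.sub H₂.1).max continuous_const)
    (fun x => ⟨le_max_right _ _, max_le (by linarith [(H₁.2.1 x).2, (H₂.2.1 x).1]) zero_le_one⟩)
    (((s₁ ×ˢ s₂).image (fun q => (q.1.1 - q.2.1, q.1.2 - q.2.2))) ∪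
      {((0 : ℚ), (0 : Fin n → ℚ))}) (fun x => ?_)
  obtain ⟨p₁, hp₁, he₁⟩ := hs₁ x
  obtain ⟨p₂, hp₂, he₂⟩ := hs₂ x
  rcases le_or_gt (h₁ x - h₂ x) 0 with h | h
  · refine ⟨((0 : ℚ), (0 : Fin n → ℚ)), Finset.mem_union_right _ (Finset.mem_singleton_self _), ?_⟩
    rw [max_eq_right h, qeval_zero]
  · refine ⟨(p₁.1 - p₂.1, p₁.2 - p₂.2), Finset.mem_union_left _
      (Finset.mem_image.2 ⟨(p₁, p₂), Finset.mem_product.2 ⟨hp₁, hp₂⟩, rfl⟩), ?_⟩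
    rw [max_eq_left (le_of_lt h), qeval_sub, ← he₁, ← he₂]

lemma pwlq_truncscale (m : ℕ) (h : Cube n → ℝ) (H : IsPWLQ h) :
    IsPWLQ (fun x => min ((m : ℝ) * h x) 1) := by
  obtain ⟨s, hs⟩ := finset_of_pwlq h H
  refine pwlq_of_finset _ ((continuous_const.mul H.1).min continuous_const)
    (fun x => ⟨le_min (mul_nonneg (Nat.cast_nonneg m) (H.2.1 x).1) zero_le_one,
      min_le_right _ _⟩)
    ((s.image (fun p => ((m : ℚ) * p.1, fun i => (m : ℚ) * p.2 i))) ∪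
      {((1 : ℚ), (0 : Fin n → ℚ))}) (fun x => ?_)
  obtain ⟨p, hp, he⟩ := hs x
  rcases le_or_gt ((m : ℝ) * h x) 1 with hle | hlt
  · refine ⟨((m : ℚ) * p.1, fun i => (m : ℚ) * p.2 i), Finset.mem_union_left _
      (Finset.mem_image.2 ⟨p, hp, rfl⟩), ?_⟩
    rw [min_eq_left hle, qeval_smul, ← he]
  · refine ⟨((1 : ℚ), (0 : Fin n → ℚ)), Finset.mem_union_right _ (Finset.mem_singleton_self _), ?_⟩
    rw [min_eq_right (le_of_lt hlt), qeval_one]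

/-- in an ideal, truncated multiples of members are members -/
lemma ideal_trunc_mem (J : Set (Cube n → ℝ)) (hJ : IsIdealQ J) (f : Cube n → ℝ)
    (hfJ : f ∈ J) (m : ℕ) : (fun x => min (((m + 1 : ℕ) : ℝ) * f x) 1) ∈ J := by
  have hfP : IsPWLQ f := hJ.1 f hfJ
  induction m with
  | zero =>
      have : (fun x => min (((0 + 1 : ℕ) : ℝ) * f x) 1) = f := by
        funext x
        rw [show (((0 + 1 : ℕ) : ℝ)) = 1 by norm_num, one_mul]
        exact min_eq_left (hfP.2.1 x).2
      rw [this]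
      exact hfJ
  | succ m ih =>
      have hmem := hJ.2.2.2 _ ih f hfJ
      have : (fun x => min ((fun x => min (((m + 1 : ℕ) : ℝ) * f x) 1) x + f x) 1)
          = (fun x => min (((m + 1 + 1 : ℕ) : ℝ) * f x) 1) := by
        funext x
        simp only []
        have hfx0 := (hfP.2.1 x).1
        rcases le_or_gt (((m + 1 : ℕ) : ℝ) * f x) 1 with h | h
        · rw [min_eq_left h]
          congr 1
          push_cast
          ring
        · rw [min_eq_right (le_of_lt h)]
          have h2 : (1:ℝ) ≤ 1 + f x := by linarith
          rw [min_eq_right h2]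
          have h3 : (1:ℝ) ≤ ((m + 1 + 1 : ℕ) : ℝ) * f x := by
            push_cast at h ⊢
            nlinarith
          rw [min_eq_right h3]
      rw [this] at hmem
      exact hmem

/-- characterization of the principal ideal -/
lemma memGen_iff (f g : Cube n → ℝ) (hf : IsPWLQ f) :
    memGen f g ↔ (IsPWLQ g ∧ ∃ m : ℕ, ∀ x, g x ≤ (m : ℝ) * f x) := by
  constructor
  · intro hmem
    set J : Set (Cube n → ℝ) := {h | IsPWLQ h ∧ ∃ m : ℕ, ∀ x, h x ≤ (m : ℝ) * f x} with hJdef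
    have hJ : IsIdealQ J := by
      refine ⟨fun h hh => hh.1, ⟨pwlq_zero, 0, fun x => by norm_num⟩, ?_, ?_⟩
      · rintro h ⟨hP, m, hm⟩ g' hg'P hle
        exact ⟨hg'P, m, fun x => le_trans (hle x) (hm x)⟩
      · rintro h₁ ⟨hP₁, m₁, hm₁⟩ h₂ ⟨hP₂, m₂, hm₂⟩
        refine ⟨pwlq_oplus h₁ h₂ hP₁ hP₂, m₁ + m₂, fun x => ?_⟩
        have := hm₁ x; have := hm₂ x
        push_cast
        calc min (h₁ x + h₂ x) 1 ≤ h₁ x + h₂ x := min_le_left _ _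
        _ ≤ ((m₁ : ℝ) + m₂) * f x := by nlinarith
    have hfJ : f ∈ J := ⟨hf, 1, fun x => by norm_num⟩
    exact hmem J hJ hfJ
  · rintro ⟨hgP, m, hm⟩ J hJ hfJ
    have htr := ideal_trunc_mem J hJ f hfJ m
    refine hJ.2.2.1 _ htr g hgP (fun x => ?_)
    refine le_min ?_ (hgP.2.1 x).2
    have h1 := hm x
    have h2 := (hf.2.1 x).1
    push_cast
    nlinarith

/-- the maximal ideal attached to a point -/
def Mx (x : Cube n) : Set (Cube n → ℝ) := {h | IsPWLQ h ∧ h x = 0}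

lemma Mx_ideal (x : Cube n) : IsIdealQ (Mx x) := by
  refine ⟨fun h hh => hh.1, ⟨pwlq_zero, rfl⟩, ?_, ?_⟩
  · rintro h ⟨hP, h0⟩ g hgP hle
    exact ⟨hgP, le_antisymm (h0 ▸ hle x) (hgP.2.1 x).1⟩
  · rintro h₁ ⟨hP₁, h₁0⟩ h₂ ⟨hP₂, h₂0⟩
    refine ⟨pwlq_oplus h₁ h₂ hP₁ hP₂, ?_⟩
    simp only [h₁0, h₂0]
    norm_num

lemma Mx_max (x : Cube n) : IsMaxIdealQ (Mx x) := by
  refine ⟨Mx_ideal x, ⟨(fun _ => (1:ℝ)), pwlq_one, fun hc => one_ne_zero hc.2⟩, ?_⟩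
  rintro J hJ ⟨w, hwP, hwJ⟩ hMJ
  apply Set.Subset.antisymm _ hMJ
  intro h hhJ
  have hhP : IsPWLQ h := hJ.1 h hhJ
  refine ⟨hhP, ?_⟩
  by_contra hc
  have hcpos : 0 < h x := lt_of_le_of_ne (hhP.2.1 x).1 (Ne.symm hc)
  -- every PWLQ function belongs to J, contradicting properness
  apply hwJ
  obtain ⟨m, hm⟩ := exists_nat_ge (1 / h x)
  have hm1 : 1 ≤ ((m + 1 : ℕ) : ℝ) * h x := by
    rw [div_le_iff₀ hcpos] at hm
    push_cast
    nlinarith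
  set G : Cube n → ℝ := fun y => min (((m + 1 : ℕ) : ℝ) * h y) 1 with hG
  have hGJ : G ∈ J := ideal_trunc_mem J hJ h hhJ m
  have hGP : IsPWLQ G := pwlq_truncscale (m + 1) h hhP
  set t : Cube n → ℝ := fun y => max (w y - G y) 0 with ht
  have htP : IsPWLQ t := pwlq_ominus w G hwP hGP
  have htM : t ∈ Mx x := by
    refine ⟨htP, ?_⟩
    have hGx : G x = 1 := by
      rw [hG]
      exact min_eq_right hm1
    rw [ht]
    simp only [hGx]
    have := (hwP.2.1 x).2
    exact max_eq_right (by linarith)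
  have htJ : t ∈ J := hMJ htM
  have huJ : (fun y => min (t y + G y) 1) ∈ J := hJ.2.2.2 t htJ G hGJ
  refine hJ.2.2.1 _ huJ w hwP (fun y => ?_)
  refine le_min ?_ (hwP.2.1 y).2
  have h1 : w y - G y ≤ t y := le_max_left _ _
  linarith


end DMVAux

open DMVAux in
/-- Every principal ideal `J = (f]` of `DMV_n` is an intersection of
maximal ideals; equivalently, `J = I(V(J))`. -/
theorem principal_ideal_intersection_of_maximals (n : ℕ) (f : Cube n → ℝ)
    (hf : IsPWLQ f) :
    -- `(f]` is an intersection of maximal ideals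
    (∃ S : Set (Set (Cube n → ℝ)), (∀ M ∈ S, IsMaxIdealQ M) ∧
      ∀ g : Cube n → ℝ, memGen f g ↔ (IsPWLQ g ∧ ∀ M ∈ S, g ∈ M)) ∧
    -- equivalently, `(f] = I(V((f]))`
    (∀ g : Cube n → ℝ, IsPWLQ g →
      (memGen f g ↔ ∀ x : Cube n, (∀ h : Cube n → ℝ, memGen f h → h x = 0) → g x = 0)) := by
  constructor
  · refine ⟨{M | ∃ x : Cube n, f x = 0 ∧ M = Mx x}, ?_, ?_⟩
    · rintro M ⟨x, hx0, rfl⟩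
      exact Mx_max x
    · intro g
      constructor
      · intro hmem
        obtain ⟨hgP, m, hm⟩ := (memGen_iff f g hf).1 hmem
        refine ⟨hgP, ?_⟩
        rintro M ⟨x, hx0, rfl⟩
        refine ⟨hgP, le_antisymm ?_ (hgP.2.1 x).1⟩
        have := hm x
        rw [hx0] at this
        linarith
      · rintro ⟨hgP, hall⟩
        have hZ : ∀ x, f x = 0 → g x = 0 := by
          intro x hx0
          exact (hall (Mx x) ⟨x, hx0, rfl⟩).2
        exact (memGen_iff f g hf).2 ⟨hgP, keyL f g hf hgP hZ⟩
  · intro g hgP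
    constructor
    · intro hmem x hx
      exact hx g hmem
    · intro H
      have hZ : ∀ x, f x = 0 → g x = 0 := by
        intro x hx0
        apply H x
        intro h hh
        have hfM : f ∈ Mx x := ⟨hf, hx0⟩
        exact (hh (Mx x) (Mx_ideal x) hfM).2
      exact (memGen_iff f g hf).2 ⟨hgP, keyL f g hf hgP hZ⟩
end
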